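/- arXiv:2311.11247 — 4 statements merged into one kernel-verified Lean document; each statement's English description precedes it below -/
import Mathlib

section
/- For every T > 0, the operator 𝓕 has at least one fixed point in C_{T+}; that is, there exists a nonnegative W ∈ C([0,T]; Y) with W(t,x) = H(t,x) + ∫_Ω ∫_0^t A(τ,x,σ) N(σ)(1 − e^{−W(t−τ,σ)}) dτ dσ for all t ∈ [0,T] and a.e. x ∈ Ω. -/
open MeasureTheory Set Filter

private lemma meas_integral_param {α γ : Type*} [MeasurableSpace α] [MeasurableSpace γ]
    (ν : Measure γ) [SFinite ν] {g : α → γ → ℝ}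
    (hg : Measurable fun q : α × γ => g q.1 q.2) :
    Measurable fun x => ∫ τ, g x τ ∂ν :=
  hg.stronglyMeasurable.integral_prod_right'.measurable

private lemma abs_int_le {α : Type*} [MeasurableSpace α] (μ : Measure α) (f : α → ℝ) :
    |∫ x, f x ∂μ| ≤ ∫ x, |f x| ∂μ := by
  simpa [Real.norm_eq_abs] using norm_integral_le_integral_norm (μ := μ) f

private lemma meas_integral_param2 {α β γ : Type*} [MeasurableSpace α] [MeasurableSpace β]
    [MeasurableSpace γ] (μ : Measure β) (ν : Measure γ) [SFinite μ] [SFinite ν]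
    {g : α → β → γ → ℝ}
    (hg : Measurable fun q : (α × β) × γ => g q.1.1 q.1.2 q.2) :
    Measurable fun x => ∫ σ, (∫ τ, g x σ τ ∂ν) ∂μ :=
  meas_integral_param μ (meas_integral_param (α := α × β) ν hg)

set_option maxHeartbeats 2000000 in
/-- for every `T > 0`, the renewal operator `𝓕` has at least one fixed point
in `C_{T+}`: there is a nonnegative `W ∈ C([0,T];Y)` with
`W(t,x) = H(t,x) + ∫_Ω ∫_0^t A(τ,x,σ) N(σ)(1 - e^{-W(t-τ,σ)}) dτ dσ`. -/
theorem FOp_exists_fixed_point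
    {n : ℕ} (Ω : Set (Fin n → ℝ)) (hΩ : MeasurableSet Ω)
    (N : (Fin n → ℝ) → ℝ) (hNmeas : Measurable N) (hNnn : ∀ x, 0 ≤ N x)
    (hNint : IntegrableOn N Ω)
    (hNpos : ∀ᵐ x ∂(volume.restrict Ω), 0 < N x)
    (A : ℝ → (Fin n → ℝ) → (Fin n → ℝ) → ℝ)
    (hAmeas : Measurable (fun p : ℝ × (Fin n → ℝ) × (Fin n → ℝ) => A p.1 p.2.1 p.2.2))
    (hAnn : ∀ τ x σ, 0 ≤ A τ x σ)
    (hAzero : ∀ τ < (0:ℝ), ∀ x σ, A τ x σ = 0)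
    -- Assumption 1(1)
    (α : ℝ) (hα : 1 < α)
    (a : (Fin n → ℝ) → ℝ) (b : ℝ → ℝ) (c : (Fin n → ℝ) → ℝ)
    (hameas : Measurable a) (hbmeas : Measurable b) (hcmeas : Measurable c)
    (hann : ∀ x, 0 ≤ a x) (hbnn : ∀ τ, 0 ≤ b τ) (hcnn : ∀ σ, 0 ≤ c σ)
    (haN : IntegrableOn (fun x => a x * N x) Ω)
    (hbint : IntegrableOn b (Ici 0))
    (hcN : IntegrableOn (fun x => c x * N x) Ω)
    (hc2N : IntegrableOn (fun x => c x ^ 2 * N x) Ω)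
    (hAbound : ∀ τ ∈ Ici (0:ℝ), ∀ x ∈ Ω, ∀ σ ∈ Ω,
      a x * b τ * c σ ≤ A τ x σ ∧ A τ x σ ≤ α * (a x * b τ * c σ))
    (H : ℝ → (Fin n → ℝ) → ℝ) (Q : ℝ → ℝ)
    (hHmeas : Measurable (Function.uncurry H))
    (hQcont : ContinuousOn Q (Ici 0)) (hQbdd : ∃ M, ∀ t ∈ Ici (0:ℝ), Q t ≤ M)
    (hQnn : ∀ t, 0 ≤ Q t)
    (hHbound : ∀ t ∈ Ici (0:ℝ), ∀ x ∈ Ω, a x * Q t ≤ H t x ∧ H t x ≤ α * (a x * Q t))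
    -- Assumption 1(2)
    (hAshift_t : Tendsto (fun h : ℝ =>
        ∫ x in Ω, ∫ σ in Ω, ∫ τ in Ici (0:ℝ), N x * |A (τ + h) x σ - A τ x σ| * N σ)
      (nhds 0) (nhds 0))
    (hAshift_x : Tendsto (fun h : Fin n → ℝ =>
        ∫ x in Ω, ∫ σ in Ω, ∫ τ in Ici (0:ℝ),
          |indicator Ω (fun y => N y * A τ y σ) (x + h) - N x * A τ x σ| * N σ)
      (nhds 0) (nhds 0))
    (hHcont : ∀ t ∈ Ici (0:ℝ),
      Tendsto (fun s => ∫ x in Ω, |H s x - H t x| * N x) (nhdsWithin t (Ici 0)) (nhds 0))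
    (T : ℝ) (hT : 0 < T) :
    ∃ W : ℝ → (Fin n → ℝ) → ℝ,
      Measurable (Function.uncurry W) ∧
      (∀ t ∈ Icc (0:ℝ) T, IntegrableOn (fun x => W t x * N x) Ω) ∧
      (∀ t ∈ Icc (0:ℝ) T, ∀ᵐ x ∂(volume.restrict Ω), 0 ≤ W t x) ∧
      (∀ t ∈ Icc (0:ℝ) T, Tendsto (fun s => ∫ x in Ω, |W s x - W t x| * N x)
        (nhdsWithin t (Icc 0 T)) (nhds 0)) ∧
      (∀ t ∈ Icc (0:ℝ) T, ∀ᵐ x ∂(volume.restrict Ω),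
        W t x = H t x +
          ∫ σ in Ω, ∫ τ in Icc (0:ℝ) t, A τ x σ * N σ * (1 - Real.exp (-(W (t - τ) σ)))) := by
  classical
  obtain ⟨M, hM⟩ := hQbdd
  have hM0 : (0:ℝ) ≤ M := le_trans (hQnn 0) (hM 0 (mem_Ici.2 le_rfl))
  have hα0 : (0:ℝ) < α := lt_trans one_pos hα
  -- the nonlinearity
  set F : ℝ → ℝ := fun u => 1 - Real.exp (-u) with hFdef
  have hFle1 : ∀ u, F u ≤ 1 := fun u => by
    simp only [hFdef]; nlinarith [Real.exp_pos (-u)]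
  have hFnn : ∀ u, 0 ≤ u → 0 ≤ F u := fun u hu => by
    simp only [hFdef, sub_nonneg]
    exact Real.exp_le_one_iff.mpr (by linarith)
  have hFmono : Monotone F := fun u v huv => by
    simp only [hFdef]
    have := Real.exp_le_exp.mpr (neg_le_neg huv)
    linarith
  have hFcont : Continuous F := continuous_const.sub (Real.continuous_exp.comp continuous_neg)
  have hFabs : ∀ u, 0 ≤ u → |F u| ≤ 1 := fun u hu => abs_le.mpr ⟨by linarith [hFnn u hu], hFle1 u⟩
  -- extended b
  set b' : ℝ → ℝ := indicator (Ici (0:ℝ)) b with hb'def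
  have hb'meas : Measurable b' := hbmeas.indicator measurableSet_Ici
  have hb'nn : ∀ τ, 0 ≤ b' τ := fun τ => indicator_nonneg (fun τ _ => hbnn τ) τ
  have hb'int : Integrable b' := (integrable_indicator_iff measurableSet_Ici).2 hbint
  set L := ∫ τ in Ici (0:ℝ), b τ with hLdef
  have hL0 : 0 ≤ L := setIntegral_nonneg measurableSet_Ici fun τ _ => hbnn τ
  have hb'L : ∫ τ, b' τ = L := integral_indicator measurableSet_Ici
  have hbIcc : ∀ t : ℝ, IntegrableOn b (Icc 0 t) := fun t => hbint.mono_set Icc_subset_Ici_self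
  have hbIccle : ∀ t : ℝ, ∫ τ in Icc 0 t, b τ ≤ L := fun t =>
    setIntegral_mono_set hbint (Eventually.of_forall fun τ => hbnn τ)
      (HasSubset.Subset.eventuallyLE Icc_subset_Ici_self)
  have hb'sub : ∀ s : ℝ, Integrable (fun u => b' (s - u)) := fun s => hb'int.comp_sub_left s
  have hb'add : ∀ h : ℝ, Integrable (fun u => b' (u + h)) := fun h => hb'int.comp_add_right h
  have hb'suble : ∀ (s : ℝ) (S : Set ℝ), ∫ u in S, b' (s - u) ≤ L := fun s S => by
    calc ∫ u in S, b' (s - u) ≤ ∫ u, b' (s - u) :=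
          setIntegral_le_integral (hb'sub s) (Eventually.of_forall fun u => hb'nn _)
      _ = ∫ u, b' u := integral_sub_left_eq_self b' volume s
      _ = L := hb'L
  have hb'addle : ∀ (h : ℝ) (S : Set ℝ), ∫ u in S, b' (u + h) ≤ L := fun h S => by
    calc ∫ u in S, b' (u + h) ≤ ∫ u, b' (u + h) :=
          setIntegral_le_integral (hb'add h) (Eventually.of_forall fun u => hb'nn _)
      _ = ∫ u, b' u := integral_add_right_eq_self b' h
      _ = L := hb'L
  -- kernel upper bound valid for all times
  have hA_le : ∀ (τ : ℝ), ∀ x ∈ Ω, ∀ σ ∈ Ω, A τ x σ ≤ α * a x * b' τ * c σ := by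
    intro τ x hx σ hσ
    rcases le_or_gt 0 τ with h | h
    · have h2 := (hAbound τ h x hx σ hσ).2
      rw [show b' τ = b τ from indicator_of_mem (mem_Ici.2 h) b]
      calc A τ x σ ≤ α * (a x * b τ * c σ) := h2
        _ = α * a x * b τ * c σ := by ring
    · rw [hAzero τ h x σ, show b' τ = 0 from indicator_of_notMem (by simpa using h) b]
      simp
  set C0 := ∫ σ in Ω, c σ * N σ with hC0def
  have hC00 : 0 ≤ C0 := setIntegral_nonneg hΩ fun σ _ => mul_nonneg (hcnn σ) (hNnn σ)
  set Ca := ∫ x in Ω, a x * N x with hCadef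
  have hCa0 : 0 ≤ Ca := setIntegral_nonneg hΩ fun x _ => mul_nonneg (hann x) (hNnn x)
  set CB := α * (M + L * C0) with hCBdef
  have hCB0 : 0 ≤ CB := mul_nonneg hα0.le (by positivity)
  -- the integral operator
  set Kin : (ℝ → (Fin n → ℝ) → ℝ) → ℝ → (Fin n → ℝ) → (Fin n → ℝ) → ℝ :=
    fun V t x σ => ∫ τ in Icc 0 t, A τ x σ * N σ * F (V (t - τ) σ) with hKindef
  set KK : (ℝ → (Fin n → ℝ) → ℝ) → ℝ → (Fin n → ℝ) → ℝ :=
    fun V t x => ∫ σ in Ω, Kin V t x σ with hKKdef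
  -- measurability of the τ-integrand
  have hτmeas : ∀ (V : ℝ → (Fin n → ℝ) → ℝ), Measurable (Function.uncurry V) →
      ∀ (t : ℝ) (x σ : Fin n → ℝ),
      Measurable (fun τ : ℝ => A τ x σ * N σ * F (V (t - τ) σ)) := by
    intro V hV t x σ
    have h0 : Measurable (fun τ : ℝ => (τ, (x, σ))) := measurable_id.prodMk measurable_const
    have h1 : Measurable (fun τ : ℝ => A τ x σ) := hAmeas.comp h0
    have h0' : Measurable (fun τ : ℝ => (t - τ, σ)) :=
      (measurable_const.sub measurable_id).prodMk measurable_const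
    have h2 : Measurable (fun τ : ℝ => V (t - τ) σ) := hV.comp h0'
    exact (h1.mul measurable_const).mul (hFcont.measurable.comp h2)
  -- integrability of the τ-integrand
  have hKin_int : ∀ (V : ℝ → (Fin n → ℝ) → ℝ), Measurable (Function.uncurry V) →
      (∀ s σ, 0 ≤ V s σ) → ∀ (t : ℝ), ∀ x ∈ Ω, ∀ σ ∈ Ω,
      IntegrableOn (fun τ : ℝ => A τ x σ * N σ * F (V (t - τ) σ)) (Icc 0 t) := by
    intro V hV hVnn t x hx σ hσ
    refine Integrable.mono ((hbIcc t).const_mul (α * a x * c σ * N σ))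
      ((hτmeas V hV t x σ).aestronglyMeasurable) ?_
    refine (ae_restrict_iff' measurableSet_Icc).2 (Eventually.of_forall fun τ hτ => ?_)
    have hF1 : |F (V (t - τ) σ)| ≤ 1 := hFabs _ (hVnn _ _)
    have hANnn : 0 ≤ A τ x σ * N σ := mul_nonneg (hAnn _ _ _) (hNnn σ)
    have hAb : A τ x σ ≤ α * (a x * b τ * c σ) := (hAbound τ hτ.1 x hx σ hσ).2
    have e1 : ‖A τ x σ * N σ * F (V (t - τ) σ)‖ = A τ x σ * N σ * |F (V (t - τ) σ)| := by
      rw [Real.norm_eq_abs, abs_mul, abs_of_nonneg hANnn]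
    rw [e1, Real.norm_eq_abs]
    calc A τ x σ * N σ * |F (V (t - τ) σ)| ≤ A τ x σ * N σ * 1 := by
          exact mul_le_mul_of_nonneg_left hF1 hANnn
      _ = A τ x σ * N σ := by ring
      _ ≤ (α * (a x * b τ * c σ)) * N σ := mul_le_mul_of_nonneg_right hAb (hNnn σ)
      _ = α * a x * c σ * N σ * b τ := by ring
      _ ≤ |α * a x * c σ * N σ * b τ| := le_abs_self _
  -- measurability in σ
  have hKin_meas : ∀ (V : ℝ → (Fin n → ℝ) → ℝ), Measurable (Function.uncurry V) →
      ∀ (t : ℝ) (x : Fin n → ℝ), Measurable (fun σ => Kin V t x σ) := by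
    intro V hV t x
    refine meas_integral_param (volume.restrict (Icc 0 t))
      (g := fun σ τ => A τ x σ * N σ * F (V (t - τ) σ)) ?_
    have h0 : Measurable (fun q : (Fin n → ℝ) × ℝ => (q.2, (x, q.1))) :=
      measurable_snd.prodMk (measurable_const.prodMk measurable_fst)
    have h1 : Measurable (fun q : (Fin n → ℝ) × ℝ => A q.2 x q.1) := hAmeas.comp h0
    have h0' : Measurable (fun q : (Fin n → ℝ) × ℝ => (t - q.2, q.1)) :=
      (measurable_const.sub measurable_snd).prodMk measurable_fst
    have h2 : Measurable (fun q : (Fin n → ℝ) × ℝ => V (t - q.2) q.1) := hV.comp h0'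
    exact (h1.mul (hNmeas.comp measurable_fst)).mul (hFcont.measurable.comp h2)
  have hKin_nn : ∀ (V : ℝ → (Fin n → ℝ) → ℝ), (∀ s σ, 0 ≤ V s σ) →
      ∀ (t : ℝ) (x σ : Fin n → ℝ), 0 ≤ Kin V t x σ := by
    intro V hVnn t x σ
    exact setIntegral_nonneg measurableSet_Icc fun τ _ =>
      mul_nonneg (mul_nonneg (hAnn _ _ _) (hNnn σ)) (hFnn _ (hVnn _ _))
  have hKin_le : ∀ (V : ℝ → (Fin n → ℝ) → ℝ), Measurable (Function.uncurry V) →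
      (∀ s σ, 0 ≤ V s σ) → ∀ (t : ℝ), ∀ x ∈ Ω, ∀ σ ∈ Ω,
      Kin V t x σ ≤ (α * a x * c σ * N σ) * L := by
    intro V hV hVnn t x hx σ hσ
    calc Kin V t x σ ≤ ∫ τ in Icc 0 t, (α * a x * c σ * N σ) * b τ := by
          refine setIntegral_mono_on (hKin_int V hV hVnn t x hx σ hσ)
            ((hbIcc t).const_mul _) measurableSet_Icc fun τ hτ => ?_
          have hF1 : F (V (t - τ) σ) ≤ 1 := hFle1 _
          have hANnn : 0 ≤ A τ x σ * N σ := mul_nonneg (hAnn _ _ _) (hNnn σ)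
          have hAb : A τ x σ ≤ α * (a x * b τ * c σ) := (hAbound τ hτ.1 x hx σ hσ).2
          calc A τ x σ * N σ * F (V (t - τ) σ) ≤ A τ x σ * N σ * 1 :=
                mul_le_mul_of_nonneg_left hF1 hANnn
            _ = A τ x σ * N σ := by ring
            _ ≤ (α * (a x * b τ * c σ)) * N σ := mul_le_mul_of_nonneg_right hAb (hNnn σ)
            _ = (α * a x * c σ * N σ) * b τ := by ring
      _ = (α * a x * c σ * N σ) * ∫ τ in Icc 0 t, b τ := integral_const_mul _ _
      _ ≤ (α * a x * c σ * N σ) * L := by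
          exact mul_le_mul_of_nonneg_left (hbIccle t) (mul_nonneg (mul_nonneg (mul_nonneg hα0.le (hann x)) (hcnn σ)) (hNnn σ))
  have hKK_int : ∀ (V : ℝ → (Fin n → ℝ) → ℝ), Measurable (Function.uncurry V) →
      (∀ s σ, 0 ≤ V s σ) → ∀ (t : ℝ), ∀ x ∈ Ω,
      IntegrableOn (fun σ => Kin V t x σ) Ω := by
    intro V hV hVnn t x hx
    refine Integrable.mono (hcN.const_mul (α * a x * L))
      ((hKin_meas V hV t x).aestronglyMeasurable) ?_
    refine (ae_restrict_iff' hΩ).2 (Eventually.of_forall fun σ hσ => ?_)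
    rw [Real.norm_eq_abs, Real.norm_eq_abs, abs_of_nonneg (hKin_nn V hVnn t x σ)]
    calc Kin V t x σ ≤ (α * a x * c σ * N σ) * L := hKin_le V hV hVnn t x hx σ hσ
      _ = α * a x * L * (c σ * N σ) := by ring
      _ ≤ |α * a x * L * (c σ * N σ)| := le_abs_self _
  have hKK_nn : ∀ (V : ℝ → (Fin n → ℝ) → ℝ), (∀ s σ, 0 ≤ V s σ) →
      ∀ (t : ℝ) (x : Fin n → ℝ), 0 ≤ KK V t x := fun V hVnn t x =>
    setIntegral_nonneg hΩ fun σ _ => hKin_nn V hVnn t x σ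
  have hKK_le : ∀ (V : ℝ → (Fin n → ℝ) → ℝ), Measurable (Function.uncurry V) →
      (∀ s σ, 0 ≤ V s σ) → ∀ (t : ℝ), ∀ x ∈ Ω, KK V t x ≤ α * a x * L * C0 := by
    intro V hV hVnn t x hx
    calc KK V t x ≤ ∫ σ in Ω, (α * a x * L) * (c σ * N σ) := by
          refine setIntegral_mono_on (hKK_int V hV hVnn t x hx)
            (hcN.const_mul _) hΩ fun σ hσ => ?_
          calc Kin V t x σ ≤ (α * a x * c σ * N σ) * L := hKin_le V hV hVnn t x hx σ hσ
            _ = (α * a x * L) * (c σ * N σ) := by ring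
      _ = (α * a x * L) * C0 := integral_const_mul _ _
      _ = α * a x * L * C0 := by ring
  -- the (truncated) renewal operator
  set Op : (ℝ → (Fin n → ℝ) → ℝ) → ℝ → (Fin n → ℝ) → ℝ :=
    fun V t x => if 0 ≤ t ∧ x ∈ Ω then H t x + KK V t x else 0 with hOpdef
  have hOp_meas : ∀ (V : ℝ → (Fin n → ℝ) → ℝ), Measurable (Function.uncurry V) →
      Measurable (Function.uncurry (Op V)) := by
    intro V hV
    have hS : MeasurableSet {p : ℝ × (Fin n → ℝ) | 0 ≤ p.1 ∧ p.2 ∈ Ω} :=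
      (measurableSet_Ici.preimage measurable_fst).inter (hΩ.preimage measurable_snd)
    have hKKrw : ∀ (t : ℝ) (x : Fin n → ℝ), KK V t x =
        ∫ σ in Ω, ∫ τ : ℝ, (Icc (0:ℝ) t).indicator
          (fun τ => A τ x σ * N σ * F (V (t - τ) σ)) τ := by
      intro t x
      simp only [hKKdef, hKindef]
      refine setIntegral_congr_fun hΩ fun σ _ => ?_
      rw [integral_indicator measurableSet_Icc]
    have hKKm : Measurable (fun p : ℝ × (Fin n → ℝ) => KK V p.1 p.2) := by
      have : (fun p : ℝ × (Fin n → ℝ) => KK V p.1 p.2) = fun p =>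
          ∫ σ in Ω, ∫ τ : ℝ, (Icc (0:ℝ) p.1).indicator
            (fun τ => A τ p.2 σ * N σ * F (V (p.1 - τ) σ)) τ := by
        funext p; exact hKKrw p.1 p.2
      rw [this]
      refine meas_integral_param2 (volume.restrict Ω) volume
        (g := fun (p : ℝ × (Fin n → ℝ)) (σ : Fin n → ℝ) (τ : ℝ) =>
          (Icc (0:ℝ) p.1).indicator (fun τ => A τ p.2 σ * N σ * F (V (p.1 - τ) σ)) τ) ?_
      have hcond : MeasurableSet {q : ((ℝ × (Fin n → ℝ)) × (Fin n → ℝ)) × ℝ |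
          q.2 ∈ Icc 0 q.1.1.1} := by
        have : {q : ((ℝ × (Fin n → ℝ)) × (Fin n → ℝ)) × ℝ | q.2 ∈ Icc 0 q.1.1.1}
            = {q | 0 ≤ q.2} ∩ {q | q.2 ≤ q.1.1.1} := by
          ext q; simp [mem_Icc]
        rw [this]
        exact (measurableSet_le measurable_const measurable_snd).inter
          (measurableSet_le measurable_snd (measurable_fst.comp
            (measurable_fst.comp measurable_fst)))
      have hbranch : Measurable (fun q : ((ℝ × (Fin n → ℝ)) × (Fin n → ℝ)) × ℝ =>
          A q.2 q.1.1.2 q.1.2 * N q.1.2 * F (V (q.1.1.1 - q.2) q.1.2)) := by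
        have h0 : Measurable (fun q : ((ℝ × (Fin n → ℝ)) × (Fin n → ℝ)) × ℝ =>
            (q.2, (q.1.1.2, q.1.2))) :=
          measurable_snd.prodMk ((measurable_snd.comp (measurable_fst.comp
            measurable_fst)).prodMk (measurable_snd.comp measurable_fst))
        have h1 := hAmeas.comp h0
        have h0' : Measurable (fun q : ((ℝ × (Fin n → ℝ)) × (Fin n → ℝ)) × ℝ =>
            (q.1.1.1 - q.2, q.1.2)) :=
          ((measurable_fst.comp (measurable_fst.comp measurable_fst)).sub
            measurable_snd).prodMk (measurable_snd.comp measurable_fst)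
        have h2 := hV.comp h0'
        exact (h1.mul (hNmeas.comp (measurable_snd.comp measurable_fst))).mul
          (hFcont.measurable.comp h2)
      simpa only [indicator_apply] using hbranch.ite hcond measurable_const
    have : Function.uncurry (Op V) = fun p : ℝ × (Fin n → ℝ) =>
        if p ∈ {p : ℝ × (Fin n → ℝ) | 0 ≤ p.1 ∧ p.2 ∈ Ω}
        then H p.1 p.2 + KK V p.1 p.2 else 0 := rfl
    rw [this]
    exact Measurable.ite hS (hHmeas.add hKKm) measurable_const
  have hHnn : ∀ (t : ℝ), 0 ≤ t → ∀ x ∈ Ω, 0 ≤ H t x := fun t ht x hx =>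
    le_trans (mul_nonneg (hann x) (hQnn t)) (hHbound t ht x hx).1
  have hHle : ∀ (t : ℝ), 0 ≤ t → ∀ x ∈ Ω, H t x ≤ α * M * a x := by
    intro t ht x hx
    calc H t x ≤ α * (a x * Q t) := (hHbound t ht x hx).2
      _ ≤ α * (a x * M) := by
          exact mul_le_mul_of_nonneg_left (mul_le_mul_of_nonneg_left (hM t ht) (hann x)) hα0.le
      _ = α * M * a x := by ring
  have hOp_nn : ∀ (V : ℝ → (Fin n → ℝ) → ℝ), (∀ s σ, 0 ≤ V s σ) →
      ∀ (t : ℝ) (x : Fin n → ℝ), 0 ≤ Op V t x := by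
    intro V hVnn t x
    simp only [hOpdef]
    split_ifs with hc
    · exact add_nonneg (hHnn t hc.1 x hc.2) (hKK_nn V hVnn t x)
    · exact le_rfl
  have hOp_le : ∀ (V : ℝ → (Fin n → ℝ) → ℝ), Measurable (Function.uncurry V) →
      (∀ s σ, 0 ≤ V s σ) → ∀ (t : ℝ) (x : Fin n → ℝ), Op V t x ≤ CB * a x := by
    intro V hV hVnn t x
    simp only [hOpdef]
    split_ifs with hc
    · have h1 := hHle t hc.1 x hc.2
      have h2 := hKK_le V hV hVnn t x hc.2
      have : α * M * a x + α * a x * L * C0 = CB * a x := by rw [hCBdef]; ring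
      linarith
    · exact mul_nonneg hCB0 (hann x)
  have hOp_mono : ∀ (V V' : ℝ → (Fin n → ℝ) → ℝ), Measurable (Function.uncurry V) →
      (∀ s σ, 0 ≤ V s σ) → Measurable (Function.uncurry V') → (∀ s σ, 0 ≤ V' s σ) →
      (∀ s σ, V s σ ≤ V' s σ) → ∀ (t : ℝ) (x : Fin n → ℝ), Op V t x ≤ Op V' t x := by
    intro V V' hV hVnn hV' hV'nn hle t x
    simp only [hOpdef]
    split_ifs with hc
    · refine add_le_add (le_refl _) ?_
      refine setIntegral_mono_on (hKK_int V hV hVnn t x hc.2)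
        (hKK_int V' hV' hV'nn t x hc.2) hΩ fun σ hσ => ?_
      refine setIntegral_mono_on (hKin_int V hV hVnn t x hc.2 σ hσ)
        (hKin_int V' hV' hV'nn t x hc.2 σ hσ) measurableSet_Icc fun τ hτ => ?_
      exact mul_le_mul_of_nonneg_left (hFmono (hle _ _))
        (mul_nonneg (hAnn _ _ _) (hNnn σ))
    · exact le_rfl
  -- the iterates
  set Wseq : ℕ → ℝ → (Fin n → ℝ) → ℝ := fun k => Op^[k] (fun _ _ => 0) with hWseqdef
  have hWseq_succ : ∀ k, Wseq (k+1) = Op (Wseq k) := fun k =>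
    Function.iterate_succ_apply' Op k _
  have hWmeas : ∀ k, Measurable (Function.uncurry (Wseq k)) := by
    intro k; induction k with
    | zero => exact measurable_const
    | succ k ih => rw [hWseq_succ]; exact hOp_meas _ ih
  have hWnn : ∀ k (t : ℝ) (x : Fin n → ℝ), 0 ≤ Wseq k t x := by
    intro k; induction k with
    | zero => intro t x; exact le_rfl
    | succ k ih => intro t x; rw [hWseq_succ]; exact hOp_nn _ ih t x
  have hWle : ∀ k (t : ℝ) (x : Fin n → ℝ), Wseq k t x ≤ CB * a x := by
    intro k; induction k with
    | zero => intro t x; exact mul_nonneg hCB0 (hann x)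
    | succ k ih => intro t x; rw [hWseq_succ]; exact hOp_le _ (hWmeas k) (hWnn k) t x
  have hWmono : ∀ k (t : ℝ) (x : Fin n → ℝ), Wseq k t x ≤ Wseq (k+1) t x := by
    intro k; induction k with
    | zero => intro t x; rw [hWseq_succ]; exact hOp_nn _ (hWnn 0) t x
    | succ k ih =>
        intro t x
        rw [hWseq_succ, hWseq_succ]
        exact hOp_mono _ _ (hWmeas k) (hWnn k) (hWmeas (k+1)) (hWnn (k+1))
          (fun s σ => by rw [hWseq_succ] at ih ⊢; exact ih s σ) t x
  -- the limit
  set Wl : ℝ → (Fin n → ℝ) → ℝ := fun t x => ⨆ k, Wseq k t x with hWldef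
  have hbdd : ∀ (t : ℝ) (x : Fin n → ℝ), BddAbove (range fun k => Wseq k t x) := by
    intro t x
    exact ⟨CB * a x, by rintro _ ⟨k, rfl⟩; exact hWle k t x⟩
  have hmonoseq : ∀ (t : ℝ) (x : Fin n → ℝ), Monotone fun k => Wseq k t x :=
    fun t x => monotone_nat_of_le_succ fun k => hWmono k t x
  have htd : ∀ (t : ℝ) (x : Fin n → ℝ),
      Tendsto (fun k => Wseq k t x) atTop (nhds (Wl t x)) :=
    fun t x => tendsto_atTop_ciSup (hmonoseq t x) (hbdd t x)
  have hWlmeas : Measurable (Function.uncurry Wl) :=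
    measurable_of_tendsto_metrizable (fun k => hWmeas k)
      (tendsto_pi_nhds.2 fun p => htd p.1 p.2)
  have hWlnn : ∀ (t : ℝ) (x : Fin n → ℝ), 0 ≤ Wl t x := fun t x =>
    le_trans (hWnn 0 t x) (le_ciSup (hbdd t x) 0)
  have hWlle : ∀ (t : ℝ) (x : Fin n → ℝ), Wl t x ≤ CB * a x := fun t x =>
    ciSup_le fun k => hWle k t x
  -- the fixed-point identity
  have hfix : ∀ (t : ℝ), 0 ≤ t → ∀ x ∈ Ω, Wl t x = H t x + KK Wl t x := by
    intro t ht x hx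
    have h1 : Tendsto (fun k => Wseq (k+1) t x) atTop (nhds (Wl t x)) :=
      (htd t x).comp (tendsto_add_atTop_nat 1)
    have h2 : ∀ k, Wseq (k+1) t x = H t x + KK (Wseq k) t x := by
      intro k
      rw [hWseq_succ]
      simp only [hOpdef]
      rw [if_pos ⟨ht, hx⟩]
    have hinner : ∀ σ ∈ Ω, Tendsto (fun k => Kin (Wseq k) t x σ) atTop
        (nhds (Kin Wl t x σ)) := by
      intro σ hσ
      refine tendsto_integral_of_dominated_convergence
        (fun τ => α * a x * c σ * N σ * b τ)
        (fun k => (hτmeas _ (hWmeas k) t x σ).aestronglyMeasurable)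
        ((hbIcc t).const_mul _) (fun k => ?_) ?_
      · refine (ae_restrict_iff' measurableSet_Icc).2 (Eventually.of_forall fun τ hτ => ?_)
        have hF1 : |F (Wseq k (t - τ) σ)| ≤ 1 := hFabs _ (hWnn k _ _)
        have hANnn : 0 ≤ A τ x σ * N σ := mul_nonneg (hAnn _ _ _) (hNnn σ)
        have hAb : A τ x σ ≤ α * (a x * b τ * c σ) := (hAbound τ hτ.1 x hx σ hσ).2
        rw [Real.norm_eq_abs, abs_mul, abs_of_nonneg hANnn]
        calc A τ x σ * N σ * |F (Wseq k (t - τ) σ)| ≤ A τ x σ * N σ * 1 :=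
              mul_le_mul_of_nonneg_left hF1 hANnn
          _ = A τ x σ * N σ := by ring
          _ ≤ (α * (a x * b τ * c σ)) * N σ := mul_le_mul_of_nonneg_right hAb (hNnn σ)
          _ = α * a x * c σ * N σ * b τ := by ring
      · refine Eventually.of_forall fun τ => ?_
        exact Tendsto.const_mul _ ((hFcont.tendsto _).comp (htd (t - τ) σ))
    have h3 : Tendsto (fun k => KK (Wseq k) t x) atTop (nhds (KK Wl t x)) := by
      refine tendsto_integral_of_dominated_convergence
        (fun σ => (α * a x * L) * (c σ * N σ))
        (fun k => (hKin_meas _ (hWmeas k) t x).aestronglyMeasurable)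
        (hcN.const_mul _) (fun k => ?_) ?_
      · refine (ae_restrict_iff' hΩ).2 (Eventually.of_forall fun σ hσ => ?_)
        rw [Real.norm_eq_abs, abs_of_nonneg (hKin_nn _ (hWnn k) t x σ)]
        calc Kin (Wseq k) t x σ ≤ (α * a x * c σ * N σ) * L :=
              hKin_le _ (hWmeas k) (hWnn k) t x hx σ hσ
          _ = (α * a x * L) * (c σ * N σ) := by ring
      · exact (ae_restrict_iff' hΩ).2 (Eventually.of_forall fun σ hσ => hinner σ hσ)
    have h4 : Tendsto (fun k => Wseq (k+1) t x) atTop (nhds (H t x + KK Wl t x)) := by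
      have := h3.const_add (H t x)
      refine this.congr fun k => (h2 k).symm
    exact tendsto_nhds_unique h1 h4
  refine ⟨Wl, hWlmeas, ?_, ?_, ?_, ?_⟩
  · -- integrability
    intro t ht
    refine Integrable.mono (haN.const_mul CB) ?_ ?_
    · exact ((hWlmeas.comp (measurable_const.prodMk measurable_id)).mul
        hNmeas).aestronglyMeasurable
    · refine Eventually.of_forall fun x => ?_
      rw [Real.norm_eq_abs, Real.norm_eq_abs,
        abs_of_nonneg (mul_nonneg (hWlnn t x) (hNnn x))]
      calc Wl t x * N x ≤ (CB * a x) * N x :=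
            mul_le_mul_of_nonneg_right (hWlle t x) (hNnn x)
        _ = CB * (a x * N x) := by ring
        _ ≤ |CB * (a x * N x)| := le_abs_self _
  · intro t ht
    exact Eventually.of_forall fun x => hWlnn t x
  · -- time continuity
    intro t ht
    have ht0 : (0:ℝ) ≤ t := ht.1
    -- flip the inner integral into convolution form
    have hflip : ∀ (s : ℝ) (x σ : Fin n → ℝ), Kin Wl s x σ =
        ∫ u in Ici (0:ℝ), A (s - u) x σ * N σ * F (Wl u σ) := by
      intro s x σ
      set f : ℝ → ℝ := fun τ => A τ x σ * N σ * F (Wl (s - τ) σ) with hfdef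
      have e1 : Kin Wl s x σ = ∫ τ in Iic s, f τ := by
        simp only [hKindef]
        refine (setIntegral_eq_of_subset_of_ae_diff_eq_zero
          measurableSet_Iic.nullMeasurableSet Icc_subset_Iic_self ?_).symm
        refine Eventually.of_forall fun τ hτ => ?_
        have hτ0 : τ < 0 := by
          rcases hτ with ⟨h1, h2⟩
          rw [mem_Iic] at h1
          by_contra hc
          exact h2 ⟨not_lt.1 hc, h1⟩
        simp only [hfdef, hAzero τ hτ0 x σ, zero_mul]
      have e2 : ∫ τ, ((Iic s).indicator f) (s - τ) = ∫ τ in Iic s, f τ := by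
        rw [integral_sub_left_eq_self ((Iic s).indicator f) volume s,
          integral_indicator measurableSet_Iic]
      have e3 : ∀ u : ℝ, ((Iic s).indicator f) (s - u) =
          (Ici (0:ℝ)).indicator (fun u => f (s - u)) u := by
        intro u
        simp only [indicator_apply, mem_Iic, mem_Ici, sub_le_self_iff]
      rw [e1, ← e2]
      simp_rw [e3]
      rw [integral_indicator measurableSet_Ici]
      refine setIntegral_congr_fun measurableSet_Ici fun u _ => ?_
      simp only [hfdef, sub_sub_cancel]
    -- measurability and integrability in the convolution form
    have humeas : ∀ (s : ℝ) (x σ : Fin n → ℝ),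
        Measurable (fun u : ℝ => A (s - u) x σ * N σ * F (Wl u σ)) := by
      intro s x σ
      have h0 : Measurable (fun u : ℝ => (s - u, (x, σ))) :=
        (measurable_const.sub measurable_id).prodMk measurable_const
      have h1 := hAmeas.comp h0
      have h0' : Measurable (fun u : ℝ => (u, σ)) := measurable_id.prodMk measurable_const
      have h2 := hWlmeas.comp h0'
      exact (h1.mul measurable_const).mul (hFcont.measurable.comp h2)
    have huint : ∀ (s : ℝ), ∀ x ∈ Ω, ∀ σ ∈ Ω,
        IntegrableOn (fun u : ℝ => A (s - u) x σ * N σ * F (Wl u σ)) (Ici 0) := by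
      intro s x hx σ hσ
      refine Integrable.mono (((hb'sub s).const_mul (α * a x * c σ * N σ)).integrableOn)
        (humeas s x σ).aestronglyMeasurable ?_
      refine Eventually.of_forall fun u => ?_
      have hF1 : |F (Wl u σ)| ≤ 1 := hFabs _ (hWlnn u σ)
      have hANnn : 0 ≤ A (s - u) x σ * N σ := mul_nonneg (hAnn _ _ _) (hNnn σ)
      rw [Real.norm_eq_abs, Real.norm_eq_abs, abs_mul, abs_of_nonneg hANnn]
      calc A (s - u) x σ * N σ * |F (Wl u σ)| ≤ A (s - u) x σ * N σ * 1 :=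
            mul_le_mul_of_nonneg_left hF1 hANnn
        _ = A (s - u) x σ * N σ := by ring
        _ ≤ (α * a x * b' (s - u) * c σ) * N σ :=
            mul_le_mul_of_nonneg_right (hA_le _ x hx σ hσ) (hNnn σ)
        _ = α * a x * c σ * N σ * b' (s - u) := by ring
        _ ≤ |α * a x * c σ * N σ * b' (s - u)| := le_abs_self _
    -- integrability of shifted kernel differences
    have hAd_meas : ∀ (h : ℝ) (x σ : Fin n → ℝ),
        Measurable (fun τ : ℝ => |A (τ + h) x σ - A τ x σ|) := by
      intro h x σ
      have h0 : Measurable (fun τ : ℝ => (τ + h, (x, σ))) :=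
        (measurable_id.add_const h).prodMk measurable_const
      have h1 := hAmeas.comp h0
      have h0' : Measurable (fun τ : ℝ => (τ, (x, σ))) := measurable_id.prodMk measurable_const
      have h2 := hAmeas.comp h0'
      exact (h1.sub h2).abs
    have hAd_int : ∀ (h : ℝ), ∀ x ∈ Ω, ∀ σ ∈ Ω,
        Integrable (fun τ : ℝ => |A (τ + h) x σ - A τ x σ|) := by
      intro h x hx σ hσ
      refine Integrable.mono (((hb'add h).add hb'int).const_mul (α * a x * c σ))
        (hAd_meas h x σ).aestronglyMeasurable ?_
      refine Eventually.of_forall fun τ => ?_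
      rw [Real.norm_eq_abs, Real.norm_eq_abs, abs_abs]
      calc |A (τ + h) x σ - A τ x σ| ≤ |A (τ + h) x σ| + |A τ x σ| := abs_sub _ _
        _ = A (τ + h) x σ + A τ x σ := by
            rw [abs_of_nonneg (hAnn _ _ _), abs_of_nonneg (hAnn _ _ _)]
        _ ≤ (α * a x * b' (τ + h) * c σ) + (α * a x * b' τ * c σ) :=
            add_le_add (hA_le _ x hx σ hσ) (hA_le _ x hx σ hσ)
        _ = α * a x * c σ * (b' (τ + h) + b' τ) := by ring
        _ ≤ |α * a x * c σ * (b' (τ + h) + b' τ)| := le_abs_self _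
    have hAud_int : ∀ (s : ℝ), ∀ x ∈ Ω, ∀ σ ∈ Ω,
        Integrable (fun u : ℝ => |A (s - u) x σ - A (t - u) x σ|) := by
      intro s x hx σ hσ
      have hm : Measurable (fun u : ℝ => |A (s - u) x σ - A (t - u) x σ|) := by
        have h0 : Measurable (fun u : ℝ => (s - u, (x, σ))) :=
          (measurable_const.sub measurable_id).prodMk measurable_const
        have h0' : Measurable (fun u : ℝ => (t - u, (x, σ))) :=
          (measurable_const.sub measurable_id).prodMk measurable_const
        exact ((hAmeas.comp h0).sub (hAmeas.comp h0')).abs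
      refine Integrable.mono (((hb'sub s).add (hb'sub t)).const_mul (α * a x * c σ))
        hm.aestronglyMeasurable ?_
      refine Eventually.of_forall fun u => ?_
      rw [Real.norm_eq_abs, Real.norm_eq_abs, abs_abs]
      calc |A (s - u) x σ - A (t - u) x σ| ≤ |A (s - u) x σ| + |A (t - u) x σ| := abs_sub _ _
        _ = A (s - u) x σ + A (t - u) x σ := by
            rw [abs_of_nonneg (hAnn _ _ _), abs_of_nonneg (hAnn _ _ _)]
        _ ≤ (α * a x * b' (s - u) * c σ) + (α * a x * b' (t - u) * c σ) :=
            add_le_add (hA_le _ x hx σ hσ) (hA_le _ x hx σ hσ)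
        _ = α * a x * c σ * (b' (s - u) + b' (t - u)) := by ring
        _ ≤ |α * a x * c σ * (b' (s - u) + b' (t - u))| := le_abs_self _
    -- pointwise inner difference bound
    have hinnerdiff : ∀ (s : ℝ), ∀ x ∈ Ω, ∀ σ ∈ Ω,
        |Kin Wl s x σ - Kin Wl t x σ| ≤
          N σ * ∫ u in Ici (0:ℝ), |A (s - u) x σ - A (t - u) x σ| := by
      intro s x hx σ hσ
      have hsub : Kin Wl s x σ - Kin Wl t x σ = ∫ u in Ici (0:ℝ),
          (A (s - u) x σ * N σ * F (Wl u σ) - A (t - u) x σ * N σ * F (Wl u σ)) := by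
        rw [hflip s x σ, hflip t x σ]
        exact (integral_sub (huint s x hx σ hσ) (huint t x hx σ hσ)).symm
      rw [hsub]
      calc |∫ u in Ici (0:ℝ), (A (s - u) x σ * N σ * F (Wl u σ)
              - A (t - u) x σ * N σ * F (Wl u σ))|
          ≤ ∫ u in Ici (0:ℝ), |A (s - u) x σ * N σ * F (Wl u σ)
              - A (t - u) x σ * N σ * F (Wl u σ)| := abs_int_le _ _
        _ ≤ ∫ u in Ici (0:ℝ), N σ * |A (s - u) x σ - A (t - u) x σ| := by
            refine integral_mono_of_nonneg (Eventually.of_forall fun u => abs_nonneg _)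
              (((hAud_int s x hx σ hσ).const_mul (N σ)).integrableOn)
              (Eventually.of_forall fun u => ?_)
            show |A (s - u) x σ * N σ * F (Wl u σ) - A (t - u) x σ * N σ * F (Wl u σ)|
                ≤ N σ * |A (s - u) x σ - A (t - u) x σ|
            have e : A (s - u) x σ * N σ * F (Wl u σ) - A (t - u) x σ * N σ * F (Wl u σ)
                = (A (s - u) x σ - A (t - u) x σ) * N σ * F (Wl u σ) := by ring
            rw [e, abs_mul, abs_mul, abs_of_nonneg (hNnn σ)]
            calc |A (s - u) x σ - A (t - u) x σ| * N σ * |F (Wl u σ)|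
                ≤ |A (s - u) x σ - A (t - u) x σ| * N σ * 1 :=
                  mul_le_mul_of_nonneg_left (hFabs _ (hWlnn u σ))
                    (mul_nonneg (abs_nonneg _) (hNnn σ))
              _ = N σ * |A (s - u) x σ - A (t - u) x σ| := by ring
        _ = N σ * ∫ u in Ici (0:ℝ), |A (s - u) x σ - A (t - u) x σ| := integral_const_mul _ _
    -- change of variables and splitting
    have hPsplit : ∀ (s : ℝ), ∀ x ∈ Ω, ∀ σ ∈ Ω,
        ∫ u in Ici (0:ℝ), |A (s - u) x σ - A (t - u) x σ| ≤
          (∫ τ in Ici (0:ℝ), |A (τ + (s - t)) x σ - A τ x σ|)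
            + (α * a x * c σ) * ∫ τ in Icc 0 |s - t|, b τ := by
      intro s x hx σ hσ
      have harg : ∀ τ : ℝ, s - (t - τ) = τ + (s - t) := fun τ => by ring
      have e1 : ∫ u in Ici (0:ℝ), |A (s - u) x σ - A (t - u) x σ|
          = ∫ τ in Iic t, |A (τ + (s - t)) x σ - A τ x σ| := by
        rw [← integral_indicator measurableSet_Ici,
          ← integral_sub_left_eq_self
            (fun u => (Ici (0:ℝ)).indicator (fun u => |A (s - u) x σ - A (t - u) x σ|) u)
            volume t,
          ← integral_indicator measurableSet_Iic]
        refine integral_congr_ae (Eventually.of_forall fun τ => ?_)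
        show (Ici (0:ℝ)).indicator (fun u => |A (s - u) x σ - A (t - u) x σ|) (t - τ)
            = (Iic t).indicator (fun τ => |A (τ + (s - t)) x σ - A τ x σ|) τ
        by_cases hτ : τ ≤ t
        · rw [indicator_of_mem (mem_Ici.2 (sub_nonneg.2 hτ)),
            indicator_of_mem (mem_Iic.2 hτ)]
          rw [harg τ, sub_sub_cancel]
        · rw [indicator_of_notMem (by simpa [mem_Ici, sub_nonneg] using hτ),
            indicator_of_notMem (by simpa [mem_Iic] using hτ)]
      have hsplitset : Iic t = Iio 0 ∪ Icc 0 t := by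
        ext u; simp only [mem_Iic, mem_union, mem_Iio, mem_Icc]
        constructor
        · intro hu; rcases lt_or_ge u 0 with h' | h'
          exacts [Or.inl h', Or.inr ⟨h', hu⟩]
        · rintro (h' | ⟨h1, h2⟩); exacts [le_trans h'.le ht0, h2]
      have hdisj : Disjoint (Iio (0:ℝ)) (Icc 0 t) := by
        rw [disjoint_left]; rintro u hu ⟨h1, _⟩; exact absurd h1 (not_le.2 hu)
      have e2 : ∫ τ in Iic t, |A (τ + (s - t)) x σ - A τ x σ| =
          (∫ τ in Iio 0, |A (τ + (s - t)) x σ - A τ x σ|)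
            + ∫ τ in Icc 0 t, |A (τ + (s - t)) x σ - A τ x σ| := by
        rw [hsplitset]
        exact setIntegral_union hdisj measurableSet_Icc
          ((hAd_int (s - t) x hx σ hσ).integrableOn)
          ((hAd_int (s - t) x hx σ hσ).integrableOn)
      have e3 : ∫ τ in Icc 0 t, |A (τ + (s - t)) x σ - A τ x σ|
          ≤ ∫ τ in Ici 0, |A (τ + (s - t)) x σ - A τ x σ| :=
        setIntegral_mono_set (hAd_int (s - t) x hx σ hσ).integrableOn
          (Eventually.of_forall fun τ => abs_nonneg _)
          (HasSubset.Subset.eventuallyLE Icc_subset_Ici_self)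
      have e4 : ∫ τ in Iio 0, |A (τ + (s - t)) x σ - A τ x σ|
          ≤ (α * a x * c σ) * ∫ τ in Icc 0 |s - t|, b τ := by
        have e4a : ∫ τ in Iio 0, |A (τ + (s - t)) x σ - A τ x σ|
            = ∫ τ in Iio 0, A (τ + (s - t)) x σ := by
          refine setIntegral_congr_fun measurableSet_Iio fun τ hτ => ?_
          rw [hAzero τ hτ x σ, sub_zero, abs_of_nonneg (hAnn _ _ _)]
        have hAint : IntegrableOn (fun τ : ℝ => A (τ + (s - t)) x σ) (Iio 0) := by
          have hm : Measurable (fun τ : ℝ => A (τ + (s - t)) x σ) := by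
            have h0 : Measurable (fun τ : ℝ => (τ + (s - t), (x, σ))) :=
              (measurable_id.add_const _).prodMk measurable_const
            exact hAmeas.comp h0
          refine Integrable.mono (((hb'add (s - t)).const_mul (α * a x * c σ)).integrableOn)
            hm.aestronglyMeasurable ?_
          refine Eventually.of_forall fun τ => ?_
          rw [Real.norm_eq_abs, Real.norm_eq_abs, abs_of_nonneg (hAnn _ _ _)]
          calc A (τ + (s - t)) x σ ≤ α * a x * b' (τ + (s - t)) * c σ := hA_le _ x hx σ hσ
            _ = α * a x * c σ * b' (τ + (s - t)) := by ring
            _ ≤ |α * a x * c σ * b' (τ + (s - t))| := le_abs_self _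
        have e4b : ∫ τ in Iio 0, A (τ + (s - t)) x σ
            ≤ ∫ τ in Iio 0, (α * a x * c σ) * b' (τ + (s - t)) := by
          refine setIntegral_mono_on hAint
            (((hb'add (s - t)).const_mul _).integrableOn) measurableSet_Iio fun τ _ => ?_
          calc A (τ + (s - t)) x σ ≤ α * a x * b' (τ + (s - t)) * c σ := hA_le _ x hx σ hσ
            _ = (α * a x * c σ) * b' (τ + (s - t)) := by ring
        have e4c : ∫ τ in Iio 0, b' (τ + (s - t)) ≤ ∫ τ in Icc 0 |s - t|, b τ := by
          have hind : ∀ τ : ℝ, (Iio (0:ℝ)).indicator (fun τ => b' (τ + (s - t))) τ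
              = ((Iio (s - t)).indicator b') (τ + (s - t)) := by
            intro τ
            by_cases hτ : τ < 0
            · rw [indicator_of_mem (mem_Iio.2 hτ),
                indicator_of_mem (mem_Iio.2 (by linarith) : τ + (s - t) ∈ Iio (s - t))]
            · rw [indicator_of_notMem (fun hc => hτ (mem_Iio.1 hc)),
                indicator_of_notMem (fun hc => hτ (by have := mem_Iio.1 hc; linarith))]
          calc ∫ τ in Iio 0, b' (τ + (s - t))
              = ∫ τ, (Iio (0:ℝ)).indicator (fun τ => b' (τ + (s - t))) τ :=
                (integral_indicator measurableSet_Iio).symm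
            _ = ∫ τ, ((Iio (s - t)).indicator b') (τ + (s - t)) := by simp_rw [hind]
            _ = ∫ τ, (Iio (s - t)).indicator b' τ :=
                integral_add_right_eq_self ((Iio (s - t)).indicator b') (s - t)
            _ = ∫ τ in Iio (s - t), b' τ := integral_indicator measurableSet_Iio
            _ = ∫ τ in Iio (s - t) ∩ Ici 0, b τ := setIntegral_indicator measurableSet_Ici
            _ ≤ ∫ τ in Icc 0 |s - t|, b τ := by
                refine setIntegral_mono_set (hbIcc _)
                  (Eventually.of_forall fun τ => hbnn τ)
                  (HasSubset.Subset.eventuallyLE ?_)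
                rintro τ ⟨h1, h2⟩
                exact ⟨h2, le_trans (le_of_lt h1) (le_abs_self _)⟩
        calc ∫ τ in Iio 0, |A (τ + (s - t)) x σ - A τ x σ|
            = ∫ τ in Iio 0, A (τ + (s - t)) x σ := e4a
          _ ≤ ∫ τ in Iio 0, (α * a x * c σ) * b' (τ + (s - t)) := e4b
          _ = (α * a x * c σ) * ∫ τ in Iio 0, b' (τ + (s - t)) := integral_const_mul _ _
          _ ≤ (α * a x * c σ) * ∫ τ in Icc 0 |s - t|, b τ := by
              refine mul_le_mul_of_nonneg_left e4c ?_
              exact mul_nonneg (mul_nonneg hα0.le (hann x)) (hcnn σ)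
      rw [e1, e2]
      linarith
    -- bound and measurability for the shifted-kernel integral
    have hP1nn : ∀ (h : ℝ) (x σ : Fin n → ℝ),
        0 ≤ ∫ τ in Ici (0:ℝ), |A (τ + h) x σ - A τ x σ| := fun h x σ =>
      setIntegral_nonneg measurableSet_Ici fun τ _ => abs_nonneg _
    have hP1le : ∀ (h : ℝ), ∀ x ∈ Ω, ∀ σ ∈ Ω,
        (∫ τ in Ici (0:ℝ), |A (τ + h) x σ - A τ x σ|) ≤ (2 * α * L * a x) * c σ := by
      intro h x hx σ hσ
      calc (∫ τ in Ici (0:ℝ), |A (τ + h) x σ - A τ x σ|)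
          ≤ ∫ τ in Ici (0:ℝ), (α * a x * c σ) * (b' (τ + h) + b' τ) := by
            refine setIntegral_mono_on (hAd_int h x hx σ hσ).integrableOn
              ((((hb'add h).add hb'int).const_mul _).integrableOn) measurableSet_Ici
              fun τ _ => ?_
            calc |A (τ + h) x σ - A τ x σ| ≤ |A (τ + h) x σ| + |A τ x σ| := abs_sub _ _
              _ = A (τ + h) x σ + A τ x σ := by
                  rw [abs_of_nonneg (hAnn _ _ _), abs_of_nonneg (hAnn _ _ _)]
              _ ≤ (α * a x * b' (τ + h) * c σ) + (α * a x * b' τ * c σ) :=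
                  add_le_add (hA_le _ x hx σ hσ) (hA_le _ x hx σ hσ)
              _ = (α * a x * c σ) * (b' (τ + h) + b' τ) := by ring
        _ = (α * a x * c σ) * ∫ τ in Ici (0:ℝ), (b' (τ + h) + b' τ) := integral_const_mul _ _
        _ ≤ (α * a x * c σ) * (L + L) := by
            refine mul_le_mul_of_nonneg_left ?_
              (mul_nonneg (mul_nonneg hα0.le (hann x)) (hcnn σ))
            rw [integral_add ((hb'add h).integrableOn) hb'int.integrableOn]
            refine add_le_add (hb'addle h _) ?_
            calc ∫ τ in Ici (0:ℝ), b' τ ≤ ∫ τ, b' τ :=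
                  setIntegral_le_integral hb'int (Eventually.of_forall fun τ => hb'nn τ)
              _ = L := hb'L
        _ = (2 * α * L * a x) * c σ := by ring
    have hP1measσ : ∀ (h : ℝ) (x : Fin n → ℝ),
        Measurable (fun σ => ∫ τ in Ici (0:ℝ), |A (τ + h) x σ - A τ x σ|) := by
      intro h x
      refine meas_integral_param (volume.restrict (Ici 0))
        (g := fun σ τ => |A (τ + h) x σ - A τ x σ|) ?_
      have h0 : Measurable (fun q : (Fin n → ℝ) × ℝ => (q.2 + h, (x, q.1))) :=
        (measurable_snd.add_const h).prodMk (measurable_const.prodMk measurable_fst)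
      have h0' : Measurable (fun q : (Fin n → ℝ) × ℝ => (q.2, (x, q.1))) :=
        measurable_snd.prodMk (measurable_const.prodMk measurable_fst)
      exact ((hAmeas.comp h0).sub (hAmeas.comp h0')).abs
    have hNP1int : ∀ (h : ℝ), ∀ x ∈ Ω, IntegrableOn
        (fun σ => N σ * ∫ τ in Ici (0:ℝ), |A (τ + h) x σ - A τ x σ|) Ω := by
      intro h x hx
      refine Integrable.mono (hcN.const_mul (2 * α * L * a x))
        ((hNmeas.mul (hP1measσ h x)).aestronglyMeasurable) ?_
      refine (ae_restrict_iff' hΩ).2 (Eventually.of_forall fun σ hσ => ?_)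
      rw [Real.norm_eq_abs, Real.norm_eq_abs,
        abs_of_nonneg (mul_nonneg (hNnn σ) (hP1nn h x σ))]
      calc N σ * ∫ τ in Ici (0:ℝ), |A (τ + h) x σ - A τ x σ|
          ≤ N σ * ((2 * α * L * a x) * c σ) :=
            mul_le_mul_of_nonneg_left (hP1le h x hx σ hσ) (hNnn σ)
        _ = (2 * α * L * a x) * (c σ * N σ) := by ring
        _ ≤ |(2 * α * L * a x) * (c σ * N σ)| := le_abs_self _
    have hS2eq : ∀ (h : ℝ) (x : Fin n → ℝ),
        (∫ σ in Ω, N σ * ∫ τ in Ici (0:ℝ), |A (τ + h) x σ - A τ x σ|)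
          = ∫ σ in Ω, ∫ τ in Ici (0:ℝ), N σ * |A (τ + h) x σ - A τ x σ| :=
      fun h x => setIntegral_congr_fun hΩ fun σ _ => (integral_const_mul _ _).symm
    have hS2meas : ∀ (h : ℝ), Measurable (fun x => ∫ σ in Ω, ∫ τ in Ici (0:ℝ),
        N σ * |A (τ + h) x σ - A τ x σ|) := by
      intro h
      refine meas_integral_param2 (volume.restrict Ω) (volume.restrict (Ici 0))
        (g := fun x σ τ => N σ * |A (τ + h) x σ - A τ x σ|) ?_
      have h0 : Measurable (fun q : ((Fin n → ℝ) × (Fin n → ℝ)) × ℝ =>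
          (q.2 + h, (q.1.1, q.1.2))) :=
        (measurable_snd.add_const h).prodMk ((measurable_fst.comp
          measurable_fst).prodMk (measurable_snd.comp measurable_fst))
      have h0' : Measurable (fun q : ((Fin n → ℝ) × (Fin n → ℝ)) × ℝ =>
          (q.2, (q.1.1, q.1.2))) :=
        measurable_snd.prodMk ((measurable_fst.comp
          measurable_fst).prodMk (measurable_snd.comp measurable_fst))
      exact (hNmeas.comp (measurable_snd.comp measurable_fst)).mul
        (((hAmeas.comp h0).sub (hAmeas.comp h0')).abs)
    -- the σ-level difference bound
    have hKKdiff : ∀ (s : ℝ), ∀ x ∈ Ω,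
        |KK Wl s x - KK Wl t x| ≤
          (∫ σ in Ω, N σ * ∫ τ in Ici (0:ℝ), |A (τ + (s - t)) x σ - A τ x σ|)
            + (α * a x * ∫ τ in Icc 0 |s - t|, b τ) * C0 := by
      intro s x hx
      have h1 : KK Wl s x - KK Wl t x = ∫ σ in Ω, (Kin Wl s x σ - Kin Wl t x σ) :=
        (integral_sub (hKK_int Wl hWlmeas hWlnn s x hx)
          (hKK_int Wl hWlmeas hWlnn t x hx)).symm
      rw [h1]
      calc |∫ σ in Ω, (Kin Wl s x σ - Kin Wl t x σ)|
          ≤ ∫ σ in Ω, |Kin Wl s x σ - Kin Wl t x σ| := abs_int_le _ _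
        _ ≤ ∫ σ in Ω, ((N σ * ∫ τ in Ici (0:ℝ), |A (τ + (s - t)) x σ - A τ x σ|)
              + (α * a x * ∫ τ in Icc 0 |s - t|, b τ) * (c σ * N σ)) := by
            refine integral_mono_of_nonneg (Eventually.of_forall fun σ => abs_nonneg _)
              ((hNP1int (s - t) x hx).add (hcN.const_mul _)) ?_
            refine (ae_restrict_iff' hΩ).2 (Eventually.of_forall fun σ hσ => ?_)
            calc |Kin Wl s x σ - Kin Wl t x σ|
                ≤ N σ * ∫ u in Ici (0:ℝ), |A (s - u) x σ - A (t - u) x σ| :=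
                  hinnerdiff s x hx σ hσ
              _ ≤ N σ * ((∫ τ in Ici (0:ℝ), |A (τ + (s - t)) x σ - A τ x σ|)
                    + (α * a x * c σ) * ∫ τ in Icc 0 |s - t|, b τ) :=
                  mul_le_mul_of_nonneg_left (hPsplit s x hx σ hσ) (hNnn σ)
              _ = (N σ * ∫ τ in Ici (0:ℝ), |A (τ + (s - t)) x σ - A τ x σ|)
                    + (α * a x * ∫ τ in Icc 0 |s - t|, b τ) * (c σ * N σ) := by ring
        _ = (∫ σ in Ω, N σ * ∫ τ in Ici (0:ℝ), |A (τ + (s - t)) x σ - A τ x σ|)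
              + (α * a x * ∫ τ in Icc 0 |s - t|, b τ) * C0 := by
            rw [integral_add (hNP1int (s - t) x hx) (hcN.const_mul _), integral_const_mul]
    -- the x-level estimate
    have hEst : ∀ s ∈ Icc (0:ℝ) T,
        (∫ x in Ω, |Wl s x - Wl t x| * N x) ≤
          (∫ x in Ω, |H s x - H t x| * N x)
            + ((∫ x in Ω, ∫ σ in Ω, ∫ τ in Ici (0:ℝ),
                N x * |A (τ + (s - t)) x σ - A τ x σ| * N σ)
              + (α * C0 * Ca) * ∫ τ in Icc 0 |s - t|, b τ) := by
      intro s hs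
      have hβnn : 0 ≤ ∫ τ in Icc 0 |s - t|, b τ :=
        setIntegral_nonneg measurableSet_Icc fun τ _ => hbnn τ
      have hHsx_meas : ∀ r : ℝ, Measurable (fun x => H r x) := fun r =>
        hHmeas.comp (measurable_const.prodMk measurable_id)
      have hHd_int : IntegrableOn (fun x => |H s x - H t x| * N x) Ω := by
        refine Integrable.mono (haN.const_mul (2 * (α * M)))
          ((((hHsx_meas s).sub (hHsx_meas t)).abs.mul hNmeas).aestronglyMeasurable) ?_
        refine (ae_restrict_iff' hΩ).2 (Eventually.of_forall fun x hx => ?_)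
        rw [Real.norm_eq_abs, Real.norm_eq_abs, abs_mul, abs_abs, abs_of_nonneg (hNnn x)]
        have h1 : |H s x - H t x| ≤ 2 * (α * M) * a x := by
          have hs1 := hHle s hs.1 x hx
          have hs0 := hHnn s hs.1 x hx
          have ht1 := hHle t ht0 x hx
          have ht2 := hHnn t ht0 x hx
          rw [abs_sub_le_iff]
          constructor <;> nlinarith [mul_nonneg hα0.le (mul_nonneg hM0 (hann x))]
        calc |H s x - H t x| * N x ≤ (2 * (α * M) * a x) * N x :=
              mul_le_mul_of_nonneg_right h1 (hNnn x)
          _ = 2 * (α * M) * (a x * N x) := by ring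
          _ ≤ |2 * (α * M) * (a x * N x)| := le_abs_self _
      have hS2nn : ∀ x : Fin n → ℝ, 0 ≤ ∫ σ in Ω, ∫ τ in Ici (0:ℝ),
          N σ * |A (τ + (s - t)) x σ - A τ x σ| := fun x =>
        setIntegral_nonneg hΩ fun σ _ => setIntegral_nonneg measurableSet_Ici
          fun τ _ => mul_nonneg (hNnn σ) (abs_nonneg _)
      have hS2le : ∀ x ∈ Ω, (∫ σ in Ω, ∫ τ in Ici (0:ℝ),
          N σ * |A (τ + (s - t)) x σ - A τ x σ|) ≤ (2 * α * L * a x) * C0 := by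
        intro x hx
        rw [← hS2eq (s - t) x]
        calc (∫ σ in Ω, N σ * ∫ τ in Ici (0:ℝ), |A (τ + (s - t)) x σ - A τ x σ|)
            ≤ ∫ σ in Ω, (2 * α * L * a x) * (c σ * N σ) := by
              refine setIntegral_mono_on (hNP1int (s - t) x hx)
                (hcN.const_mul _) hΩ fun σ hσ => ?_
              calc N σ * ∫ τ in Ici (0:ℝ), |A (τ + (s - t)) x σ - A τ x σ|
                  ≤ N σ * ((2 * α * L * a x) * c σ) :=
                    mul_le_mul_of_nonneg_left (hP1le (s - t) x hx σ hσ) (hNnn σ)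
                _ = (2 * α * L * a x) * (c σ * N σ) := by ring
          _ = (2 * α * L * a x) * C0 := integral_const_mul _ _
      have hS2int : IntegrableOn (fun x => N x * ∫ σ in Ω, ∫ τ in Ici (0:ℝ),
          N σ * |A (τ + (s - t)) x σ - A τ x σ|) Ω := by
        refine Integrable.mono (haN.const_mul (2 * α * L * C0))
          ((hNmeas.mul (hS2meas (s - t))).aestronglyMeasurable) ?_
        refine (ae_restrict_iff' hΩ).2 (Eventually.of_forall fun x hx => ?_)
        rw [Real.norm_eq_abs, Real.norm_eq_abs,
          abs_of_nonneg (mul_nonneg (hNnn x) (hS2nn x))]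
        calc N x * ∫ σ in Ω, ∫ τ in Ici (0:ℝ), N σ * |A (τ + (s - t)) x σ - A τ x σ|
            ≤ N x * ((2 * α * L * a x) * C0) :=
              mul_le_mul_of_nonneg_left (hS2le x hx) (hNnn x)
          _ = (2 * α * L * C0) * (a x * N x) := by ring
          _ ≤ |(2 * α * L * C0) * (a x * N x)| := le_abs_self _
      have hlast_int : IntegrableOn (fun x =>
          (α * C0 * (∫ τ in Icc 0 |s - t|, b τ)) * (a x * N x)) Ω := haN.const_mul _
      have hptw : ∀ x ∈ Ω, |Wl s x - Wl t x| * N x ≤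
          |H s x - H t x| * N x
            + ((N x * ∫ σ in Ω, ∫ τ in Ici (0:ℝ), N σ * |A (τ + (s - t)) x σ - A τ x σ|)
              + (α * C0 * (∫ τ in Icc 0 |s - t|, b τ)) * (a x * N x)) := by
        intro x hx
        have e1 : Wl s x - Wl t x = (H s x - H t x) + (KK Wl s x - KK Wl t x) := by
          rw [hfix s hs.1 x hx, hfix t ht0 x hx]; ring
        have e2 : |Wl s x - Wl t x| ≤ |H s x - H t x| + |KK Wl s x - KK Wl t x| := by
          rw [e1]; exact abs_add_le _ _
        have e3 := hKKdiff s x hx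
        rw [hS2eq (s - t) x] at e3
        have e4 : |Wl s x - Wl t x| * N x ≤
            (|H s x - H t x| + ((∫ σ in Ω, ∫ τ in Ici (0:ℝ),
              N σ * |A (τ + (s - t)) x σ - A τ x σ|)
              + (α * a x * ∫ τ in Icc 0 |s - t|, b τ) * C0)) * N x :=
          mul_le_mul_of_nonneg_right (le_trans e2 (by linarith)) (hNnn x)
        calc |Wl s x - Wl t x| * N x ≤ _ := e4
          _ = |H s x - H t x| * N x
              + ((N x * ∫ σ in Ω, ∫ τ in Ici (0:ℝ), N σ * |A (τ + (s - t)) x σ - A τ x σ|)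
                + (α * C0 * (∫ τ in Icc 0 |s - t|, b τ)) * (a x * N x)) := by ring
      calc (∫ x in Ω, |Wl s x - Wl t x| * N x)
          ≤ ∫ x in Ω, (|H s x - H t x| * N x
              + ((N x * ∫ σ in Ω, ∫ τ in Ici (0:ℝ), N σ * |A (τ + (s - t)) x σ - A τ x σ|)
                + (α * C0 * (∫ τ in Icc 0 |s - t|, b τ)) * (a x * N x))) :=
            integral_mono_of_nonneg
              (Eventually.of_forall fun x => mul_nonneg (abs_nonneg _) (hNnn x))
              (hHd_int.add (hS2int.add hlast_int))
              ((ae_restrict_iff' hΩ).2 (Eventually.of_forall hptw))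
        _ = (∫ x in Ω, |H s x - H t x| * N x)
            + ((∫ x in Ω, N x * ∫ σ in Ω, ∫ τ in Ici (0:ℝ),
                N σ * |A (τ + (s - t)) x σ - A τ x σ|)
              + ∫ x in Ω, (α * C0 * (∫ τ in Icc 0 |s - t|, b τ)) * (a x * N x)) := by
            have h12 : IntegrableOn (fun x =>
                (N x * ∫ σ in Ω, ∫ τ in Ici (0:ℝ), N σ * |A (τ + (s - t)) x σ - A τ x σ|)
                  + (α * C0 * (∫ τ in Icc 0 |s - t|, b τ)) * (a x * N x)) Ω :=
              hS2int.add hlast_int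
            rw [integral_add hHd_int h12, integral_add hS2int hlast_int]
        _ = (∫ x in Ω, |H s x - H t x| * N x)
            + ((∫ x in Ω, ∫ σ in Ω, ∫ τ in Ici (0:ℝ),
                N x * |A (τ + (s - t)) x σ - A τ x σ| * N σ)
              + (α * C0 * Ca) * ∫ τ in Icc 0 |s - t|, b τ) := by
            congr 1
            congr 1
            · refine setIntegral_congr_fun hΩ fun x _ => ?_
              rw [show N x * (∫ σ in Ω, ∫ τ in Ici (0:ℝ),
                  N σ * |A (τ + (s - t)) x σ - A τ x σ|)
                = ∫ σ in Ω, N x * ∫ τ in Ici (0:ℝ),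
                    N σ * |A (τ + (s - t)) x σ - A τ x σ| from (integral_const_mul _ _).symm]
              refine setIntegral_congr_fun hΩ fun σ _ => ?_
              rw [show N x * (∫ τ in Ici (0:ℝ), N σ * |A (τ + (s - t)) x σ - A τ x σ|)
                = ∫ τ in Ici (0:ℝ), N x * (N σ * |A (τ + (s - t)) x σ - A τ x σ|)
                  from (integral_const_mul _ _).symm]
              refine setIntegral_congr_fun measurableSet_Ici fun τ _ => by ring
            · rw [integral_const_mul, ← hCadef]
              ring
    -- the small-interval integral of b tends to zero
    have hbeta : Tendsto (fun h : ℝ => ∫ τ in Icc 0 |h|, b τ) (nhds 0) (nhds 0) := by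
      have h0 : ∀ h : ℝ, ∫ τ in Icc 0 |h|, b τ
          = ∫ τ in Ici (0:ℝ), (Icc (0:ℝ) |h|).indicator b τ := by
        intro h
        rw [setIntegral_indicator measurableSet_Icc,
          inter_eq_self_of_subset_right Icc_subset_Ici_self]
      have hne : ∀ᵐ τ : ℝ ∂volume.restrict (Ici 0), τ ≠ 0 := by
        refine ae_restrict_of_ae ?_
        rw [ae_iff]
        simpa [not_not, setOf_eq_eq_singleton] using measure_singleton (0:ℝ)
      have hDCT : Tendsto (fun h : ℝ => ∫ τ in Ici (0:ℝ), (Icc (0:ℝ) |h|).indicator b τ)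
          (nhds 0) (nhds (∫ _ in Ici (0:ℝ), (0:ℝ))) := by
        refine tendsto_integral_filter_of_dominated_convergence b
          (Eventually.of_forall fun h =>
            (hbmeas.indicator measurableSet_Icc).aestronglyMeasurable)
          (Eventually.of_forall fun h => Eventually.of_forall fun τ => ?_) hbint ?_
        · rw [Real.norm_eq_abs]
          by_cases hτ : τ ∈ Icc (0:ℝ) |h|
          · rw [indicator_of_mem hτ, abs_of_nonneg (hbnn τ)]
          · rw [indicator_of_notMem hτ]
            simpa using hbnn τ
        · filter_upwards [ae_restrict_mem measurableSet_Ici, hne] with τ hτmem hτne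
          have hτpos : 0 < τ := lt_of_le_of_ne hτmem (Ne.symm hτne)
          have habs : Tendsto (fun h : ℝ => |h|) (nhds 0) (nhds 0) := by
            simpa using (continuous_abs.tendsto (0:ℝ))
          have hev : ∀ᶠ h : ℝ in nhds 0, |h| < τ := habs.eventually_lt_const hτpos
          refine Tendsto.congr' ?_ tendsto_const_nhds
          exact hev.mono fun h hh =>
            (indicator_of_notMem (fun hc => absurd hc.2 (not_le.2 hh)) b).symm
      rw [integral_zero] at hDCT
      exact Tendsto.congr (fun h => (h0 h).symm) hDCT
    -- final squeeze
    have hst : Tendsto (fun s : ℝ => s - t) (nhdsWithin t (Icc 0 T)) (nhds 0) := by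
      have h1 : Tendsto (fun s : ℝ => s - t) (nhds t) (nhds (t - t)) :=
        (continuous_id.sub continuous_const).tendsto t
      rw [sub_self] at h1
      exact h1.mono_left nhdsWithin_le_nhds
    have hH0 : Tendsto (fun s => ∫ x in Ω, |H s x - H t x| * N x)
        (nhdsWithin t (Icc 0 T)) (nhds 0) :=
      (hHcont t ht0).mono_left (nhdsWithin_mono t fun u hu => hu.1)
    have hΦ0 : Tendsto (fun s => ∫ x in Ω, ∫ σ in Ω, ∫ τ in Ici (0:ℝ),
        N x * |A (τ + (s - t)) x σ - A τ x σ| * N σ) (nhdsWithin t (Icc 0 T)) (nhds 0) := by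
      have := hAshift_t.comp hst
      simpa [Function.comp_def] using this
    have hβ0 : Tendsto (fun s => ∫ τ in Icc 0 |s - t|, b τ)
        (nhdsWithin t (Icc 0 T)) (nhds 0) := by
      have := hbeta.comp hst
      simpa [Function.comp_def] using this
    have hG : Tendsto (fun s => (∫ x in Ω, |H s x - H t x| * N x)
        + ((∫ x in Ω, ∫ σ in Ω, ∫ τ in Ici (0:ℝ),
            N x * |A (τ + (s - t)) x σ - A τ x σ| * N σ)
          + (α * C0 * Ca) * ∫ τ in Icc 0 |s - t|, b τ))
        (nhdsWithin t (Icc 0 T)) (nhds 0) := by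
      have := hH0.add (hΦ0.add (hβ0.const_mul (α * C0 * Ca)))
      simpa using this
    refine squeeze_zero' (Eventually.of_forall fun s =>
      setIntegral_nonneg hΩ fun x _ => mul_nonneg (abs_nonneg _) (hNnn x)) ?_ hG
    exact eventually_mem_nhdsWithin.mono fun s hs => hEst s hs
  · -- the fixed point equation
    intro t ht
    filter_upwards [ae_restrict_mem hΩ] with x hx
    have := hfix t ht.1 x hx
    simpa only [hKKdef, hKindef, hFdef] using this
end

section
/- Let W : [0,∞) → Y be a nonnegative continuous solution of W(t,x) = H(t,x) + ∫_Ω ∫_0^t A(τ,x,σ)N(σ)(1 − e^{−W(t−τ,σ)}) dτ dσ such that for a.e. x the map t ↦ W(t,x) is nondecreasing, and suppose t ↦ H(t,x) is nondecreasing with pointwise limit H(∞,x) as t → ∞. Then there exists W_∞ ∈ Y with W_∞ ≥ 0 such that ‖W(t,·) − W_∞‖_Y → 0 as t → ∞, and W_∞ satisfies the limit (final size) equation W_∞(x) = H(∞,x) + ∫_Ω Θ(x,σ)N(σ)(1 − e^{−W_∞(σ)}) dσ for a.e. x, where Θ(x,σ) = ∫_0^∞ A(τ,x,σ) dτ. 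-/
open MeasureTheory Set Filter

/-- a global, monotone, nonnegative continuous solution `W` of the renewal
equation converges in `Y` to a limit `W_∞` satisfying the final size equation
`W_∞(x) = H(∞,x) + ∫_Ω Θ(x,σ) N(σ)(1 - e^{-W_∞(σ)}) dσ` with `Θ(x,σ) = ∫_0^∞ A(τ,x,σ)dτ`. -/
theorem cumulative_FOI_limit_final_size
    {n : ℕ} (Ω : Set (Fin n → ℝ)) (hΩ : MeasurableSet Ω)
    (N : (Fin n → ℝ) → ℝ) (hNmeas : Measurable N) (hNnn : ∀ x, 0 ≤ N x)
    (hNint : IntegrableOn N Ω)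
    (hNpos : ∀ᵐ x ∂(volume.restrict Ω), 0 < N x)
    (A : ℝ → (Fin n → ℝ) → (Fin n → ℝ) → ℝ)
    (hAmeas : Measurable (fun p : ℝ × (Fin n → ℝ) × (Fin n → ℝ) => A p.1 p.2.1 p.2.2))
    (hAnn : ∀ τ x σ, 0 ≤ A τ x σ)
    -- Assumption 1(1)
    (α : ℝ) (hα : 1 < α)
    (a : (Fin n → ℝ) → ℝ) (b : ℝ → ℝ) (c : (Fin n → ℝ) → ℝ)
    (hameas : Measurable a) (hbmeas : Measurable b) (hcmeas : Measurable c)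
    (hann : ∀ x, 0 ≤ a x) (hbnn : ∀ τ, 0 ≤ b τ) (hcnn : ∀ σ, 0 ≤ c σ)
    (haN : IntegrableOn (fun x => a x * N x) Ω)
    (hbint : IntegrableOn b (Ici 0))
    (hcN : IntegrableOn (fun x => c x * N x) Ω)
    (hc2N : IntegrableOn (fun x => c x ^ 2 * N x) Ω)
    (hAbound : ∀ τ ∈ Ici (0:ℝ), ∀ x ∈ Ω, ∀ σ ∈ Ω,
      a x * b τ * c σ ≤ A τ x σ ∧ A τ x σ ≤ α * (a x * b τ * c σ))
    (H : ℝ → (Fin n → ℝ) → ℝ) (Q : ℝ → ℝ)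
    (hHmeas : Measurable (Function.uncurry H))
    (hQcont : ContinuousOn Q (Ici 0)) (hQbdd : ∃ M, ∀ t ∈ Ici (0:ℝ), Q t ≤ M)
    (hQnn : ∀ t, 0 ≤ Q t)
    (hHbound : ∀ t ∈ Ici (0:ℝ), ∀ x ∈ Ω, a x * Q t ≤ H t x ∧ H t x ≤ α * (a x * Q t))
    -- H is nondecreasing in time with pointwise limit H∞
    (Hinf : (Fin n → ℝ) → ℝ)
    (hHmono : ∀ x, MonotoneOn (fun t => H t x) (Ici 0))
    (hHlim : ∀ x, Tendsto (fun t => H t x) atTop (nhds (Hinf x)))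
    -- W is a global nonnegative continuous solution, monotone in time
    (W : ℝ → (Fin n → ℝ) → ℝ)
    (hWmeas : Measurable (Function.uncurry W))
    (hWY : ∀ t ∈ Ici (0:ℝ), IntegrableOn (fun x => W t x * N x) Ω)
    (hWnn : ∀ t ∈ Ici (0:ℝ), ∀ᵐ x ∂(volume.restrict Ω), 0 ≤ W t x)
    (hWcont : ∀ t ∈ Ici (0:ℝ), Tendsto (fun s => ∫ x in Ω, |W s x - W t x| * N x)
      (nhdsWithin t (Ici 0)) (nhds 0))
    (hWmono : ∀ᵐ x ∂(volume.restrict Ω),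
      ∀ s t : ℝ, 0 ≤ s → s ≤ t → W s x ≤ W t x)
    (hWfix : ∀ t ∈ Ici (0:ℝ), ∀ᵐ x ∂(volume.restrict Ω),
      W t x = H t x +
        ∫ σ in Ω, ∫ τ in Icc (0:ℝ) t, A τ x σ * N σ * (1 - Real.exp (-(W (t - τ) σ)))) :
    ∃ Winf : (Fin n → ℝ) → ℝ,
      IntegrableOn (fun x => Winf x * N x) Ω ∧
      (∀ᵐ x ∂(volume.restrict Ω), 0 ≤ Winf x) ∧
      Tendsto (fun t => ∫ x in Ω, |W t x - Winf x| * N x) atTop (nhds 0) ∧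
      (∀ᵐ x ∂(volume.restrict Ω),
        Winf x = Hinf x +
          ∫ σ in Ω, (∫ τ in Ici (0:ℝ), A τ x σ) * N σ * (1 - Real.exp (-(Winf σ)))) := by
  
  classical
  have hαpos : (0:ℝ) < α := lt_trans one_pos hα
  obtain ⟨M₀, hM₀⟩ := hQbdd
  set M : ℝ := max M₀ 0 with hM
  have hMnn : 0 ≤ M := le_max_right _ _
  have hQM : ∀ t : ℝ, 0 ≤ t → Q t ≤ M := fun t ht => (hM₀ t ht).trans (le_max_left _ _)
  set L' : ℝ := ∫ τ in Ici (0:ℝ), b τ with hL'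
  set Cc : ℝ := ∫ σ in Ω, c σ * N σ with hCc
  have hL'nn : 0 ≤ L' := setIntegral_nonneg measurableSet_Ici fun τ _ => hbnn τ
  have hCcnn : 0 ≤ Cc := setIntegral_nonneg hΩ fun σ _ => mul_nonneg (hcnn σ) (hNnn σ)
  set C : ℝ := α * (M + L' * Cc) with hC
  -- basic a.e. facts
  have hmem : ∀ᵐ x ∂(volume.restrict Ω), x ∈ Ω := ae_restrict_mem hΩ
  have hnn : ∀ᵐ σ ∂(volume.restrict Ω), ∀ s : ℝ, 0 ≤ s → 0 ≤ W s σ := by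
    filter_upwards [hWmono, hWnn 0 self_mem_Ici] with σ hm h0 s hs
    exact h0.trans (hm 0 s le_rfl hs)
  -- section measurability of W
  have hWt : ∀ t : ℝ, Measurable fun x => W t x := fun t => hWmeas.comp measurable_prodMk_left
  -- key inner bound
  have key_inner : ∀ t : ℝ, 0 ≤ t → ∀ x ∈ Ω, ∀ σ, σ ∈ Ω → (∀ s : ℝ, 0 ≤ s → 0 ≤ W s σ) →
      0 ≤ (∫ τ in Icc (0:ℝ) t, A τ x σ * N σ * (1 - Real.exp (-(W (t - τ) σ)))) ∧
      (∫ τ in Icc (0:ℝ) t, A τ x σ * N σ * (1 - Real.exp (-(W (t - τ) σ))))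
        ≤ (α * a x * L') * (c σ * N σ) := by
    intro t ht x hx σ hσ hσW
    have hb_int : IntegrableOn (fun τ => (α * a x * (c σ * N σ)) * b τ) (Icc 0 t) :=
      (hbint.mono_set Icc_subset_Ici_self).const_mul _
    have hnonneg : ∀ τ ∈ Icc (0:ℝ) t,
        0 ≤ A τ x σ * N σ * (1 - Real.exp (-(W (t - τ) σ))) := by
      intro τ hτ
      have hw : 0 ≤ W (t - τ) σ := hσW _ (by linarith [hτ.1, hτ.2])
      have h1 : Real.exp (-(W (t - τ) σ)) ≤ 1 := by
        have := Real.exp_le_exp.mpr (neg_nonpos.mpr hw)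
        simpa using this
      have := mul_nonneg (hAnn τ x σ) (hNnn σ)
      nlinarith
    have hle : ∀ τ ∈ Icc (0:ℝ) t,
        A τ x σ * N σ * (1 - Real.exp (-(W (t - τ) σ)))
          ≤ (α * a x * (c σ * N σ)) * b τ := by
      intro τ hτ
      have hA := (hAbound τ hτ.1 x hx σ hσ).2
      have hAN : A τ x σ * N σ * (1 - Real.exp (-(W (t - τ) σ))) ≤ A τ x σ * N σ := by
        have h0 := mul_nonneg (hAnn τ x σ) (hNnn σ)
        nlinarith [Real.exp_nonneg (-(W (t - τ) σ))]
      calc A τ x σ * N σ * (1 - Real.exp (-(W (t - τ) σ))) ≤ A τ x σ * N σ := hAN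
        _ ≤ (α * (a x * b τ * c σ)) * N σ := mul_le_mul_of_nonneg_right hA (hNnn σ)
        _ = (α * a x * (c σ * N σ)) * b τ := by ring
    constructor
    · exact setIntegral_nonneg measurableSet_Icc hnonneg
    · calc (∫ τ in Icc (0:ℝ) t, A τ x σ * N σ * (1 - Real.exp (-(W (t - τ) σ))))
          ≤ ∫ τ in Icc (0:ℝ) t, (α * a x * (c σ * N σ)) * b τ := by
            refine integral_mono_of_nonneg ?_ hb_int ?_
            · filter_upwards [ae_restrict_mem measurableSet_Icc] with τ hτ
              exact hnonneg τ hτ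
            · filter_upwards [ae_restrict_mem measurableSet_Icc] with τ hτ
              exact hle τ hτ
        _ = (α * a x * (c σ * N σ)) * ∫ τ in Icc (0:ℝ) t, b τ := integral_const_mul _ _
        _ ≤ (α * a x * (c σ * N σ)) * L' := by
            refine mul_le_mul_of_nonneg_left ?_ ?_
            · exact setIntegral_mono_set hbint
                (Filter.Eventually.of_forall fun τ => hbnn τ)
                (HasSubset.Subset.eventuallyLE Icc_subset_Ici_self)
            · exact mul_nonneg (mul_nonneg hαpos.le (hann x))
                (mul_nonneg (hcnn σ) (hNnn σ))
        _ = (α * a x * L') * (c σ * N σ) := by ring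
  -- per-time bound
  have hbd_t : ∀ t : ℝ, 0 ≤ t → ∀ᵐ x ∂(volume.restrict Ω), W t x ≤ C * a x := by
    intro t ht
    filter_upwards [hmem, hWfix t ht] with x hx hfx
    have hkey : ∀ᵐ σ ∂(volume.restrict Ω),
        0 ≤ (∫ τ in Icc (0:ℝ) t, A τ x σ * N σ * (1 - Real.exp (-(W (t - τ) σ)))) ∧
        (∫ τ in Icc (0:ℝ) t, A τ x σ * N σ * (1 - Real.exp (-(W (t - τ) σ))))
          ≤ (α * a x * L') * (c σ * N σ) := by
      filter_upwards [hmem, hnn] with σ hσ hσn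
      exact key_inner t ht x hx σ hσ hσn
    have hD : (∫ σ in Ω, ∫ τ in Icc (0:ℝ) t, A τ x σ * N σ * (1 - Real.exp (-(W (t - τ) σ))))
        ≤ (α * a x * L') * Cc := by
      calc (∫ σ in Ω, ∫ τ in Icc (0:ℝ) t, A τ x σ * N σ * (1 - Real.exp (-(W (t - τ) σ))))
          ≤ ∫ σ in Ω, (α * a x * L') * (c σ * N σ) := by
            refine integral_mono_of_nonneg ?_ (hcN.const_mul _) ?_
            · filter_upwards [hkey] with σ h; exact h.1
            · filter_upwards [hkey] with σ h; exact h.2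
        _ = (α * a x * L') * Cc := integral_const_mul _ _
    have hH : H t x ≤ α * (a x * M) := by
      have h1 := (hHbound t ht x hx).2
      have h2 := hQM t ht
      have h3 : a x * Q t ≤ a x * M := mul_le_mul_of_nonneg_left h2 (hann x)
      have h4 : α * (a x * Q t) ≤ α * (a x * M) := mul_le_mul_of_nonneg_left h3 hαpos.le
      linarith
    have hCeq : α * (a x * M) + (α * a x * L') * Cc = C * a x := by rw [hC]; ring
    linarith [hfx, hD, hH]
  have hbdAll : ∀ᵐ x ∂(volume.restrict Ω), ∀ t : ℝ, 0 ≤ t → W t x ≤ C * a x := by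
    have hnat : ∀ᵐ x ∂(volume.restrict Ω), ∀ m : ℕ, W (m:ℝ) x ≤ C * a x :=
      ae_all_iff.2 fun m => hbd_t (m:ℝ) (Nat.cast_nonneg m)
    filter_upwards [hnat, hWmono] with x hn hm t ht
    exact (hm t (⌈t⌉₊:ℝ) ht (Nat.le_ceil t)).trans (hn ⌈t⌉₊)
  -- definition of Winf
  set Winf : (Fin n → ℝ) → ℝ := fun x => ⨆ m : ℕ, W (m:ℝ) x with hWinfdef
  have hgood : ∀ᵐ x ∂(volume.restrict Ω),
      BddAbove (range fun m : ℕ => W (m:ℝ) x) ∧ Monotone (fun m : ℕ => W (m:ℝ) x) := by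
    filter_upwards [hbdAll, hWmono] with x hb hm
    refine ⟨⟨C * a x, ?_⟩, ?_⟩
    · rintro y ⟨m, rfl⟩; exact hb (m:ℝ) (Nat.cast_nonneg m)
    · intro i j hij; exact hm (i:ℝ) (j:ℝ) (Nat.cast_nonneg i) (Nat.cast_le.2 hij)
  have hconvN : ∀ᵐ x ∂(volume.restrict Ω),
      Tendsto (fun m : ℕ => W (m:ℝ) x) atTop (nhds (Winf x)) := by
    filter_upwards [hgood] with x hx
    exact tendsto_atTop_ciSup hx.2 hx.1
  have hleW : ∀ᵐ x ∂(volume.restrict Ω), ∀ t : ℝ, 0 ≤ t → W t x ≤ Winf x := by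
    filter_upwards [hgood, hWmono] with x hx hm t ht
    exact (hm t (⌈t⌉₊:ℝ) ht (Nat.le_ceil t)).trans (le_ciSup hx.1 ⌈t⌉₊)
  have hWinfnn : ∀ᵐ x ∂(volume.restrict Ω), 0 ≤ Winf x := by
    filter_upwards [hleW, hnn] with x hlx hnx
    exact (hnx 0 le_rfl).trans (hlx 0 le_rfl)
  have hWinfle : ∀ᵐ x ∂(volume.restrict Ω), Winf x ≤ C * a x := by
    filter_upwards [hgood, hbdAll] with x hx hb
    exact ciSup_le fun m => hb (m:ℝ) (Nat.cast_nonneg m)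
  have hconvR : ∀ᵐ x ∂(volume.restrict Ω),
      Tendsto (fun t : ℝ => W t x) atTop (nhds (Winf x)) := by
    filter_upwards [hconvN, hleW, hWmono] with x hcx hlx hm
    refine tendsto_of_tendsto_of_tendsto_of_le_of_le'
      (hcx.comp tendsto_nat_floor_atTop) tendsto_const_nhds ?_ ?_
    · filter_upwards [eventually_ge_atTop (0:ℝ)] with t ht
      exact hm (⌊t⌋₊:ℝ) t (Nat.cast_nonneg _) (Nat.floor_le ht)
    · filter_upwards [eventually_ge_atTop (0:ℝ)] with t ht
      exact hlx t ht
  -- integrability of Winf * N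
  have hWinf_aesm : AEStronglyMeasurable Winf (volume.restrict Ω) :=
    aestronglyMeasurable_of_tendsto_ae atTop
      (fun m : ℕ => (hWt (m:ℝ)).aestronglyMeasurable) hconvN
  have hWinfN_int : Integrable (fun x => Winf x * N x) (volume.restrict Ω) := by
    refine Integrable.mono' (haN.const_mul C) (hWinf_aesm.mul hNmeas.aestronglyMeasurable) ?_
    filter_upwards [hWinfnn, hWinfle] with x h0 h1
    rw [Real.norm_eq_abs, abs_of_nonneg (mul_nonneg h0 (hNnn x))]
    calc Winf x * N x ≤ (C * a x) * N x := mul_le_mul_of_nonneg_right h1 (hNnn x)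
      _ = C * (a x * N x) := by ring
  -- Step B: Y-convergence
  have hdiff_int : ∀ m : ℕ, Integrable (fun x => (Winf x - W (m:ℝ) x) * N x) (volume.restrict Ω) := by
    intro m
    have := hWinfN_int.sub (hWY (m:ℝ) (mem_Ici.mpr (Nat.cast_nonneg m)))
    simpa [sub_mul, Pi.sub_def] using this
  have hG : Tendsto (fun m : ℕ => ∫ x in Ω, (Winf x - W (m:ℝ) x) * N x) atTop (nhds 0) := by
    have h := tendsto_integral_of_dominated_convergence (μ := volume.restrict Ω)
      (F := fun m x => (Winf x - W (m:ℝ) x) * N x) (f := fun _ => (0:ℝ))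
      (fun x => C * (a x * N x))
      (fun m => (hdiff_int m).aestronglyMeasurable)
      (haN.const_mul C) ?_ ?_
    · simpa using h
    · intro m
      filter_upwards [hWinfnn, hWinfle, hnn, hleW] with x h0 h1 hn hl
      rw [Real.norm_eq_abs, abs_of_nonneg (mul_nonneg
        (sub_nonneg.2 (hl (m:ℝ) (Nat.cast_nonneg m))) (hNnn x))]
      have hle2 : Winf x - W (m:ℝ) x ≤ C * a x := by
        have := hn (m:ℝ) (Nat.cast_nonneg m); linarith
      calc (Winf x - W (m:ℝ) x) * N x ≤ (C * a x) * N x :=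
            mul_le_mul_of_nonneg_right hle2 (hNnn x)
        _ = C * (a x * N x) := by ring
    · filter_upwards [hconvN] with x hx
      have : Tendsto (fun m : ℕ => (Winf x - W (m:ℝ) x) * N x) atTop
          (nhds ((Winf x - Winf x) * N x)) :=
        (tendsto_const_nhds.sub hx).mul_const (N x)
      simpa using this
  have hYconv : Tendsto (fun t : ℝ => ∫ x in Ω, |W t x - Winf x| * N x) atTop (nhds 0) := by
    refine tendsto_of_tendsto_of_tendsto_of_le_of_le' tendsto_const_nhds
      (hG.comp tendsto_nat_floor_atTop) ?_ ?_
    · exact Filter.Eventually.of_forall fun t =>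
        setIntegral_nonneg hΩ fun x _ => mul_nonneg (abs_nonneg _) (hNnn x)
    · filter_upwards [eventually_ge_atTop (0:ℝ)] with t ht
      refine integral_mono_of_nonneg ?_ (hdiff_int ⌊t⌋₊) ?_
      · exact Filter.Eventually.of_forall fun x => mul_nonneg (abs_nonneg _) (hNnn x)
      · filter_upwards [hleW, hWmono] with x hl hm
        have h1 : W t x ≤ Winf x := hl t ht
        have h2 : W ((⌊t⌋₊:ℕ):ℝ) x ≤ W t x := hm _ t (Nat.cast_nonneg _) (Nat.floor_le ht)
        rw [abs_sub_comm, abs_of_nonneg (sub_nonneg.2 h1)]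
        exact mul_le_mul_of_nonneg_right (by linarith) (hNnn x)
  -- Step C: pass to the limit in the fixed point equation
  have hθconv : ∀ᵐ x ∂(volume.restrict Ω),
      Tendsto (fun m : ℕ => ∫ σ in Ω, ∫ τ in Icc (0:ℝ) (m:ℝ),
          A τ x σ * N σ * (1 - Real.exp (-(W ((m:ℝ) - τ) σ)))) atTop
        (nhds (∫ σ in Ω, (∫ τ in Ici (0:ℝ), A τ x σ) * N σ * (1 - Real.exp (-(Winf σ))))) := by
    filter_upwards [hmem] with x hx
    refine tendsto_integral_of_dominated_convergence
      (fun σ => (α * a x * L') * (c σ * N σ)) ?_ (hcN.const_mul _) ?_ ?_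
    · intro m
      have hA2 : Measurable fun p : (Fin n → ℝ) × ℝ => A p.2 x p.1 :=
        hAmeas.comp (measurable_snd.prodMk (measurable_const.prodMk measurable_fst))
      have hN2 : Measurable fun p : (Fin n → ℝ) × ℝ => N p.1 := hNmeas.comp measurable_fst
      have hW2 : Measurable fun p : (Fin n → ℝ) × ℝ => W ((m:ℝ) - p.2) p.1 :=
        hWmeas.comp ((measurable_const.sub measurable_snd).prodMk measurable_fst)
      have hg : Measurable fun p : (Fin n → ℝ) × ℝ =>
          A p.2 x p.1 * N p.1 * (1 - Real.exp (-(W ((m:ℝ) - p.2) p.1))) :=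
        (hA2.mul hN2).mul (measurable_const.sub (Real.measurable_exp.comp hW2.neg))
      exact (hg.stronglyMeasurable.integral_prod_right').aestronglyMeasurable
    · intro m
      filter_upwards [hmem, hnn] with σ hσ hσn
      have hk := key_inner (m:ℝ) (Nat.cast_nonneg m) x hx σ hσ hσn
      rw [Real.norm_eq_abs, abs_of_nonneg hk.1]
      exact hk.2
    · filter_upwards [hmem, hnn, hconvR] with σ hσ hσn hσc
      have hrw : ∀ m : ℕ, (∫ τ in Icc (0:ℝ) (m:ℝ),
            A τ x σ * N σ * (1 - Real.exp (-(W ((m:ℝ) - τ) σ))))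
          = ∫ τ in Ici (0:ℝ), (Iic ((m:ℝ))).indicator
              (fun τ => A τ x σ * N σ * (1 - Real.exp (-(W ((m:ℝ) - τ) σ)))) τ := by
        intro m
        rw [setIntegral_indicator measurableSet_Iic, Ici_inter_Iic]
      have htarget : (∫ τ in Ici (0:ℝ), A τ x σ * N σ * (1 - Real.exp (-(Winf σ))))
          = (∫ τ in Ici (0:ℝ), A τ x σ) * N σ * (1 - Real.exp (-(Winf σ))) := by
        calc (∫ τ in Ici (0:ℝ), A τ x σ * N σ * (1 - Real.exp (-(Winf σ))))
            = ∫ τ in Ici (0:ℝ), A τ x σ * (N σ * (1 - Real.exp (-(Winf σ)))) := by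
              simp_rw [mul_assoc]
          _ = (∫ τ in Ici (0:ℝ), A τ x σ) * (N σ * (1 - Real.exp (-(Winf σ)))) :=
              integral_mul_const _ _
          _ = (∫ τ in Ici (0:ℝ), A τ x σ) * N σ * (1 - Real.exp (-(Winf σ))) := by ring
      rw [← htarget]
      refine Tendsto.congr (fun m => (hrw m).symm) ?_
      refine tendsto_integral_of_dominated_convergence
        (fun τ => (α * a x * (c σ * N σ)) * b τ) ?_ (hbint.const_mul _) ?_ ?_
      · intro m
        have hA1 : Measurable fun τ : ℝ => A τ x σ :=
          hAmeas.comp (measurable_id.prodMk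
            (measurable_const : Measurable fun _ : ℝ => ((x, σ) : (Fin n → ℝ) × (Fin n → ℝ))))
        have hW1 : Measurable fun τ : ℝ => W ((m:ℝ) - τ) σ :=
          hWmeas.comp ((measurable_const.sub measurable_id).prodMk measurable_const)
        exact (((hA1.mul measurable_const).mul
          (measurable_const.sub (Real.measurable_exp.comp hW1.neg))).indicator
            measurableSet_Iic).aestronglyMeasurable
      · intro m
        filter_upwards [ae_restrict_mem measurableSet_Ici] with τ hτ
        by_cases hτm : τ ∈ Iic ((m:ℝ))
        · rw [indicator_of_mem hτm]
          have hw : 0 ≤ W ((m:ℝ) - τ) σ := hσn _ (sub_nonneg.2 hτm)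
          have h1 : Real.exp (-(W ((m:ℝ) - τ) σ)) ≤ 1 := by
            have := Real.exp_le_exp.mpr (neg_nonpos.mpr hw); simpa using this
          have hA := (hAbound τ hτ x hx σ hσ).2
          have h0 : 0 ≤ A τ x σ * N σ * (1 - Real.exp (-(W ((m:ℝ) - τ) σ))) := by
            have := mul_nonneg (hAnn τ x σ) (hNnn σ); nlinarith
          rw [Real.norm_eq_abs, abs_of_nonneg h0]
          have hAN : A τ x σ * N σ * (1 - Real.exp (-(W ((m:ℝ) - τ) σ))) ≤ A τ x σ * N σ := by
            have h0' := mul_nonneg (hAnn τ x σ) (hNnn σ)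
            nlinarith [Real.exp_nonneg (-(W ((m:ℝ) - τ) σ))]
          calc A τ x σ * N σ * (1 - Real.exp (-(W ((m:ℝ) - τ) σ))) ≤ A τ x σ * N σ := hAN
            _ ≤ (α * (a x * b τ * c σ)) * N σ := mul_le_mul_of_nonneg_right hA (hNnn σ)
            _ = (α * a x * (c σ * N σ)) * b τ := by ring
        · rw [indicator_of_notMem hτm]
          simp only [norm_zero]
          exact mul_nonneg (mul_nonneg (mul_nonneg hαpos.le (hann x))
            (mul_nonneg (hcnn σ) (hNnn σ))) (hbnn τ)
      · filter_upwards [ae_restrict_mem measurableSet_Ici] with τ hτ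
        have hev : ∀ᶠ m : ℕ in atTop, (Iic ((m:ℝ))).indicator
            (fun τ => A τ x σ * N σ * (1 - Real.exp (-(W ((m:ℝ) - τ) σ)))) τ
            = A τ x σ * N σ * (1 - Real.exp (-(W ((m:ℝ) - τ) σ))) := by
          filter_upwards [eventually_ge_atTop ⌈τ⌉₊] with m hm
          exact indicator_of_mem (mem_Iic.2 ((Nat.le_ceil τ).trans (Nat.cast_le.2 hm))) _
        have hmt : Tendsto (fun m : ℕ => (m:ℝ) - τ) atTop atTop := by
          simpa [sub_eq_add_neg] using
            tendsto_atTop_add_const_right atTop (-τ) tendsto_natCast_atTop_atTop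
        have hWc : Tendsto (fun m : ℕ => W ((m:ℝ) - τ) σ) atTop (nhds (Winf σ)) :=
          hσc.comp hmt
        have hEc : Tendsto (fun m : ℕ => Real.exp (-(W ((m:ℝ) - τ) σ))) atTop
            (nhds (Real.exp (-(Winf σ)))) :=
          (Real.continuous_exp.continuousAt.tendsto).comp hWc.neg
        have hfin := (hEc.const_sub 1).const_mul (A τ x σ * N σ)
        exact Tendsto.congr' (by filter_upwards [hev] with m hm; rw [hm]) hfin
  have hfixN : ∀ᵐ x ∂(volume.restrict Ω), ∀ m : ℕ,
      W (m:ℝ) x = H (m:ℝ) x + ∫ σ in Ω, ∫ τ in Icc (0:ℝ) (m:ℝ),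
        A τ x σ * N σ * (1 - Real.exp (-(W ((m:ℝ) - τ) σ))) :=
    ae_all_iff.2 fun m => hWfix (m:ℝ) (mem_Ici.mpr (Nat.cast_nonneg m))
  have hfinal : ∀ᵐ x ∂(volume.restrict Ω),
      Winf x = Hinf x + ∫ σ in Ω, (∫ τ in Ici (0:ℝ), A τ x σ) * N σ *
        (1 - Real.exp (-(Winf σ))) := by
    filter_upwards [hfixN, hconvN, hθconv] with x hfx hcx hθx
    have h2 : Tendsto (fun m : ℕ => H (m:ℝ) x + ∫ σ in Ω, ∫ τ in Icc (0:ℝ) (m:ℝ),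
        A τ x σ * N σ * (1 - Real.exp (-(W ((m:ℝ) - τ) σ)))) atTop
        (nhds (Hinf x + ∫ σ in Ω, (∫ τ in Ici (0:ℝ), A τ x σ) * N σ *
          (1 - Real.exp (-(Winf σ))))) :=
      ((hHlim x).comp tendsto_natCast_atTop_atTop).add hθx
    exact tendsto_nhds_unique (hcx.congr fun m => hfx m) h2
  exact ⟨Winf, hWinfN_int, hWinfnn, hYconv, hfinal⟩
end

section
/- Let Ω = [0,∞). Under Assumptions 1(1) and 2, the next generation operator T, defined by (Tφ)(x) = N(x)∫_Ω Θ(x,σ)φ(σ) dσ with Θ(x,σ) = ∫_0^∞ A(τ,x,σ) dτ, is a well-defined bounded linear operator on L¹(Ω) and is a compact operator (the image of every bounded subset of L¹(Ω) has compact closure). -/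
open MeasureTheory Set Filter
open scoped ENNReal

noncomputable section NGOaux

/-- The base measure: Lebesgue on `[0,∞)`. -/
abbrev ngoMeas : Measure ℝ := volume.restrict (Ici (0:ℝ))

/-- The kernel integral operation on functions. -/
def kfun (K : ℝ → ℝ → ℝ) (f : ℝ → ℝ) : ℝ → ℝ := fun x => ∫ σ, K x σ * f σ ∂ngoMeas

/-- The next-generation kernel. -/
def Kker (N : ℝ → ℝ) (A : ℝ → ℝ → ℝ → ℝ) : ℝ → ℝ → ℝ :=
  fun x σ => N x * ∫ τ in Ici (0:ℝ), A τ x σ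

/-- Cells of the discretization grid. -/
def cellI (δ : ℝ) (j : ℕ) : Set ℝ := Ico ((j:ℝ)*δ) ((j:ℝ)*δ + δ)

/-- Piecewise-averaged kernel. -/
def Kapprox (K : ℝ → ℝ → ℝ) (δ : ℝ) (m : ℕ) : ℝ → ℝ → ℝ := fun x σ =>
  ∑ j ∈ Finset.range m, (cellI δ j).indicator (fun _ => δ⁻¹ * ∫ y in cellI δ j, K y σ) x

lemma kfun_aesm (K : ℝ → ℝ → ℝ) (hK : Measurable fun p : ℝ × ℝ => K p.1 p.2)
    {f : ℝ → ℝ} (hf : AEStronglyMeasurable f ngoMeas) :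
    AEStronglyMeasurable (kfun K f) ngoMeas := by
  have h1 : AEStronglyMeasurable (fun p : ℝ × ℝ => K p.1 p.2 * f p.2) (ngoMeas.prod ngoMeas) :=
    hK.aestronglyMeasurable.mul hf.comp_snd
  exact h1.integral_prod_right'

lemma kfun_lintegral_le (K : ℝ → ℝ → ℝ) (hK : Measurable fun p : ℝ × ℝ => K p.1 p.2)
    {f : ℝ → ℝ} (hf : AEStronglyMeasurable f ngoMeas) {C : ℝ≥0∞} (hC' : C ≠ ⊤)
    (hC : ∀ σ ∈ Ici (0:ℝ), (∫⁻ x in Ici (0:ℝ), (‖K x σ‖₊ : ℝ≥0∞)) ≤ C) :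
    ∫⁻ x, (‖kfun K f x‖₊ : ℝ≥0∞) ∂ngoMeas ≤ C * ∫⁻ σ, (‖f σ‖₊ : ℝ≥0∞) ∂ngoMeas := by
  have hmm : AEMeasurable (fun p : ℝ × ℝ => ((‖K p.1 p.2 * f p.2‖₊ : ℝ≥0∞)))
      (ngoMeas.prod ngoMeas) := (hK.aestronglyMeasurable.mul hf.comp_snd).enorm
  calc ∫⁻ x, (‖kfun K f x‖₊ : ℝ≥0∞) ∂ngoMeas
      ≤ ∫⁻ x, ∫⁻ σ, (‖K x σ * f σ‖₊ : ℝ≥0∞) ∂ngoMeas ∂ngoMeas :=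
        lintegral_mono fun x => enorm_integral_le_lintegral_enorm _
    _ = ∫⁻ σ, ∫⁻ x, (‖K x σ * f σ‖₊ : ℝ≥0∞) ∂ngoMeas ∂ngoMeas :=
        lintegral_lintegral_swap hmm
    _ ≤ ∫⁻ σ, C * (‖f σ‖₊ : ℝ≥0∞) ∂ngoMeas := by
        refine lintegral_mono_ae ?_
        filter_upwards [ae_restrict_mem measurableSet_Ici] with σ hσ
        have h1 : ∫⁻ x, (‖K x σ * f σ‖₊ : ℝ≥0∞) ∂ngoMeas
            = (∫⁻ x, (‖K x σ‖₊ : ℝ≥0∞) ∂ngoMeas) * (‖f σ‖₊ : ℝ≥0∞) := by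
          simp_rw [nnnorm_mul, ENNReal.coe_mul]
          exact lintegral_mul_const _
            ((hK.comp (measurable_prodMk_right (y := σ))).nnnorm.coe_nnreal_ennreal)
        rw [h1]
        exact mul_le_mul_left (hC σ hσ) _
    _ = C * ∫⁻ σ, (‖f σ‖₊ : ℝ≥0∞) ∂ngoMeas := lintegral_const_mul' _ _ hC' 

lemma section_integrable (K : ℝ → ℝ → ℝ) (hK : Measurable fun p : ℝ × ℝ => K p.1 p.2)
    {x : ℝ} {B : ℝ} (hB : ∀ σ ∈ Ici (0:ℝ), |K x σ| ≤ B)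
    {f : ℝ → ℝ} (hf : Integrable f ngoMeas) :
    Integrable (fun σ => K x σ * f σ) ngoMeas := by
  have hm : AEStronglyMeasurable (fun σ => K x σ * f σ) ngoMeas :=
    ((hK.comp (measurable_prodMk_left (x := x))).aestronglyMeasurable).mul hf.1
  refine Integrable.mono' (hf.norm.const_mul B) hm ?_
  filter_upwards [ae_restrict_mem measurableSet_Ici] with σ hσ
  rw [norm_mul]
  exact mul_le_mul_of_nonneg_right (by rw [Real.norm_eq_abs]; exact hB σ hσ) (norm_nonneg _)

lemma kfun_memLp (K : ℝ → ℝ → ℝ) (hK : Measurable fun p : ℝ × ℝ => K p.1 p.2) {C : ℝ}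
    (hC : ∀ σ ∈ Ici (0:ℝ), (∫⁻ x in Ici (0:ℝ), (‖K x σ‖₊ : ℝ≥0∞)) ≤ ENNReal.ofReal C)
    (φ : Lp ℝ 1 ngoMeas) : MemLp (kfun K ⇑φ) 1 ngoMeas := by
  constructor
  · exact kfun_aesm K hK (Lp.aestronglyMeasurable φ)
  · rw [eLpNorm_one_eq_lintegral_enorm]
    calc ∫⁻ x, (‖kfun K ⇑φ x‖₊ : ℝ≥0∞) ∂ngoMeas
        ≤ ENNReal.ofReal C * ∫⁻ σ, (‖φ σ‖₊ : ℝ≥0∞) ∂ngoMeas :=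
          kfun_lintegral_le K hK (Lp.aestronglyMeasurable φ) ENNReal.ofReal_ne_top hC
      _ < ⊤ := by
          refine ENNReal.mul_lt_top ENNReal.ofReal_lt_top ?_
          simp only [← enorm_eq_nnnorm, ← eLpNorm_one_eq_lintegral_enorm]
          exact Lp.eLpNorm_lt_top φ

/-- The kernel operator as a continuous linear map on `L¹`. -/
def kernelOp (K : ℝ → ℝ → ℝ) (hK : Measurable fun p : ℝ × ℝ => K p.1 p.2) (C : ℝ) (hC0 : 0 ≤ C)
    (hC : ∀ σ ∈ Ici (0:ℝ), (∫⁻ x in Ici (0:ℝ), (‖K x σ‖₊ : ℝ≥0∞)) ≤ ENNReal.ofReal C)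
    (hbdd : ∀ x ∈ Ici (0:ℝ), ∃ B, ∀ σ ∈ Ici (0:ℝ), |K x σ| ≤ B) :
    Lp ℝ 1 ngoMeas →L[ℝ] Lp ℝ 1 ngoMeas :=
  LinearMap.mkContinuous
    { toFun := fun φ => (kfun_memLp K hK hC φ).toLp (kfun K ⇑φ)
      map_add' := by
        intro φ ψ
        rw [← MemLp.toLp_add]
        apply MemLp.toLp_congr
        filter_upwards [ae_restrict_mem measurableSet_Ici] with x hx
        obtain ⟨B, hB⟩ := hbdd x hx
        have h1 : Integrable (fun σ => K x σ * φ σ) ngoMeas :=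
          section_integrable K hK hB (L1.integrable_coeFn φ)
        have h2 : Integrable (fun σ => K x σ * ψ σ) ngoMeas :=
          section_integrable K hK hB (L1.integrable_coeFn ψ)
        have hcoe : ⇑(φ + ψ) =ᵐ[ngoMeas] ⇑φ + ⇑ψ := Lp.coeFn_add φ ψ
        show kfun K ⇑(φ + ψ) x = kfun K ⇑φ x + kfun K ⇑ψ x
        calc kfun K ⇑(φ + ψ) x = ∫ σ, (K x σ * φ σ + K x σ * ψ σ) ∂ngoMeas := by
              refine integral_congr_ae ?_
              filter_upwards [hcoe] with σ hσ
              rw [hσ]; simp [mul_add]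
          _ = kfun K ⇑φ x + kfun K ⇑ψ x := integral_add h1 h2
      map_smul' := by
        intro r φ
        simp only [RingHom.id_apply]
        rw [← MemLp.toLp_const_smul]
        apply MemLp.toLp_congr
        have hcoe : ⇑(r • φ) =ᵐ[ngoMeas] r • ⇑φ := Lp.coeFn_smul r φ
        filter_upwards [] with x
        show kfun K ⇑(r • φ) x = (r • kfun K ⇑φ) x
        calc kfun K ⇑(r • φ) x = ∫ σ, r * (K x σ * φ σ) ∂ngoMeas := by
              refine integral_congr_ae ?_
              filter_upwards [hcoe] with σ hσ
              rw [hσ]; simp; ring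
          _ = (r • kfun K ⇑φ) x := by
              rw [integral_const_mul]; simp [kfun] }
    C (by
      intro φ
      simp only [LinearMap.coe_mk, AddHom.coe_mk]
      rw [Lp.norm_toLp, eLpNorm_one_eq_lintegral_enorm]
      have hb := kfun_lintegral_le K hK (Lp.aestronglyMeasurable φ) ENNReal.ofReal_ne_top hC
      have hfin : ∫⁻ σ, (‖φ σ‖₊ : ℝ≥0∞) ∂ngoMeas ≠ ⊤ := by
        simp only [← enorm_eq_nnnorm, ← eLpNorm_one_eq_lintegral_enorm]; exact (Lp.eLpNorm_lt_top φ).ne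
      calc (∫⁻ x, (‖kfun K ⇑φ x‖₊ : ℝ≥0∞) ∂ngoMeas).toReal
          ≤ (ENNReal.ofReal C * ∫⁻ σ, (‖φ σ‖₊ : ℝ≥0∞) ∂ngoMeas).toReal :=
            ENNReal.toReal_mono (ENNReal.mul_ne_top ENNReal.ofReal_ne_top hfin) hb
        _ = C * ‖φ‖ := by
            rw [ENNReal.toReal_mul, ENNReal.toReal_ofReal hC0, Lp.norm_def,
              eLpNorm_one_eq_lintegral_enorm]; rfl)

lemma kernelOp_apply (K : ℝ → ℝ → ℝ) (hK : Measurable fun p : ℝ × ℝ => K p.1 p.2) (C : ℝ)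
    (hC0 : 0 ≤ C)
    (hC : ∀ σ ∈ Ici (0:ℝ), (∫⁻ x in Ici (0:ℝ), (‖K x σ‖₊ : ℝ≥0∞)) ≤ ENNReal.ofReal C)
    (hbdd : ∀ x ∈ Ici (0:ℝ), ∃ B, ∀ σ ∈ Ici (0:ℝ), |K x σ| ≤ B) (φ : Lp ℝ 1 ngoMeas) :
    ⇑(kernelOp K hK C hC0 hC hbdd φ) =ᵐ[ngoMeas] kfun K ⇑φ := by
  simp only [kernelOp, LinearMap.mkContinuous_apply, LinearMap.coe_mk, AddHom.coe_mk]
  exact MemLp.coeFn_toLp _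

lemma kernelOp_diff_le (K₁ K₂ : ℝ → ℝ → ℝ)
    (hK₁ : Measurable fun p : ℝ × ℝ => K₁ p.1 p.2) (hK₂ : Measurable fun p : ℝ × ℝ => K₂ p.1 p.2)
    (C₁ C₂ : ℝ) (hC0₁ : 0 ≤ C₁) (hC0₂ : 0 ≤ C₂)
    (hC₁ : ∀ σ ∈ Ici (0:ℝ), (∫⁻ x in Ici (0:ℝ), (‖K₁ x σ‖₊ : ℝ≥0∞)) ≤ ENNReal.ofReal C₁)
    (hC₂ : ∀ σ ∈ Ici (0:ℝ), (∫⁻ x in Ici (0:ℝ), (‖K₂ x σ‖₊ : ℝ≥0∞)) ≤ ENNReal.ofReal C₂)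
    (hbdd₁ : ∀ x ∈ Ici (0:ℝ), ∃ B, ∀ σ ∈ Ici (0:ℝ), |K₁ x σ| ≤ B)
    (hbdd₂ : ∀ x ∈ Ici (0:ℝ), ∃ B, ∀ σ ∈ Ici (0:ℝ), |K₂ x σ| ≤ B)
    (D : ℝ) (hD0 : 0 ≤ D)
    (hD : ∀ σ ∈ Ici (0:ℝ), (∫⁻ x in Ici (0:ℝ), (‖K₁ x σ - K₂ x σ‖₊ : ℝ≥0∞)) ≤ ENNReal.ofReal D) :
    ‖kernelOp K₁ hK₁ C₁ hC0₁ hC₁ hbdd₁ - kernelOp K₂ hK₂ C₂ hC0₂ hC₂ hbdd₂‖ ≤ D := by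
  set T₁ := kernelOp K₁ hK₁ C₁ hC0₁ hC₁ hbdd₁
  set T₂ := kernelOp K₂ hK₂ C₂ hC0₂ hC₂ hbdd₂
  refine ContinuousLinearMap.opNorm_le_bound _ hD0 ?_
  intro φ
  have he : ⇑((T₁ - T₂) φ) =ᵐ[ngoMeas] kfun (fun x σ => K₁ x σ - K₂ x σ) ⇑φ := by
    have e1 := kernelOp_apply K₁ hK₁ C₁ hC0₁ hC₁ hbdd₁ φ
    have e2 := kernelOp_apply K₂ hK₂ C₂ hC0₂ hC₂ hbdd₂ φ
    have e3 : ⇑((T₁ - T₂) φ) =ᵐ[ngoMeas] ⇑(T₁ φ) - ⇑(T₂ φ) := by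
      rw [ContinuousLinearMap.sub_apply]; exact Lp.coeFn_sub _ _
    filter_upwards [e1, e2, e3, ae_restrict_mem measurableSet_Ici] with x h1 h2 h3 hx
    rw [h3]
    simp only [Pi.sub_apply, T₁, T₂, h1, h2]
    obtain ⟨B₁, hB₁⟩ := hbdd₁ x hx
    obtain ⟨B₂, hB₂⟩ := hbdd₂ x hx
    have i1 : Integrable (fun σ => K₁ x σ * φ σ) ngoMeas :=
      section_integrable K₁ hK₁ hB₁ (L1.integrable_coeFn φ)
    have i2 : Integrable (fun σ => K₂ x σ * φ σ) ngoMeas :=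
      section_integrable K₂ hK₂ hB₂ (L1.integrable_coeFn φ)
    show kfun K₁ ⇑φ x - kfun K₂ ⇑φ x = kfun (fun x σ => K₁ x σ - K₂ x σ) ⇑φ x
    rw [kfun, kfun, kfun, ← integral_sub i1 i2]
    congr 1; funext σ; ring
  rw [Lp.norm_def, eLpNorm_congr_ae he, eLpNorm_one_eq_lintegral_enorm]
  have hb := kfun_lintegral_le (fun x σ => K₁ x σ - K₂ x σ) (hK₁.sub hK₂)
    (Lp.aestronglyMeasurable φ) ENNReal.ofReal_ne_top hD
  have hfin : ∫⁻ σ, (‖φ σ‖₊ : ℝ≥0∞) ∂ngoMeas ≠ ⊤ := by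
    simp only [← enorm_eq_nnnorm, ← eLpNorm_one_eq_lintegral_enorm]; exact (Lp.eLpNorm_lt_top φ).ne
  calc (∫⁻ x, (‖kfun (fun x σ => K₁ x σ - K₂ x σ) ⇑φ x‖₊ : ℝ≥0∞) ∂ngoMeas).toReal
      ≤ (ENNReal.ofReal D * ∫⁻ σ, (‖φ σ‖₊ : ℝ≥0∞) ∂ngoMeas).toReal :=
        ENNReal.toReal_mono (ENNReal.mul_ne_top ENNReal.ofReal_ne_top hfin) hb
    _ = D * ‖φ‖ := by
        rw [ENNReal.toReal_mul, ENNReal.toReal_ofReal hD0, Lp.norm_def,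
          eLpNorm_one_eq_lintegral_enorm]; rfl

lemma cell_bound (g : ℝ → ℝ) (hg : Measurable g) (hgi : IntegrableOn g (Ici 0))
    {δ : ℝ} (hδ : 0 < δ) {l : ℝ} (hl : 0 ≤ l) :
    (∫⁻ x in Ico l (l+δ), ENNReal.ofReal |g x - δ⁻¹ * ∫ y in Ico l (l+δ), g y|) ≤
      ENNReal.ofReal δ⁻¹ *
        ∫⁻ h in Ioo (-δ) δ, ∫⁻ x in Ico l (l+δ),
          (Ico l (l+δ)).indicator (fun y => ENNReal.ofReal |g y - g x|) (x+h) := by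
  set I : Set ℝ := Ico l (l+δ) with hI
  have hIm : MeasurableSet I := measurableSet_Ico
  have hIsub : I ⊆ Ici (0:ℝ) := fun y hy => le_trans hl hy.1
  have hgI : IntegrableOn g I := hgi.mono_set hIsub
  have hvolI : volume I = ENNReal.ofReal δ := by
    rw [hI, Real.volume_Ico]; congr 1; ring
  -- the inner double-integrand, jointly measurable
  have hΨm : Measurable (fun p : ℝ × ℝ =>
      I.indicator (fun y => ENNReal.ofReal |g y - g p.1|) (p.1 + p.2)) := by
    simp_rw [Set.indicator_apply]
    refine Measurable.ite ?_ ?_ measurable_const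
    · exact (measurable_fst.add measurable_snd) hIm
    · exact (ENNReal.measurable_ofReal.comp
        ((hg.comp (measurable_fst.add measurable_snd)).sub (hg.comp measurable_fst)).abs)
  -- Step 1: pointwise bound on I
  have step1 : ∀ x ∈ I, ENNReal.ofReal |g x - δ⁻¹ * ∫ y in I, g y| ≤
      ENNReal.ofReal δ⁻¹ * ∫⁻ y in I, ENNReal.ofReal |g y - g x| := by
    intro x hx
    have hconst : IntegrableOn (fun _ : ℝ => g x) I := by
      exact integrableOn_const (by rw [hvolI]; exact ENNReal.ofReal_ne_top)
    have h1 : g x - δ⁻¹ * ∫ y in I, g y = δ⁻¹ * ∫ y in I, (g x - g y) := by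
      rw [integral_sub hconst hgI, setIntegral_const, measureReal_def, hvolI,
        ENNReal.toReal_ofReal hδ.le, smul_eq_mul]
      field_simp
    have h2 : |g x - δ⁻¹ * ∫ y in I, g y| ≤ δ⁻¹ * ∫ y in I, |g y - g x| := by
      rw [h1, abs_mul, abs_of_nonneg (inv_nonneg.2 hδ.le)]
      refine mul_le_mul_of_nonneg_left ?_ (inv_nonneg.2 hδ.le)
      calc |∫ y in I, (g x - g y)| ≤ ∫ y in I, |g x - g y| := by
            simpa [Real.norm_eq_abs] using
              norm_integral_le_integral_norm (μ := volume.restrict I) (fun y => g x - g y)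
        _ = ∫ y in I, |g y - g x| := by
            refine integral_congr_ae (Eventually.of_forall fun y => ?_)
            exact abs_sub_comm _ _
      
    have h3 : Integrable (fun y => |g y - g x|) (volume.restrict I) :=
      (hgI.sub hconst).abs
    calc ENNReal.ofReal |g x - δ⁻¹ * ∫ y in I, g y|
        ≤ ENNReal.ofReal (δ⁻¹ * ∫ y in I, |g y - g x|) := ENNReal.ofReal_le_ofReal h2
      _ = ENNReal.ofReal δ⁻¹ * ENNReal.ofReal (∫ y in I, |g y - g x|) := by
          rw [ENNReal.ofReal_mul (inv_nonneg.2 hδ.le)]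
      _ = ENNReal.ofReal δ⁻¹ * ∫⁻ y in I, ENNReal.ofReal |g y - g x| := by
          rw [ofReal_integral_eq_lintegral_ofReal h3
            (Eventually.of_forall fun y => abs_nonneg _)]
  -- Step 2+3: translate and restrict
  have step23 : ∀ x ∈ I, (∫⁻ y in I, ENNReal.ofReal |g y - g x|) ≤
      ∫⁻ h in Ioo (-δ) δ, I.indicator (fun y => ENNReal.ofReal |g y - g x|) (x+h) := by
    intro x hx
    have e1 : (∫⁻ y in I, ENNReal.ofReal |g y - g x|)
        = ∫⁻ h, I.indicator (fun y => ENNReal.ofReal |g y - g x|) (x+h) := by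
      rw [← lintegral_indicator hIm]
      exact (lintegral_add_left_eq_self
        (fun y => I.indicator (fun y => ENNReal.ofReal |g y - g x|) y) x).symm
    rw [e1, ← lintegral_indicator (measurableSet_Ioo (a := -δ) (b := δ))]
    refine lintegral_mono fun h => ?_
    by_cases hh : h ∈ Ioo (-δ) δ
    · rw [Set.indicator_of_mem hh]
    · rw [Set.indicator_of_notMem hh]
      have hxh : x + h ∉ I := by
        intro hmem
        apply hh
        constructor
        · nlinarith [hx.1, hx.2, hmem.1, hmem.2]
        · nlinarith [hx.1, hx.2, hmem.1, hmem.2]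
      rw [Set.indicator_of_notMem hxh]
  -- assemble
  calc (∫⁻ x in I, ENNReal.ofReal |g x - δ⁻¹ * ∫ y in I, g y|)
      ≤ ∫⁻ x in I, ENNReal.ofReal δ⁻¹ *
          ∫⁻ h in Ioo (-δ) δ, I.indicator (fun y => ENNReal.ofReal |g y - g x|) (x+h) := by
        refine setLIntegral_mono' hIm fun x hx => ?_
        exact le_trans (step1 x hx) (mul_le_mul_right (step23 x hx) _)
    _ = ENNReal.ofReal δ⁻¹ * ∫⁻ x in I,
          ∫⁻ h in Ioo (-δ) δ, I.indicator (fun y => ENNReal.ofReal |g y - g x|) (x+h) :=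
        lintegral_const_mul' _ _ ENNReal.ofReal_ne_top
    _ = ENNReal.ofReal δ⁻¹ * ∫⁻ h in Ioo (-δ) δ, ∫⁻ x in I,
          I.indicator (fun y => ENNReal.ofReal |g y - g x|) (x+h) := by
        congr 1
        exact lintegral_lintegral_swap hΨm.aemeasurable


lemma sum_cells (g : ℝ → ℝ) (hg : Measurable g) (hgi : IntegrableOn g (Ici 0))
    {δ : ℝ} (hδ : 0 < δ) (m : ℕ) {ε : ℝ} (hε : 0 ≤ ε)
    (hω : ∀ h : ℝ, |h| < δ →
      (∫ x in Ici (0:ℝ), |(Ici (0:ℝ)).indicator g (x+h) - g x|) ≤ ε) :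
    (∫⁻ x in Ico (0:ℝ) (m*δ), ENNReal.ofReal
        |g x - ∑ j ∈ Finset.range m,
            (cellI δ j).indicator (fun _ => δ⁻¹ * ∫ y in cellI δ j, g y) x|) ≤
      ENNReal.ofReal (2*ε) := by
  have hcell_sub : ∀ j : ℕ, cellI δ j ⊆ Ici (0:ℝ) := fun j y hy =>
    le_trans (by positivity) hy.1
  have key : ∀ i j : ℕ, i < j → Disjoint (cellI δ i) (cellI δ j) := by
    intro i j hij
    rw [cellI, cellI, Set.Ico_disjoint_Ico]
    have h1 : (i:ℝ) + 1 ≤ j := by exact_mod_cast hij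
    calc min ((i:ℝ)*δ+δ) ((j:ℝ)*δ+δ) ≤ (i:ℝ)*δ+δ := min_le_left _ _
      _ ≤ (j:ℝ)*δ := by nlinarith
      _ ≤ max ((i:ℝ)*δ) ((j:ℝ)*δ) := le_max_right _ _
  have hdisj : (↑(Finset.range m) : Set ℕ).PairwiseDisjoint (cellI δ) := fun i _ j _ hij =>
    hij.lt_or_gt.elim (key i j) fun h => (key j i h).symm
  have hunion : (⋃ j ∈ Finset.range m, cellI δ j) = Ico (0:ℝ) (m*δ) := by
    ext x
    simp only [mem_iUnion, Finset.mem_range, cellI, mem_Ico, exists_prop]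
    constructor
    · rintro ⟨j, hj, h1, h2⟩
      have hj' : (j:ℝ) + 1 ≤ m := by exact_mod_cast hj
      exact ⟨le_trans (by positivity) h1, by nlinarith⟩
    · rintro ⟨h0, hm⟩
      have hx0 : 0 ≤ x / δ := div_nonneg h0 hδ.le
      refine ⟨⌊x/δ⌋₊, ?_, ?_, ?_⟩
      · rw [Nat.floor_lt hx0, div_lt_iff₀ hδ]; nlinarith
      · calc (⌊x/δ⌋₊:ℝ)*δ ≤ (x/δ)*δ :=
            mul_le_mul_of_nonneg_right (Nat.floor_le hx0) hδ.le
          _ = x := by field_simp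
      · have h2 := Nat.lt_floor_add_one (x/δ)
        have h3 : x / δ * δ = x := by field_simp
        nlinarith
  set S : ℝ → ℝ := fun x => ∑ j ∈ Finset.range m,
    (cellI δ j).indicator (fun _ => δ⁻¹ * ∫ y in cellI δ j, g y) x with hS
  have hΦm : ∀ j : ℕ, Measurable (fun h : ℝ => ∫⁻ x in cellI δ j,
      (cellI δ j).indicator (fun y => ENNReal.ofReal |g y - g x|) (x+h)) := by
    intro j
    have : Measurable (Function.uncurry fun (h : ℝ) (x : ℝ) =>
        (cellI δ j).indicator (fun y => ENNReal.ofReal |g y - g x|) (x+h)) := by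
      show Measurable fun p : ℝ × ℝ =>
        (cellI δ j).indicator (fun y => ENNReal.ofReal |g y - g p.2|) (p.2 + p.1)
      simp only [Set.indicator, cellI]
      refine Measurable.ite ?_ ?_ measurable_const
      · exact (measurable_snd.add measurable_fst) measurableSet_Ico
      · exact (ENNReal.measurable_ofReal.comp
          ((hg.comp (measurable_snd.add measurable_fst)).sub (hg.comp measurable_snd)).abs)
    exact this.lintegral_prod_right
  calc (∫⁻ x in Ico (0:ℝ) (m*δ), ENNReal.ofReal |g x - S x|)
      = ∑ j ∈ Finset.range m, ∫⁻ x in cellI δ j, ENNReal.ofReal |g x - S x| := by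
        rw [← hunion]
        exact lintegral_biUnion_finset hdisj (fun b _ => measurableSet_Ico) _
    _ ≤ ∑ j ∈ Finset.range m, ENNReal.ofReal δ⁻¹ *
          ∫⁻ h in Ioo (-δ) δ, ∫⁻ x in cellI δ j,
            (cellI δ j).indicator (fun y => ENNReal.ofReal |g y - g x|) (x+h) := by
        refine Finset.sum_le_sum fun j hj => ?_
        have hcongr : (∫⁻ x in cellI δ j, ENNReal.ofReal |g x - S x|)
            = ∫⁻ x in cellI δ j, ENNReal.ofReal |g x - δ⁻¹ * ∫ y in cellI δ j, g y| := by
          refine setLIntegral_congr_fun measurableSet_Ico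
            (fun x hx => ?_)
          have hSx : S x = δ⁻¹ * ∫ y in cellI δ j, g y := by
            show (∑ i ∈ Finset.range m,
                (cellI δ i).indicator (fun _ => δ⁻¹ * ∫ y in cellI δ i, g y) x)
              = δ⁻¹ * ∫ y in cellI δ j, g y
            rw [Finset.sum_eq_single j]
            · exact Set.indicator_of_mem hx _
            · intro i hi hij
              refine Set.indicator_of_notMem ?_ _
              intro hxi
              exact (hij.lt_or_gt.elim (key i j) fun h => (key j i h).symm).ne_of_mem hxi hx rfl
            · intro h; exact absurd hj h
          rw [hSx]
        rw [hcongr]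
        have hcb := cell_bound g hg hgi hδ (l := (j:ℝ)*δ) (by positivity)
        exact hcb
    _ = ENNReal.ofReal δ⁻¹ * ∫⁻ h in Ioo (-δ) δ, ∑ j ∈ Finset.range m,
          ∫⁻ x in cellI δ j,
            (cellI δ j).indicator (fun y => ENNReal.ofReal |g y - g x|) (x+h) := by
        rw [← Finset.mul_sum]
        congr 1
        exact (lintegral_finset_sum _ fun j _ => hΦm j).symm
    _ ≤ ENNReal.ofReal δ⁻¹ * ∫⁻ h in Ioo (-δ) δ, ENNReal.ofReal ε := by
        refine mul_le_mul_right (lintegral_mono_ae ?_) _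
        filter_upwards [ae_restrict_mem measurableSet_Ioo] with h hh
        have habs : |h| < δ := abs_lt.2 ⟨hh.1, hh.2⟩
        have hint : Integrable (fun x => |(Ici (0:ℝ)).indicator g (x+h) - g x|)
            (volume.restrict (Ici (0:ℝ))) := by
          have hind : Integrable ((Ici (0:ℝ)).indicator g) volume :=
            (integrable_indicator_iff measurableSet_Ici).2 hgi
          have h2 : Integrable (fun x => (Ici (0:ℝ)).indicator g (x+h)) volume :=
            hind.comp_add_right h
          exact (h2.integrableOn.sub hgi).abs
        calc (∑ j ∈ Finset.range m, ∫⁻ x in cellI δ j,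
              (cellI δ j).indicator (fun y => ENNReal.ofReal |g y - g x|) (x+h))
            ≤ ∑ j ∈ Finset.range m, ∫⁻ x in cellI δ j,
              ENNReal.ofReal |(Ici (0:ℝ)).indicator g (x+h) - g x| := by
              refine Finset.sum_le_sum fun j _ => ?_
              refine setLIntegral_mono' measurableSet_Ico fun x hx => ?_
              by_cases hxh : x + h ∈ cellI δ j
              · rw [Set.indicator_of_mem hxh, Set.indicator_of_mem (hcell_sub j hxh)]
              · rw [Set.indicator_of_notMem hxh]; exact zero_le
          _ = ∫⁻ x in ⋃ j ∈ Finset.range m, cellI δ j,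
              ENNReal.ofReal |(Ici (0:ℝ)).indicator g (x+h) - g x| :=
              (lintegral_biUnion_finset hdisj (fun b _ => measurableSet_Ico) _).symm
          _ ≤ ∫⁻ x in Ici (0:ℝ),
              ENNReal.ofReal |(Ici (0:ℝ)).indicator g (x+h) - g x| := by
              refine lintegral_mono_set ?_
              rw [hunion]; exact fun x hx => hx.1
          _ = ENNReal.ofReal (∫ x in Ici (0:ℝ), |(Ici (0:ℝ)).indicator g (x+h) - g x|) :=
              (ofReal_integral_eq_lintegral_ofReal hint
                (Eventually.of_forall fun x => abs_nonneg _)).symm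
          _ ≤ ENNReal.ofReal ε := ENNReal.ofReal_le_ofReal (hω h habs)
    _ = ENNReal.ofReal (2*ε) := by
        rw [setLIntegral_const, Real.volume_Ioo, ← ENNReal.ofReal_mul hε,
          ← ENNReal.ofReal_mul (inv_nonneg.2 hδ.le)]
        congr 1
        field_simp
        ring



lemma cellI_subset_Ici {δ : ℝ} (hδ : 0 ≤ δ) (j : ℕ) : cellI δ j ⊆ Ici (0:ℝ) :=
  fun y hy => le_trans (by positivity) hy.1

lemma cellI_disjoint {δ : ℝ} (hδ : 0 < δ) {i j : ℕ} (hij : i ≠ j) :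
    Disjoint (cellI δ i) (cellI δ j) := by
  have key : ∀ i j : ℕ, i < j → Disjoint (cellI δ i) (cellI δ j) := by
    intro i j hij
    rw [cellI, cellI, Set.Ico_disjoint_Ico]
    have h1 : (i:ℝ) + 1 ≤ j := by exact_mod_cast hij
    calc min ((i:ℝ)*δ+δ) ((j:ℝ)*δ+δ) ≤ (i:ℝ)*δ+δ := min_le_left _ _
      _ ≤ (j:ℝ)*δ := by nlinarith
      _ ≤ max ((i:ℝ)*δ) ((j:ℝ)*δ) := le_max_right _ _
  exact hij.lt_or_gt.elim (key i j) fun h => (key j i h).symm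

lemma cellI_subset_Ico {δ : ℝ} (hδ : 0 < δ) {j m : ℕ} (hj : j < m) :
    cellI δ j ⊆ Ico (0:ℝ) (m*δ) := by
  intro y hy
  have hj' : (j:ℝ) + 1 ≤ m := by exact_mod_cast hj
  exact ⟨le_trans (by positivity) hy.1, lt_of_lt_of_le hy.2 (by nlinarith)⟩

lemma kapprox_eq_on_cell (K : ℝ → ℝ → ℝ) {δ : ℝ} (hδ : 0 < δ) {m j : ℕ} (hj : j < m)
    {x : ℝ} (hx : x ∈ cellI δ j) (σ : ℝ) :
    Kapprox K δ m x σ = δ⁻¹ * ∫ y in cellI δ j, K y σ := by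
  rw [Kapprox, Finset.sum_eq_single j]
  · exact Set.indicator_of_mem hx _
  · intro i hi hij
    exact Set.indicator_of_notMem
      (fun hxi => (cellI_disjoint hδ hij).ne_of_mem hxi hx rfl) _
  · intro h; exact absurd (Finset.mem_range.2 hj) h

lemma kapprox_eq_zero (K : ℝ → ℝ → ℝ) {δ : ℝ} (hδ : 0 < δ) {m : ℕ}
    {x : ℝ} (hx : x ∉ Ico (0:ℝ) (m*δ)) (σ : ℝ) :
    Kapprox K δ m x σ = 0 := by
  refine Finset.sum_eq_zero fun j hj => Set.indicator_of_notMem ?_ _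
  exact fun hxj => hx (cellI_subset_Ico hδ (Finset.mem_range.1 hj) hxj)

lemma Lp_coeFn_sum {α E : Type*} [MeasurableSpace α] [NormedAddCommGroup E]
    {p : ℝ≥0∞} {μ : Measure α} {ι : Type*} (s : Finset ι) (f : ι → Lp E p μ) :
    ⇑(∑ i ∈ s, f i) =ᵐ[μ] fun x => ∑ i ∈ s, f i x := by
  classical
  induction s using Finset.induction_on with
  | empty => simp only [Finset.sum_empty]; exact Lp.coeFn_zero E p μ
  | insert i s' h ih =>
      rw [Finset.sum_insert h]
      refine (Lp.coeFn_add _ _).trans ?_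
      filter_upwards [ih] with x hx
      simp only [Pi.add_apply, hx, Finset.sum_insert h]

end NGOaux


set_option maxHeartbeats 1000000 in
set_option synthInstance.maxHeartbeats 100000 in
/-- for `Ω = [0,∞)`, under Assumptions 1(1) and 2, the next generation operator
`(Tφ)(x) = N(x) ∫_Ω Θ(x,σ) φ(σ) dσ`, `Θ(x,σ) = ∫_0^∞ A(τ,x,σ) dτ`, is a well-defined bounded
linear operator on `L¹(Ω)` which is compact: the image of every bounded set has compact
closure. -/
theorem next_generation_operator_compact
    (N : ℝ → ℝ) (hNmeas : Measurable N) (hNnn : ∀ x, 0 ≤ N x)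
    (hNint : IntegrableOn N (Ici 0))
    (hNpos : ∀ᵐ x ∂(volume.restrict (Ici (0:ℝ))), 0 < N x)
    (A : ℝ → ℝ → ℝ → ℝ)
    (hAmeas : Measurable (fun p : ℝ × ℝ × ℝ => A p.1 p.2.1 p.2.2))
    (hAnn : ∀ τ x σ, 0 ≤ A τ x σ)
    -- Assumption 1(1)
    (α : ℝ) (hα : 1 < α)
    (a b c : ℝ → ℝ)
    (hameas : Measurable a) (hbmeas : Measurable b) (hcmeas : Measurable c)
    (hann : ∀ x, 0 ≤ a x) (hbnn : ∀ τ, 0 ≤ b τ) (hcnn : ∀ σ, 0 ≤ c σ)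
    (haN : IntegrableOn (fun x => a x * N x) (Ici 0))
    (hbint : IntegrableOn b (Ici 0))
    (hcN : IntegrableOn (fun x => c x * N x) (Ici 0))
    (hc2N : IntegrableOn (fun x => c x ^ 2 * N x) (Ici 0))
    (hAbound : ∀ τ ∈ Ici (0:ℝ), ∀ x ∈ Ici (0:ℝ), ∀ σ ∈ Ici (0:ℝ),
      a x * b τ * c σ ≤ A τ x σ ∧ A τ x σ ≤ α * (a x * b τ * c σ))
    -- Assumption 2
    (haNpos : ∀ f : ℝ → ℝ, Measurable f → (∀ x, 0 ≤ f x) → (∃ M, ∀ x, f x ≤ M) →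
      ¬ f =ᵐ[volume.restrict (Ici (0:ℝ))] 0 →
      0 < ∫ x in Ici (0:ℝ), f x * (a x * N x))
    (hcbdd : ∃ M, ∀ x, c x ≤ M)
    (hcpos : ∀ φ : ℝ → ℝ, IntegrableOn φ (Ici 0) →
      (∀ᵐ x ∂(volume.restrict (Ici (0:ℝ))), 0 ≤ φ x) →
      ¬ φ =ᵐ[volume.restrict (Ici (0:ℝ))] 0 →
      0 < ∫ x in Ici (0:ℝ), c x * φ x)
    (hΘshift : TendstoUniformlyOn
      (fun (h : ℝ) (σ : ℝ) => ∫ x in Ici (0:ℝ),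
        |indicator (Ici (0:ℝ)) (fun y => N y * ∫ τ in Ici (0:ℝ), A τ y σ) (x + h)
          - N x * ∫ τ in Ici (0:ℝ), A τ x σ|)
      (fun _ => 0) (nhds (0:ℝ)) (Ici 0)) :
    ∃ T : Lp ℝ 1 (volume.restrict (Ici (0:ℝ))) →L[ℝ] Lp ℝ 1 (volume.restrict (Ici (0:ℝ))),
      (∀ φ : Lp ℝ 1 (volume.restrict (Ici (0:ℝ))),
        ⇑(T φ) =ᵐ[volume.restrict (Ici (0:ℝ))]
          fun x => N x * ∫ σ in Ici (0:ℝ), (∫ τ in Ici (0:ℝ), A τ x σ) * φ σ) ∧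
      (∀ s : Set (Lp ℝ 1 (volume.restrict (Ici (0:ℝ)))), Bornology.IsBounded s →
        IsCompact (closure (⇑T '' s))) := by
  classical
  obtain ⟨Mc, hMc⟩ := hcbdd
  have hMc0 : 0 ≤ Mc := le_trans (hcnn 0) (hMc 0)
  set L : ℝ := ∫ τ in Ici (0:ℝ), b τ with hLdef
  have hL0 : 0 ≤ L := setIntegral_nonneg measurableSet_Ici fun τ _ => hbnn τ
  set CaN : ℝ := ∫ x in Ici (0:ℝ), a x * N x with hCaNdef
  have hCaN0 : 0 ≤ CaN :=
    setIntegral_nonneg measurableSet_Ici fun x _ => mul_nonneg (hann x) (hNnn x)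
  have hα0 : (0:ℝ) < α := lt_trans one_pos hα
  set K : ℝ → ℝ → ℝ := Kker N A with hKdef
  have hKapp : ∀ x σ, K x σ = N x * ∫ τ in Ici (0:ℝ), A τ x σ := fun x σ => rfl
  -- measurability of the kernel
  have hKm : Measurable fun p : ℝ × ℝ => K p.1 p.2 := by
    have h1 : StronglyMeasurable (Function.uncurry fun (p : ℝ × ℝ) (τ : ℝ) => A τ p.1 p.2) := by
      apply Measurable.stronglyMeasurable
      exact hAmeas.comp (measurable_snd.prodMk (measurable_fst.fst.prodMk measurable_fst.snd))
    have h2 := h1.integral_prod_right (ν := volume.restrict (Ici (0:ℝ)))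
    exact (hNmeas.comp measurable_fst).mul h2.measurable
  -- positivity and bounds for the kernel
  have hΘnn : ∀ x σ, 0 ≤ ∫ τ in Ici (0:ℝ), A τ x σ :=
    fun x σ => integral_nonneg fun τ => hAnn τ x σ
  have hKnn : ∀ x σ, 0 ≤ K x σ := fun x σ => mul_nonneg (hNnn x) (hΘnn x σ)
  have hΘle : ∀ x ∈ Ici (0:ℝ), ∀ σ ∈ Ici (0:ℝ),
      (∫ τ in Ici (0:ℝ), A τ x σ) ≤ α * L * (a x * c σ) := by
    intro x hx σ hσ
    have h1 : (∫ τ in Ici (0:ℝ), A τ x σ) ≤ ∫ τ in Ici (0:ℝ), (α * (a x * c σ)) * b τ := by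
      refine integral_mono_of_nonneg (Eventually.of_forall fun τ => hAnn τ x σ)
        (hbint.const_mul _) ?_
      filter_upwards [ae_restrict_mem measurableSet_Ici] with τ hτ
      have h2 := (hAbound τ hτ x hx σ hσ).2
      calc A τ x σ ≤ α * (a x * b τ * c σ) := h2
        _ = (α * (a x * c σ)) * b τ := by ring
    rw [integral_const_mul] at h1
    calc (∫ τ in Ici (0:ℝ), A τ x σ) ≤ (α * (a x * c σ)) * L := h1
      _ = α * L * (a x * c σ) := by ring
  have hKle : ∀ x ∈ Ici (0:ℝ), ∀ σ ∈ Ici (0:ℝ), K x σ ≤ α * L * Mc * (a x * N x) := by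
    intro x hx σ hσ
    have h2 : K x σ ≤ N x * (α * L * (a x * c σ)) := by
      rw [hKapp]
      exact mul_le_mul_of_nonneg_left (hΘle x hx σ hσ) (hNnn x)
    have h4 : 0 ≤ (α * L * (a x * N x)) * (Mc - c σ) :=
      mul_nonneg (mul_nonneg (mul_nonneg hα0.le hL0) (mul_nonneg (hann x) (hNnn x)))
        (sub_nonneg.2 (hMc σ))
    nlinarith
  -- the dominating integrable function
  set g₀ : ℝ → ℝ := fun x => α * L * Mc * (a x * N x) with hg₀def
  have hg₀nn : ∀ x, 0 ≤ g₀ x := fun x =>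
    mul_nonneg (mul_nonneg (mul_nonneg hα0.le hL0) hMc0) (mul_nonneg (hann x) (hNnn x))
  have hg₀m : Measurable g₀ := (hameas.mul hNmeas).const_mul _
  have hg₀int : IntegrableOn g₀ (Ici 0) := haN.const_mul _
  have hg₀total : ∫ x in Ici (0:ℝ), g₀ x = α * L * Mc * CaN := by
    rw [hg₀def, hCaNdef]; exact integral_const_mul _ _
  set Cfull : ℝ := α * L * Mc * CaN with hCfulldef
  have hCfull0 : 0 ≤ Cfull :=
    mul_nonneg (mul_nonneg (mul_nonneg hα0.le hL0) hMc0) hCaN0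
  have hCfull : ∀ σ ∈ Ici (0:ℝ),
      (∫⁻ x in Ici (0:ℝ), (‖K x σ‖₊ : ℝ≥0∞)) ≤ ENNReal.ofReal Cfull := by
    intro σ hσ
    calc (∫⁻ x in Ici (0:ℝ), (‖K x σ‖₊ : ℝ≥0∞))
        ≤ ∫⁻ x in Ici (0:ℝ), ENNReal.ofReal (g₀ x) := by
          refine setLIntegral_mono (ENNReal.measurable_ofReal.comp hg₀m) fun x hx => ?_
          rw [← enorm_eq_nnnorm, ← ofReal_norm, Real.norm_eq_abs, abs_of_nonneg (hKnn x σ)]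
          exact ENNReal.ofReal_le_ofReal (hKle x hx σ hσ)
      _ = ENNReal.ofReal (∫ x in Ici (0:ℝ), g₀ x) :=
          (ofReal_integral_eq_lintegral_ofReal hg₀int
            (Eventually.of_forall fun x => hg₀nn x)).symm
      _ = ENNReal.ofReal Cfull := by rw [hg₀total]
  have hbddK : ∀ x ∈ Ici (0:ℝ), ∃ B, ∀ σ ∈ Ici (0:ℝ), |K x σ| ≤ B := by
    intro x hx
    exact ⟨g₀ x, fun σ hσ => by rw [abs_of_nonneg (hKnn x σ)]; exact hKle x hx σ hσ⟩
  -- integrability of kernel sections in x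
  have hKintx : ∀ σ ∈ Ici (0:ℝ), IntegrableOn (fun x => K x σ) (Ici 0) := by
    intro σ hσ
    refine Integrable.mono' hg₀int
      ((hKm.comp (measurable_id.prodMk measurable_const)).aestronglyMeasurable) ?_
    filter_upwards [ae_restrict_mem measurableSet_Ici] with x hx
    rw [Real.norm_eq_abs, abs_of_nonneg (hKnn x σ)]
    exact hKle x hx σ hσ
  -- the operator
  set T : Lp ℝ 1 ngoMeas →L[ℝ] Lp ℝ 1 ngoMeas :=
    kernelOp K hKm Cfull hCfull0 hCfull hbddK with hTdef
  refine ⟨T, ?_, ?_⟩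
  · -- the action of T
    intro φ
    refine (kernelOp_apply K hKm Cfull hCfull0 hCfull hbddK φ).trans
      (Eventually.of_forall fun x => ?_)
    show (∫ σ, K x σ * ⇑φ σ ∂ngoMeas)
      = N x * ∫ σ in Ici (0:ℝ), (∫ τ in Ici (0:ℝ), A τ x σ) * φ σ
    rw [← integral_const_mul]
    refine integral_congr_ae (Eventually.of_forall fun σ => ?_)
    show K x σ * ⇑φ σ = N x * ((∫ τ in Ici (0:ℝ), A τ x σ) * ⇑φ σ)
    rw [hKapp]; ring
  · -- compactness
    suffices hco : IsCompactOperator ⇑T by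
      intro s hs
      have h1 := IsCompactOperator.isCompact_closure_image_of_bounded (𝕜₁ := ℝ)
        (f := (T : Lp ℝ 1 ngoMeas →ₗ[ℝ] Lp ℝ 1 ngoMeas)) hco hs
      simpa using h1
    have hclosed : IsClosed {f : Lp ℝ 1 ngoMeas →L[ℝ] Lp ℝ 1 ngoMeas | IsCompactOperator ⇑f} :=
      isClosed_setOf_isCompactOperator
    have hTmem : T ∈ {f : Lp ℝ 1 ngoMeas →L[ℝ] Lp ℝ 1 ngoMeas | IsCompactOperator ⇑f} := by
      rw [← hclosed.closure_eq, Metric.mem_closure_iff]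
      intro ε hε
      -- tail cutoff
      obtain ⟨R, hRpos, hRtail⟩ : ∃ R : ℝ, 0 < R ∧ ∫ x in Ici R, g₀ x < ε/4 := by
        have hmono : Monotone fun n : ℕ => Ico (0:ℝ) n := by
          intro i j hij x hx
          exact ⟨hx.1, lt_of_lt_of_le hx.2 (by exact_mod_cast hij)⟩
        have hun : (⋃ n : ℕ, Ico (0:ℝ) n) = Ici (0:ℝ) := by
          ext x
          simp only [mem_iUnion, mem_Ico, mem_Ici]
          constructor
          · rintro ⟨n, h1, _⟩; exact h1
          · intro hx; obtain ⟨n, hn⟩ := exists_nat_gt x; exact ⟨n, hx, hn⟩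
        have htd := tendsto_setIntegral_of_monotone (fun n : ℕ => measurableSet_Ico)
          hmono (by rw [hun]; exact hg₀int)
        rw [hun] at htd
        have hev := htd.eventually (lt_mem_nhds
          (show (∫ x in Ici (0:ℝ), g₀ x) - ε/4 < ∫ x in Ici (0:ℝ), g₀ x by linarith))
        obtain ⟨n, hn⟩ := hev.exists
        have hdisj2 : Disjoint (Ico (0:ℝ) (n:ℝ)) (Ici ((n:ℝ))) :=
          (Set.Iio_disjoint_Ici le_rfl).mono_left Set.Ico_subset_Iio_self
        have hint1 : IntegrableOn g₀ (Ico (0:ℝ) (n:ℝ)) := hg₀int.mono_set (fun x hx => hx.1)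
        have hint2 : IntegrableOn g₀ (Ici ((n:ℝ))) :=
          hg₀int.mono_set (Ici_subset_Ici.2 (Nat.cast_nonneg n))
        have hsum : (∫ x in Ici (0:ℝ), g₀ x)
            = (∫ x in Ico (0:ℝ) (n:ℝ), g₀ x) + ∫ x in Ici ((n:ℝ)), g₀ x := by
          rw [← setIntegral_union hdisj2 measurableSet_Ici hint1 hint2,
            Ico_union_Ici_eq_Ici (Nat.cast_nonneg n)]
        refine ⟨(n:ℝ) + 1, by positivity, ?_⟩
        calc (∫ x in Ici ((n:ℝ)+1), g₀ x) ≤ ∫ x in Ici ((n:ℝ)), g₀ x :=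
            setIntegral_mono_set hint2 (Eventually.of_forall hg₀nn)
              ((Ici_subset_Ici.2 (by linarith)).eventuallyLE)
          _ < ε/4 := by linarith
      -- translation modulus
      obtain ⟨δ₀, hδ₀pos, hδ₀⟩ : ∃ δ₀ : ℝ, 0 < δ₀ ∧ ∀ h : ℝ, |h| < δ₀ → ∀ σ ∈ Ici (0:ℝ),
          (∫ x in Ici (0:ℝ), |(Ici (0:ℝ)).indicator (fun y => K y σ) (x + h) - K x σ|)
            ≤ ε/16 := by
        rw [Metric.tendstoUniformlyOn_iff] at hΘshift
        have hev := hΘshift (ε/16) (by positivity)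
        rw [Metric.eventually_nhds_iff] at hev
        obtain ⟨δ₀, hδ₀pos, H⟩ := hev
        refine ⟨δ₀, hδ₀pos, fun h hh σ hσ => ?_⟩
        have h2 := H (show dist h (0:ℝ) < δ₀ from by rw [Real.dist_eq, sub_zero]; exact hh) σ hσ
        have h2' : abs (∫ x in Ici (0:ℝ),
            |(Ici (0:ℝ)).indicator (fun y => N y * ∫ τ in Ici (0:ℝ), A τ y σ) (x + h)
              - N x * ∫ τ in Ici (0:ℝ), A τ x σ|) < ε/16 := by
          simpa [Real.dist_eq, abs_sub_comm] using h2
        exact le_trans (le_abs_self _) h2'.le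
      set δ : ℝ := δ₀/2 with hδdef
      have hδpos : 0 < δ := by positivity
      have hδlt : δ < δ₀ := by rw [hδdef]; linarith
      set m : ℕ := ⌈R/δ⌉₊ with hmdef
      have hmδR : R ≤ (m:ℝ)*δ := by
        have h1 := Nat.le_ceil (R/δ)
        calc R = (R/δ)*δ := by field_simp
          _ ≤ (m:ℝ)*δ := mul_le_mul_of_nonneg_right h1 hδpos.le
      have hmδ0 : (0:ℝ) ≤ (m:ℝ)*δ := by positivity
      -- the approximating kernel
      set K' : ℝ → ℝ → ℝ := Kapprox K δ m with hK'def
      have hkjm : ∀ j : ℕ, Measurable fun σ => ∫ y in cellI δ j, K y σ := by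
        intro j
        have h1 : StronglyMeasurable (Function.uncurry fun (σ y : ℝ) => K y σ) :=
          (hKm.comp (measurable_snd.prodMk measurable_fst)).stronglyMeasurable
        exact (h1.integral_prod_right (ν := volume.restrict (cellI δ j))).measurable
      have hK'm : Measurable fun p : ℝ × ℝ => K' p.1 p.2 := by
        show Measurable fun p : ℝ × ℝ => Kapprox K δ m p.1 p.2
        simp only [Kapprox]
        refine Finset.measurable_sum _ fun j _ => ?_
        simp only [Set.indicator, cellI]
        refine Measurable.ite (measurable_fst measurableSet_Ico) ?_ measurable_const
        exact ((hkjm j).comp measurable_snd).const_mul _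
      have hcellsub : ∀ j : ℕ, cellI δ j ⊆ Ici (0:ℝ) := fun j => cellI_subset_Ici hδpos.le j
      have hKcellint : ∀ (j:ℕ), ∀ σ ∈ Ici (0:ℝ), IntegrableOn (fun y => K y σ) (cellI δ j) :=
        fun j σ hσ => (hKintx σ hσ).mono_set (hcellsub j)
      have hkj_nn : ∀ (j:ℕ) (σ : ℝ), 0 ≤ ∫ y in cellI δ j, K y σ :=
        fun j σ => setIntegral_nonneg measurableSet_Ico fun y _ => hKnn y σ
      have hkj_le : ∀ (j:ℕ), ∀ σ ∈ Ici (0:ℝ), (∫ y in cellI δ j, K y σ) ≤ Cfull := by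
        intro j σ hσ
        calc (∫ y in cellI δ j, K y σ) ≤ ∫ y in cellI δ j, g₀ y :=
            setIntegral_mono_on (hKcellint j σ hσ) (hg₀int.mono_set (hcellsub j))
              measurableSet_Ico (fun y hy => hKle y (hcellsub j hy) σ hσ)
          _ ≤ ∫ y in Ici (0:ℝ), g₀ y :=
            setIntegral_mono_set hg₀int (Eventually.of_forall hg₀nn)
              ((hcellsub j).eventuallyLE)
          _ = Cfull := hg₀total
      have hB1 : (0:ℝ) ≤ δ⁻¹ * Cfull := mul_nonneg (inv_nonneg.2 hδpos.le) hCfull0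
      have hmemcell : ∀ x ∈ Ico (0:ℝ) ((m:ℝ)*δ), ∃ j, j < m ∧ x ∈ cellI δ j := by
        intro x hx
        have hx0 : 0 ≤ x / δ := div_nonneg hx.1 hδpos.le
        refine ⟨⌊x/δ⌋₊, ?_, ?_, ?_⟩
        · rw [Nat.floor_lt hx0, div_lt_iff₀ hδpos]
          calc x < (m:ℝ)*δ := hx.2
            _ = (m:ℝ)*δ := rfl
        · calc ((⌊x/δ⌋₊:ℝ))*δ ≤ (x/δ)*δ :=
              mul_le_mul_of_nonneg_right (Nat.floor_le hx0) hδpos.le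
            _ = x := by field_simp
        · have h2 := Nat.lt_floor_add_one (x/δ)
          have h3 : x / δ * δ = x := by field_simp
          nlinarith
      have hK'val_bound : ∀ x σ, σ ∈ Ici (0:ℝ) → |K' x σ| ≤ δ⁻¹ * Cfull := by
        intro x σ hσ
        by_cases hx : x ∈ Ico (0:ℝ) ((m:ℝ)*δ)
        · obtain ⟨j, hj, hxj⟩ := hmemcell x hx
          have heq : K' x σ = δ⁻¹ * ∫ y in cellI δ j, K y σ :=
            kapprox_eq_on_cell K hδpos hj hxj σ
          rw [heq, abs_of_nonneg (mul_nonneg (inv_nonneg.2 hδpos.le) (hkj_nn j σ))]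
          exact mul_le_mul_of_nonneg_left (hkj_le j σ hσ) (inv_nonneg.2 hδpos.le)
        · have heq : K' x σ = 0 := kapprox_eq_zero K hδpos hx σ
          rw [heq]; simpa using hB1
      have hbddK' : ∀ x ∈ Ici (0:ℝ), ∃ B, ∀ σ ∈ Ici (0:ℝ), |K' x σ| ≤ B :=
        fun x _ => ⟨δ⁻¹ * Cfull, fun σ hσ => hK'val_bound x σ hσ⟩
      set C' : ℝ := (δ⁻¹ * Cfull) * ((m:ℝ)*δ) with hC'def
      have hC'0 : 0 ≤ C' := mul_nonneg hB1 hmδ0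
      have hC' : ∀ σ ∈ Ici (0:ℝ),
          (∫⁻ x in Ici (0:ℝ), (‖K' x σ‖₊ : ℝ≥0∞)) ≤ ENNReal.ofReal C' := by
        intro σ hσ
        calc (∫⁻ x in Ici (0:ℝ), (‖K' x σ‖₊ : ℝ≥0∞))
            ≤ ∫⁻ x in Ici (0:ℝ),
                (Ico (0:ℝ) ((m:ℝ)*δ)).indicator (fun _ => ENNReal.ofReal (δ⁻¹ * Cfull)) x := by
              refine lintegral_mono fun x => ?_
              by_cases hx : x ∈ Ico (0:ℝ) ((m:ℝ)*δ)
              · rw [Set.indicator_of_mem hx, ← enorm_eq_nnnorm, ← ofReal_norm, Real.norm_eq_abs]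
                exact ENNReal.ofReal_le_ofReal (hK'val_bound x σ hσ)
              · rw [Set.indicator_of_notMem hx,
                  show K' x σ = 0 from kapprox_eq_zero K hδpos hx σ]
                simp
            _ = ENNReal.ofReal (δ⁻¹ * Cfull) * ngoMeas (Ico (0:ℝ) ((m:ℝ)*δ)) := by
              rw [lintegral_indicator measurableSet_Ico, setLIntegral_const]
            _ ≤ ENNReal.ofReal (δ⁻¹ * Cfull) * ENNReal.ofReal ((m:ℝ)*δ) := by
              refine mul_le_mul_right ?_ _
              rw [Measure.restrict_apply measurableSet_Ico]
              refine le_trans (measure_mono inter_subset_left) ?_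
              rw [Real.volume_Ico, sub_zero]
            _ = ENNReal.ofReal C' := by rw [← ENNReal.ofReal_mul hB1]
      set S : Lp ℝ 1 ngoMeas →L[ℝ] Lp ℝ 1 ngoMeas :=
        kernelOp K' hK'm C' hC'0 hC' hbddK' with hSdef
      -- distance estimate
      set D : ℝ := 2*(ε/16) + ε/4 with hDdef
      have hD0 : 0 ≤ D := by rw [hDdef]; linarith
      have hDb : ∀ σ ∈ Ici (0:ℝ),
          (∫⁻ x in Ici (0:ℝ), (‖K x σ - K' x σ‖₊ : ℝ≥0∞)) ≤ ENNReal.ofReal D := by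
        intro σ hσ
        have hdisj2 : Disjoint (Ico (0:ℝ) ((m:ℝ)*δ)) (Ici ((m:ℝ)*δ)) :=
          (Set.Iio_disjoint_Ici le_rfl).mono_left Set.Ico_subset_Iio_self
        have part1 : (∫⁻ x in Ico (0:ℝ) ((m:ℝ)*δ), (‖K x σ - K' x σ‖₊ : ℝ≥0∞))
            ≤ ENNReal.ofReal (2*(ε/16)) := by
          have hsc := sum_cells (fun y => K y σ)
            (hKm.comp (measurable_id.prodMk measurable_const))
            (hKintx σ hσ) hδpos m (by positivity)
            (fun h hh => hδ₀ h (lt_trans hh hδlt) σ hσ)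
          calc (∫⁻ x in Ico (0:ℝ) ((m:ℝ)*δ), (‖K x σ - K' x σ‖₊ : ℝ≥0∞))
              = ∫⁻ x in Ico (0:ℝ) ((m:ℝ)*δ), ENNReal.ofReal
                  |K x σ - ∑ j ∈ Finset.range m,
                    (cellI δ j).indicator (fun _ => δ⁻¹ * ∫ y in cellI δ j, K y σ) x| := by
                refine lintegral_congr fun x => ?_
                rw [← enorm_eq_nnnorm, ← ofReal_norm, Real.norm_eq_abs]
                rfl
            _ ≤ ENNReal.ofReal (2*(ε/16)) := hsc
        have part2 : (∫⁻ x in Ici ((m:ℝ)*δ), (‖K x σ - K' x σ‖₊ : ℝ≥0∞))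
            ≤ ENNReal.ofReal (ε/4) := by
          have hcongr : ∀ x ∈ Ici ((m:ℝ)*δ),
              (‖K x σ - K' x σ‖₊ : ℝ≥0∞) = ENNReal.ofReal (K x σ) := by
            intro x hx
            have hxnot : x ∉ Ico (0:ℝ) ((m:ℝ)*δ) := fun hmem => absurd hmem.2 (not_lt.2 hx)
            rw [show K' x σ = 0 from kapprox_eq_zero K hδpos hxnot σ, sub_zero,
              ← enorm_eq_nnnorm, ← ofReal_norm, Real.norm_eq_abs, abs_of_nonneg (hKnn x σ)]
          rw [setLIntegral_congr_fun measurableSet_Ici hcongr]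
          have hsub2 : Ici ((m:ℝ)*δ) ⊆ Ici (0:ℝ) := Ici_subset_Ici.2 hmδ0
          calc (∫⁻ x in Ici ((m:ℝ)*δ), ENNReal.ofReal (K x σ))
              ≤ ∫⁻ x in Ici ((m:ℝ)*δ), ENNReal.ofReal (g₀ x) := by
                refine setLIntegral_mono (ENNReal.measurable_ofReal.comp hg₀m) fun x hx => ?_
                exact ENNReal.ofReal_le_ofReal (hKle x (hsub2 hx) σ hσ)
            _ = ENNReal.ofReal (∫ x in Ici ((m:ℝ)*δ), g₀ x) :=
                (ofReal_integral_eq_lintegral_ofReal (hg₀int.mono_set hsub2)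
                  (Eventually.of_forall hg₀nn)).symm
            _ ≤ ENNReal.ofReal (ε/4) := by
                refine ENNReal.ofReal_le_ofReal (le_of_lt (lt_of_le_of_lt ?_ hRtail))
                exact setIntegral_mono_set (hg₀int.mono_set (Ici_subset_Ici.2 hRpos.le))
                  (Eventually.of_forall hg₀nn) ((Ici_subset_Ici.2 hmδR).eventuallyLE)
        calc (∫⁻ x in Ici (0:ℝ), (‖K x σ - K' x σ‖₊ : ℝ≥0∞))
            = (∫⁻ x in Ico (0:ℝ) ((m:ℝ)*δ), (‖K x σ - K' x σ‖₊ : ℝ≥0∞))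
              + ∫⁻ x in Ici ((m:ℝ)*δ), (‖K x σ - K' x σ‖₊ : ℝ≥0∞) := by
              rw [← lintegral_union measurableSet_Ici hdisj2,
                Ico_union_Ici_eq_Ici hmδ0]
          _ ≤ ENNReal.ofReal (2*(ε/16)) + ENNReal.ofReal (ε/4) := add_le_add part1 part2
          _ = ENNReal.ofReal D := by
              rw [← ENNReal.ofReal_add (by positivity) (by positivity)]
      have hTS : ‖T - S‖ ≤ D := by
        rw [hTdef, hSdef]
        exact kernelOp_diff_le K K' hKm hK'm Cfull C' hCfull0 hC'0 hCfull hC'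
          hbddK hbddK' D hD0 hDb
      -- S is a finite-rank, hence compact, operator
      have hμcell : ∀ j : ℕ, ngoMeas (cellI δ j) ≠ ⊤ := by
        intro j
        refine ne_of_lt (lt_of_le_of_lt ?_
          (show volume (cellI δ j) < ⊤ by rw [cellI, Real.volume_Ico]; simp))
        exact Measure.restrict_apply_le _ _
      set e : Fin m → Lp ℝ 1 ngoMeas := fun i =>
        indicatorConstLp 1 (measurableSet_Ico : MeasurableSet (cellI δ (i:ℕ)))
          (hμcell (i:ℕ)) (1:ℝ) with hedef
      set t : Lp ℝ 1 ngoMeas → Fin m → ℝ := fun φ i =>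
        ∫ σ, (δ⁻¹ * ∫ y in cellI δ (i:ℕ), K y σ) * φ σ ∂ngoMeas with htdef
      have hsec : ∀ (i : ℕ) (φ : Lp ℝ 1 ngoMeas),
          Integrable (fun σ => (δ⁻¹ * ∫ y in cellI δ i, K y σ) * φ σ) ngoMeas := by
        intro i φ
        refine section_integrable (fun _ σ => δ⁻¹ * ∫ y in cellI δ i, K y σ)
          (((hkjm i).const_mul _).comp measurable_snd) (x := (0:ℝ)) (B := δ⁻¹ * Cfull)
          ?_ (L1.integrable_coeFn φ)
        intro σ hσ
        rw [abs_of_nonneg (mul_nonneg (inv_nonneg.2 hδpos.le) (hkj_nn _ σ))]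
        exact mul_le_mul_of_nonneg_left (hkj_le _ σ hσ) (inv_nonneg.2 hδpos.le)
      have htb : ∀ (φ : Lp ℝ 1 ngoMeas) (i : Fin m), |t φ i| ≤ (δ⁻¹*Cfull) * ‖φ‖ := by
        intro φ i
        calc |t φ i| ≤ ∫ σ, ‖(δ⁻¹ * ∫ y in cellI δ (i:ℕ), K y σ) * φ σ‖ ∂ngoMeas := by
              simpa [Real.norm_eq_abs] using norm_integral_le_integral_norm
                (μ := ngoMeas) (fun σ => (δ⁻¹ * ∫ y in cellI δ (i:ℕ), K y σ) * φ σ)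
          _ ≤ ∫ σ, (δ⁻¹*Cfull) * ‖φ σ‖ ∂ngoMeas := by
              refine integral_mono_of_nonneg (Eventually.of_forall fun σ => norm_nonneg _)
                ((L1.integrable_coeFn φ).norm.const_mul _) ?_
              filter_upwards [ae_restrict_mem measurableSet_Ici] with σ hσ
              rw [norm_mul]
              refine mul_le_mul_of_nonneg_right ?_ (norm_nonneg _)
              rw [Real.norm_eq_abs,
                abs_of_nonneg (mul_nonneg (inv_nonneg.2 hδpos.le) (hkj_nn _ σ))]
              exact mul_le_mul_of_nonneg_left (hkj_le _ σ hσ) (inv_nonneg.2 hδpos.le)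
          _ = (δ⁻¹*Cfull) * ‖φ‖ := by
              rw [integral_const_mul, ← L1.norm_eq_integral_norm]
      have hSsum : ∀ φ : Lp ℝ 1 ngoMeas, S φ = ∑ i : Fin m, t φ i • e i := by
        intro φ
        refine Lp.ext ?_
        have h1 : ⇑(S φ) =ᵐ[ngoMeas] kfun K' ⇑φ := by
          rw [hSdef]; exact kernelOp_apply _ _ _ _ _ _ φ
        have h2 : ∀ x, kfun K' ⇑φ x
            = ∑ i : Fin m, (cellI δ (i:ℕ)).indicator (fun _ => t φ i) x := by
          intro x
          have hptw : ∀ σ, K' x σ * ⇑φ σ = ∑ i : Fin m,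
              ((cellI δ (i:ℕ)).indicator (fun _ => (1:ℝ)) x) *
                ((δ⁻¹ * ∫ y in cellI δ (i:ℕ), K y σ) * ⇑φ σ) := by
            intro σ
            have hexp : K' x σ = ∑ i : Fin m,
                (cellI δ (i:ℕ)).indicator
                  (fun _ => δ⁻¹ * ∫ y in cellI δ (i:ℕ), K y σ) x := by
              calc K' x σ = ∑ j ∈ Finset.range m,
                  (cellI δ j).indicator (fun _ => δ⁻¹ * ∫ y in cellI δ j, K y σ) x := rfl
                _ = ∑ i : Fin m, (cellI δ (i:ℕ)).indicator
                    (fun _ => δ⁻¹ * ∫ y in cellI δ (i:ℕ), K y σ) x :=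
                  (Fin.sum_univ_eq_sum_range _ m).symm
            rw [hexp, Finset.sum_mul]
            refine Finset.sum_congr rfl fun i _ => ?_
            by_cases hxi : x ∈ cellI δ (i:ℕ)
            · rw [Set.indicator_of_mem hxi, Set.indicator_of_mem hxi]; ring
            · rw [Set.indicator_of_notMem hxi, Set.indicator_of_notMem hxi]; ring
          have e0 : (∫ σ, K' x σ * ⇑φ σ ∂ngoMeas) = ∫ σ, (∑ i : Fin m,
              ((cellI δ (i:ℕ)).indicator (fun _ => (1:ℝ)) x) *
                ((δ⁻¹ * ∫ y in cellI δ (i:ℕ), K y σ) * ⇑φ σ)) ∂ngoMeas :=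
            integral_congr_ae (Eventually.of_forall hptw)
          show (∫ σ, K' x σ * ⇑φ σ ∂ngoMeas) = _
          rw [e0, integral_finset_sum (μ := ngoMeas) Finset.univ
            (f := fun (i : Fin m) (σ : ℝ) => ((cellI δ (i:ℕ)).indicator (fun _ => (1:ℝ)) x) *
              ((δ⁻¹ * ∫ y in cellI δ (i:ℕ), K y σ) * ⇑φ σ))
            (fun i _ => ((hsec (i:ℕ) φ).const_mul _))]
          refine Finset.sum_congr rfl fun i _ => ?_
          rw [integral_const_mul]
          by_cases hxi : x ∈ cellI δ (i:ℕ)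
          · rw [Set.indicator_of_mem hxi, Set.indicator_of_mem hxi, one_mul]
          · rw [Set.indicator_of_notMem hxi, Set.indicator_of_notMem hxi, zero_mul]
        have h3 : ⇑(∑ i : Fin m, t φ i • e i) =ᵐ[ngoMeas]
            fun x => ∑ i : Fin m, (cellI δ (i:ℕ)).indicator (fun _ => t φ i) x := by
          refine (Lp_coeFn_sum Finset.univ (fun i : Fin m => t φ i • e i)).trans ?_
          have hae : ∀ i : Fin m, ⇑(t φ i • e i) =ᵐ[ngoMeas]
              fun x => (cellI δ (i:ℕ)).indicator (fun _ => t φ i) x := by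
            intro i
            have h5 : ⇑(t φ i • e i) =ᵐ[ngoMeas] t φ i • ⇑(e i) := Lp.coeFn_smul _ _
            have h6 : ⇑(e i) =ᵐ[ngoMeas]
                (cellI δ (i:ℕ)).indicator (fun _ => (1:ℝ)) := indicatorConstLp_coeFn
            filter_upwards [h5, h6] with x hx5 hx6
            rw [hx5]
            simp only [Pi.smul_apply, hx6, smul_eq_mul]
            by_cases hxi : x ∈ cellI δ (i:ℕ)
            · rw [Set.indicator_of_mem hxi, Set.indicator_of_mem hxi, mul_one]
            · rw [Set.indicator_of_notMem hxi, Set.indicator_of_notMem hxi, mul_zero]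
          have hall : ∀ᵐ x ∂ngoMeas, ∀ i : Fin m, ⇑(t φ i • e i) x
              = (cellI δ (i:ℕ)).indicator (fun _ => t φ i) x := ae_all_iff.2 hae
          filter_upwards [hall] with x hx
          exact Finset.sum_congr rfl fun i _ => hx i
        have h2' : kfun K' ⇑φ =ᵐ[ngoMeas]
            fun x => ∑ i : Fin m, (cellI δ (i:ℕ)).indicator (fun _ => t φ i) x :=
          Eventually.of_forall h2
        exact h1.trans (h2'.trans h3.symm)
      have hScomp : IsCompactOperator ⇑S := by
        refine ⟨(fun u : Fin m → ℝ => ∑ i : Fin m, u i • e i) ''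
          (Set.univ.pi fun _ : Fin m => Icc (-(δ⁻¹*Cfull)) (δ⁻¹*Cfull)), ?_, ?_⟩
        · exact (isCompact_univ_pi fun _ => isCompact_Icc).image
            (continuous_finset_sum _ fun i _ => (continuous_apply i).smul continuous_const)
        · refine Filter.mem_of_superset (Metric.ball_mem_nhds 0 one_pos) ?_
          intro φ hφ
          rw [mem_ball_zero_iff] at hφ
          refine ⟨fun i => t φ i, ?_, (hSsum φ).symm⟩
          rw [Set.mem_univ_pi]
          intro i
          rw [Set.mem_Icc, ← abs_le]
          calc |t φ i| ≤ (δ⁻¹*Cfull) * ‖φ‖ := htb φ i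
            _ ≤ (δ⁻¹*Cfull) * 1 := mul_le_mul_of_nonneg_left hφ.le hB1
            _ = δ⁻¹*Cfull := mul_one _
      refine ⟨S, hScomp, ?_⟩
      rw [dist_eq_norm]
      calc ‖T - S‖ ≤ D := hTS
        _ < ε := by rw [hDdef]; linarith
    exact hTmem
end

section
/- Let Ω = [0,∞) and suppose Assumptions 1(1) and 2 hold. If R₀ = r(T) ≤ 1, then Ψ has no nonzero fixed point in the positive cone of Y: there is no ψ ∈ Y with ψ ≥ 0 a.e., ψ ≠ 0, and ψ(x) = ∫_Ω Θ(x,σ)N(σ)(1 − e^{−ψ(σ)}) dσ for a.e. x. -/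
set_option synthInstance.maxHeartbeats 1000000
set_option maxHeartbeats 1000000

open MeasureTheory Set Filter Topology
open scoped ENNReal

section AbstractR0

variable {E : Type*} [NormedAddCommGroup E] [NormedSpace ℝ E] [CompleteSpace E]

private lemma aux_ring_inverse_eq {R : Type*} [Ring R] {x v : R}
    (hx : IsUnit x) (h : x * v = 1) : Ring.inverse x = v := by
  have h2 := congrArg (fun y => Ring.inverse x * y) h
  simp only [mul_one] at h2
  rw [← mul_assoc, Ring.inverse_mul_cancel x hx, one_mul] at h2
  exact h2.symm

private lemma neumann_pos (P : E → Prop) (hP0 : P 0)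
    (hPadd : ∀ f g, P f → P g → P (f + g))
    (hPclosed : IsClosed {f : E | P f})
    (Y : E →L[ℝ] E) (hY : ‖Y‖ < 1) (hYpos : ∀ f, P f → P (Y f)) :
    ∀ f, P f → P (Ring.inverse (1 - Y) f) := by
  intro f hf
  have hunit : IsUnit (1 - Y) := (Units.oneSub Y hY).isUnit
  set J := Ring.inverse (1 - Y) with hJdef
  have hJinv : J * (1 - Y) = 1 := Ring.inverse_mul_cancel _ hunit
  have hpowpos : ∀ n : ℕ, P ((Y ^ n) f) := by
    intro n
    induction n with
    | zero => simpa using hf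
    | succ n ih =>
      have : (Y ^ (n + 1)) f = Y ((Y ^ n) f) := by
        rw [pow_succ']; rfl
      rw [this]; exact hYpos _ ih
  have hSpos : ∀ n : ℕ, P ((∑ i ∈ Finset.range n, Y ^ i) f) := by
    intro n
    induction n with
    | zero => simpa using hP0
    | succ n ih =>
      rw [Finset.sum_range_succ]
      rw [ContinuousLinearMap.add_apply]
      exact hPadd _ _ ih (hpowpos n)
  have hkey : ∀ n : ℕ, (∑ i ∈ Finset.range n, Y ^ i) = J - J * Y ^ n := by
    intro n
    have h1 : (1 - Y) * (∑ i ∈ Finset.range n, Y ^ i) = 1 - Y ^ n := by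
      have h2 := mul_geom_sum (R := E →L[ℝ] E) Y n
      have h3 : (1 - Y) = -(Y - 1) := (neg_sub Y 1).symm
      rw [h3, neg_mul, h2, neg_sub]
    calc (∑ i ∈ Finset.range n, Y ^ i)
        = (J * (1 - Y)) * (∑ i ∈ Finset.range n, Y ^ i) := by rw [hJinv, one_mul]
      _ = J * ((1 - Y) * (∑ i ∈ Finset.range n, Y ^ i)) := by rw [mul_assoc]
      _ = J * (1 - Y ^ n) := by rw [h1]
      _ = J - J * Y ^ n := by rw [mul_sub, mul_one]
  have hdiff : ∀ n : ℕ, (∑ i ∈ Finset.range n, Y ^ i) f - J f = -(J ((Y ^ n) f)) := by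
    intro n
    rw [hkey n]
    simp [ContinuousLinearMap.sub_apply, ContinuousLinearMap.mul_apply]
  have htend : Tendsto (fun n => (∑ i ∈ Finset.range n, Y ^ i) f) atTop (𝓝 (J f)) := by
    rw [tendsto_iff_norm_sub_tendsto_zero]
    have hbound : ∀ n : ℕ, ‖(∑ i ∈ Finset.range n, Y ^ i) f - J f‖ ≤ ‖J‖ * ‖f‖ * ‖Y‖ ^ n := by
      intro n
      rw [hdiff n, norm_neg]
      calc ‖J ((Y ^ n) f)‖ ≤ ‖J‖ * ‖(Y ^ n) f‖ := J.le_opNorm _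
        _ ≤ ‖J‖ * (‖Y ^ n‖ * ‖f‖) := by
            exact mul_le_mul_of_nonneg_left ((Y ^ n).le_opNorm f) (norm_nonneg J)
        _ ≤ ‖J‖ * (‖Y‖ ^ n * ‖f‖) := by
            have hp : ‖Y ^ n‖ ≤ ‖Y‖ ^ n := by
              cases n with
              | zero => simp only [pow_zero]; exact ContinuousLinearMap.norm_id_le
              | succ m => exact norm_pow_le' Y (Nat.succ_pos m)
            have := mul_le_mul_of_nonneg_right hp (norm_nonneg f)
            exact mul_le_mul_of_nonneg_left this (norm_nonneg J)
        _ = ‖J‖ * ‖f‖ * ‖Y‖ ^ n := by ring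
    have hgeo : Tendsto (fun n : ℕ => ‖J‖ * ‖f‖ * ‖Y‖ ^ n) atTop (𝓝 0) := by
      have := tendsto_pow_atTop_nhds_zero_of_lt_one (norm_nonneg Y) hY
      simpa using this.const_mul (‖J‖ * ‖f‖)
    exact squeeze_zero (fun n => norm_nonneg _) hbound hgeo
  exact hPclosed.mem_of_tendsto htend (Eventually.of_forall hSpos)


private lemma abstract_no_super_fixed (P : E → Prop) (hP0 : P 0)
    (hPadd : ∀ f g, P f → P g → P (f + g))
    (hPsmul : ∀ (r : ℝ) (f : E), 0 ≤ r → P f → P (r • f))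
    (hPclosed : IsClosed {f : E | P f})
    (hPnorm : ∀ f g : E, P f → P (g - f) → ‖f‖ ≤ ‖g‖)
    (T : E →L[ℝ] E) (hTpos : ∀ f, P f → P (T f))
    (w : E) (hw : P w) (hw0 : w ≠ 0)
    (ε : ℝ) (hε : 0 < ε) (hTw : P (T w - (1 + ε) • w))
    (hinv : ∀ s : ℝ, 1 < s → IsUnit (algebraMap ℝ (E →L[ℝ] E) s - T)) : False := by
  have honeSub : ∀ X : E →L[ℝ] E, ‖X‖ < 1 → IsUnit (1 - X) := by
    intro X hX
    have h := (Units.oneSub X hX).isUnit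
    rwa [Units.val_oneSub] at h
  set s₁ : ℝ := 1 + ε / 2 with hs₁def
  have hs₁1 : 1 < s₁ := by rw [hs₁def]; linarith
  have hs₁0 : 0 < s₁ := by linarith
  have hs₁0' : s₁ ≠ 0 := ne_of_gt hs₁0
  have hs₁ε : s₁ < 1 + ε := by rw [hs₁def]; linarith
  set s₀ : ℝ := ‖T‖ + s₁ + 1 with hs₀def
  have hTnn : (0:ℝ) ≤ ‖T‖ := norm_nonneg T
  have hs₁s₀ : s₁ ≤ s₀ := by rw [hs₀def]; linarith
  have hs₀T : ‖T‖ < s₀ := by rw [hs₀def]; linarith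
  have hs₀0 : 0 < s₀ := by linarith
  have halg : ∀ s : ℝ, algebraMap ℝ (E →L[ℝ] E) s = s • (1 : E →L[ℝ] E) :=
    fun s => Algebra.algebraMap_eq_smul_one s
  set M : ℝ → (E →L[ℝ] E) := fun s => algebraMap ℝ (E →L[ℝ] E) s - T with hMdef
  have hMs : ∀ s : ℝ, M s = s • (1 : E →L[ℝ] E) - T := by
    intro s; rw [hMdef]; simp only [halg]
  have hMunit : ∀ s : ℝ, s₁ ≤ s → IsUnit (M s) := fun s hs => hinv s (lt_of_lt_of_le hs₁1 hs)
  set R : ℝ → (E →L[ℝ] E) := fun s => Ring.inverse (M s) with hRdef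
  have hMR : ∀ s : ℝ, s₁ ≤ s → M s * R s = 1 := fun s hs =>
    Ring.mul_inverse_cancel (M s) (hMunit s hs)
  set Pos : ℝ → Prop := fun s => ∀ f, P f → P (R s f) with hPosdef
  -- Positivity at s₀ via a Neumann series
  have hPos0 : Pos s₀ := by
    have hYnorm : ‖s₀⁻¹ • T‖ < 1 := by
      calc ‖s₀⁻¹ • T‖ ≤ ‖s₀⁻¹‖ * ‖T‖ := ContinuousLinearMap.opNorm_smul_le _ _
        _ = s₀⁻¹ * ‖T‖ := by rw [Real.norm_eq_abs, abs_of_pos (by positivity)]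
        _ < 1 := by rw [inv_mul_lt_iff₀ hs₀0, mul_one]; exact hs₀T
    have hYpos : ∀ f, P f → P ((s₀⁻¹ • T) f) := by
      intro f hf
      rw [ContinuousLinearMap.smul_apply]
      exact hPsmul _ _ (inv_nonneg.mpr hs₀0.le) (hTpos f hf)
    have hfact : M s₀ = s₀ • ((1 : E →L[ℝ] E) - s₀⁻¹ • T) := by
      rw [hMs, smul_sub, smul_smul, mul_inv_cancel₀ (ne_of_gt hs₀0), one_smul]
    have hJinv : (1 - s₀⁻¹ • T) * Ring.inverse (1 - s₀⁻¹ • T) = 1 :=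
      Ring.mul_inverse_cancel _ (honeSub _ hYnorm)
    have hmul : M s₀ * (s₀⁻¹ • Ring.inverse (1 - s₀⁻¹ • T)) = 1 := by
      rw [hfact, smul_mul_assoc, mul_smul_comm, hJinv, smul_smul,
        mul_inv_cancel₀ (ne_of_gt hs₀0), one_smul]
    have hReq : R s₀ = s₀⁻¹ • Ring.inverse (1 - s₀⁻¹ • T) :=
      aux_ring_inverse_eq (hMunit s₀ hs₁s₀) hmul
    intro f hf
    rw [hReq, ContinuousLinearMap.smul_apply]
    exact hPsmul _ _ (inv_nonneg.mpr hs₀0.le)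
      (neumann_pos P hP0 hPadd hPclosed _ hYnorm hYpos f hf)
  -- uniform bound on the resolvent over [s₁, s₀]
  have hcont : ContinuousOn R (Set.Icc s₁ s₀) := by
    intro s hs
    have hMcont : Continuous M := by
      rw [hMdef]
      simp only [halg]
      exact (continuous_id.smul continuous_const).sub continuous_const
    obtain ⟨u, hu⟩ := hMunit s hs.1
    have h1 : ContinuousAt Ring.inverse (M s) := by
      rw [← hu]; exact NormedRing.inverse_continuousAt u
    exact (h1.comp hMcont.continuousAt).continuousWithinAt
  obtain ⟨C, hC⟩ := isCompact_Icc.exists_bound_of_continuousOn hcont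
  have hC0 : 0 ≤ C := le_trans (norm_nonneg _) (hC s₁ ⟨le_rfl, hs₁s₀⟩)
  set δ : ℝ := 1 / (2 * (C + 1)) with hδdef
  have hδ : 0 < δ := by rw [hδdef]; positivity
  have hδC : δ * C < 1 := by
    rw [hδdef, div_mul_eq_mul_div, one_mul, div_lt_one (by positivity)]
    nlinarith
  -- one step down
  have hstep : ∀ s' s : ℝ, s₁ ≤ s → s ≤ s' → s' ≤ s₀ → s' - s ≤ δ → Pos s' → Pos s := by
    intro s' s hs₁s hss' hs's₀ hdiff hPos'
    have hs₁s' : s₁ ≤ s' := le_trans hs₁s hss'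
    have hXnorm : ‖(s' - s) • R s'‖ < 1 := by
      calc ‖(s' - s) • R s'‖ ≤ ‖s' - s‖ * ‖R s'‖ := ContinuousLinearMap.opNorm_smul_le _ _
        _ = (s' - s) * ‖R s'‖ := by rw [Real.norm_eq_abs, abs_of_nonneg (by linarith)]
        _ ≤ δ * C := mul_le_mul hdiff (hC s' ⟨hs₁s', hs's₀⟩) (norm_nonneg _) hδ.le
        _ < 1 := hδC
    have hXpos : ∀ f, P f → P (((s' - s) • R s') f) := by
      intro f hf
      rw [ContinuousLinearMap.smul_apply]
      exact hPsmul _ _ (by linarith) (hPos' f hf)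
    have hfact : M s' * (1 - (s' - s) • R s') = M s := by
      rw [mul_sub, mul_one, mul_smul_comm, hMR s' hs₁s', hMs, hMs, sub_smul]
      abel
    have hJinv : (1 - (s' - s) • R s') * Ring.inverse (1 - (s' - s) • R s') = 1 :=
      Ring.mul_inverse_cancel _ (honeSub _ hXnorm)
    have hmul : M s * (Ring.inverse (1 - (s' - s) • R s') * R s') = 1 := by
      rw [← hfact, mul_assoc, ← mul_assoc (1 - (s' - s) • R s') _ (R s'), hJinv, one_mul,
        hMR s' hs₁s']
    have hReq : R s = Ring.inverse (1 - (s' - s) • R s') * R s' :=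
      aux_ring_inverse_eq (hMunit s hs₁s) hmul
    intro f hf
    rw [hReq, ContinuousLinearMap.mul_apply]
    exact neumann_pos P hP0 hPadd hPclosed _ hXnorm hXpos _ (hPos' f hf)
  -- marching down to s₁
  have hmarch : ∀ n : ℕ, Pos (max s₁ (s₀ - n * δ)) := by
    intro n
    induction n with
    | zero => simpa [max_eq_right hs₁s₀] using hPos0
    | succ n ih =>
      have hcast : ((n + 1 : ℕ) : ℝ) * δ = n * δ + δ := by push_cast; ring
      have h1 : s₁ ≤ max s₁ (s₀ - (n + 1 : ℕ) * δ) := le_max_left _ _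
      have h2 : max s₁ (s₀ - (n + 1 : ℕ) * δ) ≤ max s₁ (s₀ - n * δ) := by
        apply max_le_max le_rfl
        rw [hcast]; linarith
      have h3 : max s₁ (s₀ - n * δ) ≤ s₀ := by
        apply max_le hs₁s₀
        have : (0:ℝ) ≤ n * δ := by positivity
        linarith
      have h4 : max s₁ (s₀ - n * δ) - max s₁ (s₀ - (n + 1 : ℕ) * δ) ≤ δ := by
        have h5 : max s₁ (s₀ - n * δ) - δ ≤ max s₁ (s₀ - (n + 1 : ℕ) * δ) := by
          rw [← max_sub_sub_right]
          apply max_le_max (by linarith) (by rw [hcast]; linarith)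
        linarith
      exact hstep _ _ h1 h2 h3 h4 ih
  have hPos1 : Pos s₁ := by
    obtain ⟨n, hn⟩ := exists_nat_ge ((s₀ - s₁) / δ)
    have hn' : s₀ - n * δ ≤ s₁ := by
      rw [div_le_iff₀ hδ] at hn
      linarith
    have := hmarch n
    rwa [max_eq_left hn'] at this
  -- final divergence argument
  set q : E := R s₁ w with hqdef
  have hqP : P q := hPos1 w hw
  have hq : s₁ • q - T q = w := by
    have h1 := congrArg (fun B : E →L[ℝ] E => B w) (hMR s₁ le_rfl)
    simp only [ContinuousLinearMap.mul_apply, ContinuousLinearMap.one_apply] at h1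
    rw [← hqdef] at h1
    rw [← h1, hMs]
    simp [ContinuousLinearMap.sub_apply, ContinuousLinearMap.smul_apply]
  have hTq : T q = s₁ • q - w := by rw [← hq]; abel
  set ρ : ℝ := (1 + ε) * s₁⁻¹ with hρdef
  have hρ0 : 0 < ρ := by rw [hρdef]; positivity
  have hρ1 : 1 < ρ := by
    rw [hρdef, ← div_eq_mul_inv, lt_div_iff₀ hs₁0, one_mul]
    exact hs₁ε
  have hclaim : ∀ n : ℕ, P (q - (s₁⁻¹ * ρ ^ n) • w) := by
    intro n
    induction n with
    | zero =>
      have heq : q - (s₁⁻¹ * ρ ^ 0) • w = s₁⁻¹ • T q := by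
        rw [hTq, pow_zero, mul_one, smul_sub, smul_smul, inv_mul_cancel₀ hs₁0', one_smul]
      rw [heq]
      exact hPsmul _ _ (inv_nonneg.mpr hs₁0.le) (hTpos q hqP)
    | succ n ih =>
      have hγ0 : 0 ≤ s₁⁻¹ * ρ ^ n := by positivity
      have h1 : P (T q - (s₁⁻¹ * ρ ^ n) • T w) := by
        have h1' := hTpos _ ih
        rwa [map_sub, ContinuousLinearMap.map_smul] at h1'
      have h2 : P ((s₁⁻¹ * ρ ^ n) • T w - ((s₁⁻¹ * ρ ^ n) * (1 + ε)) • w) := by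
        have h2' := hPsmul (s₁⁻¹ * ρ ^ n) _ hγ0 hTw
        have heq : (s₁⁻¹ * ρ ^ n) • (T w - (1 + ε) • w)
            = (s₁⁻¹ * ρ ^ n) • T w - ((s₁⁻¹ * ρ ^ n) * (1 + ε)) • w := by
          rw [smul_sub, smul_smul]
        rwa [heq] at h2'
      have h3 : P (T q - ((s₁⁻¹ * ρ ^ n) * (1 + ε)) • w) := by
        have h3' := hPadd _ _ h1 h2
        rwa [sub_add_sub_cancel] at h3'
      have h4 : P (q - (s₁⁻¹ * (1 + (1 + ε) * (s₁⁻¹ * ρ ^ n))) • w) := by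
        have heq : q - (s₁⁻¹ * (1 + (1 + ε) * (s₁⁻¹ * ρ ^ n))) • w
            = s₁⁻¹ • (T q - ((s₁⁻¹ * ρ ^ n) * (1 + ε)) • w) := by
          rw [hTq, smul_sub, smul_sub, smul_smul, smul_smul, inv_mul_cancel₀ hs₁0', one_smul,
            sub_sub, ← add_smul]
          congr 1
          ring
        rw [heq]
        exact hPsmul _ _ (inv_nonneg.mpr hs₁0.le) h3
      have h5 : s₁⁻¹ * (1 + (1 + ε) * (s₁⁻¹ * ρ ^ n)) - s₁⁻¹ * ρ ^ (n + 1) = s₁⁻¹ := by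
        rw [pow_succ, hρdef]; ring
      have heq2 : q - (s₁⁻¹ * ρ ^ (n + 1)) • w
          = (q - (s₁⁻¹ * (1 + (1 + ε) * (s₁⁻¹ * ρ ^ n))) • w)
            + ((s₁⁻¹ * (1 + (1 + ε) * (s₁⁻¹ * ρ ^ n)) - s₁⁻¹ * ρ ^ (n + 1)) • w) := by
        rw [sub_smul]; abel
      rw [heq2]
      exact hPadd _ _ h4 (hPsmul _ _ (by rw [h5]; positivity) hw)
  have hwn : 0 < ‖w‖ := norm_pos_iff.mpr hw0
  obtain ⟨n, hn⟩ := pow_unbounded_of_one_lt ((‖q‖ * s₁) / ‖w‖) hρ1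
  have hle : ‖(s₁⁻¹ * ρ ^ n) • w‖ ≤ ‖q‖ :=
    hPnorm _ _ (hPsmul _ _ (by positivity) hw) (hclaim n)
  have hle' : (s₁⁻¹ * ρ ^ n) * ‖w‖ ≤ ‖q‖ := by
    calc (s₁⁻¹ * ρ ^ n) * ‖w‖ = ‖(s₁⁻¹ * ρ ^ n)‖ * ‖w‖ := by
          rw [Real.norm_eq_abs, abs_of_nonneg (by positivity)]
      _ = ‖(s₁⁻¹ * ρ ^ n) • w‖ := (norm_smul _ w).symm
      _ ≤ ‖q‖ := hle
  rw [div_lt_iff₀ hwn] at hn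
  have hcontra : ‖q‖ < s₁⁻¹ * ρ ^ n * ‖w‖ := by
    rw [← mul_lt_mul_iff_right₀ hs₁0]
    calc s₁ * ‖q‖ = ‖q‖ * s₁ := by ring
      _ < ρ ^ n * ‖w‖ := hn
      _ = s₁ * (s₁⁻¹ * ρ ^ n * ‖w‖) := by
          rw [← mul_assoc, ← mul_assoc, mul_inv_cancel₀ hs₁0', one_mul]
  linarith

end AbstractR0


set_option maxHeartbeats 2000000 in
/-- for `Ω = [0,∞)`, under Assumptions 1(1) and 2, if `R₀ = r(T) ≤ 1` then the
final size operator `Ψ` has no nonzero nonnegative fixed point in `Y`. -/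
theorem no_positive_fixed_point_of_R0_le_one
    (N : ℝ → ℝ) (hNmeas : Measurable N) (hNnn : ∀ x, 0 ≤ N x)
    (hNint : IntegrableOn N (Ici 0))
    (hNpos : ∀ᵐ x ∂(volume.restrict (Ici (0:ℝ))), 0 < N x)
    (A : ℝ → ℝ → ℝ → ℝ)
    (hAmeas : Measurable (fun p : ℝ × ℝ × ℝ => A p.1 p.2.1 p.2.2))
    (hAnn : ∀ τ x σ, 0 ≤ A τ x σ)
    -- Assumption 1(1)
    (α : ℝ) (hα : 1 < α)
    (a b c : ℝ → ℝ)
    (hameas : Measurable a) (hbmeas : Measurable b) (hcmeas : Measurable c)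
    (hann : ∀ x, 0 ≤ a x) (hbnn : ∀ τ, 0 ≤ b τ) (hcnn : ∀ σ, 0 ≤ c σ)
    (haN : IntegrableOn (fun x => a x * N x) (Ici 0))
    (hbint : IntegrableOn b (Ici 0))
    (hcN : IntegrableOn (fun x => c x * N x) (Ici 0))
    (hc2N : IntegrableOn (fun x => c x ^ 2 * N x) (Ici 0))
    (hAbound : ∀ τ ∈ Ici (0:ℝ), ∀ x ∈ Ici (0:ℝ), ∀ σ ∈ Ici (0:ℝ),
      a x * b τ * c σ ≤ A τ x σ ∧ A τ x σ ≤ α * (a x * b τ * c σ))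
    -- Assumption 2
    (haNpos : ∀ f : ℝ → ℝ, Measurable f → (∀ x, 0 ≤ f x) → (∃ M, ∀ x, f x ≤ M) →
      ¬ f =ᵐ[volume.restrict (Ici (0:ℝ))] 0 →
      0 < ∫ x in Ici (0:ℝ), f x * (a x * N x))
    (hcbdd : ∃ M, ∀ x, c x ≤ M)
    (hcpos : ∀ φ : ℝ → ℝ, IntegrableOn φ (Ici 0) →
      (∀ᵐ x ∂(volume.restrict (Ici (0:ℝ))), 0 ≤ φ x) →
      ¬ φ =ᵐ[volume.restrict (Ici (0:ℝ))] 0 →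
      0 < ∫ x in Ici (0:ℝ), c x * φ x)
    (hΘshift : TendstoUniformlyOn
      (fun (h : ℝ) (σ : ℝ) => ∫ x in Ici (0:ℝ),
        |indicator (Ici (0:ℝ)) (fun y => N y * ∫ τ in Ici (0:ℝ), A τ y σ) (x + h)
          - N x * ∫ τ in Ici (0:ℝ), A τ x σ|)
      (fun _ => 0) (nhds (0:ℝ)) (Ici 0))
    -- the next generation operator and R₀ ≤ 1
    (T : Lp ℝ 1 (volume.restrict (Ici (0:ℝ))) →L[ℝ] Lp ℝ 1 (volume.restrict (Ici (0:ℝ))))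
    (hT : ∀ φ : Lp ℝ 1 (volume.restrict (Ici (0:ℝ))),
      ⇑(T φ) =ᵐ[volume.restrict (Ici (0:ℝ))]
        fun x => N x * ∫ σ in Ici (0:ℝ), (∫ τ in Ici (0:ℝ), A τ x σ) * φ σ)
    (hR0 : spectralRadius ℝ T ≤ 1) :
    ¬ ∃ ψ : ℝ → ℝ,
      IntegrableOn (fun x => ψ x * N x) (Ici 0) ∧
      (∀ᵐ x ∂(volume.restrict (Ici (0:ℝ))), 0 ≤ ψ x) ∧
      ¬ ψ =ᵐ[volume.restrict (Ici (0:ℝ))] 0 ∧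
      (∀ᵐ x ∂(volume.restrict (Ici (0:ℝ))),
        ψ x = ∫ σ in Ici (0:ℝ),
          (∫ τ in Ici (0:ℝ), A τ x σ) * N σ * (1 - Real.exp (-ψ σ))) := by
  rintro ⟨ψ, hψint, hψnn, hψne, hψfix⟩
  haveI : Fact ((1:ℝ≥0∞) ≤ 1) := ⟨le_rfl⟩
  have hα0 : (0:ℝ) < α := lt_trans one_pos hα
  have hae_mem : ∀ᵐ x ∂(volume.restrict (Ici (0:ℝ))), x ∈ Ici (0:ℝ) := ae_restrict_mem measurableSet_Ici
  -- measurability of ψ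
  have hψmeas : AEMeasurable ψ (volume.restrict (Ici (0:ℝ))) := by
    have h1 : AEMeasurable (fun x => ψ x * N x) (volume.restrict (Ici (0:ℝ))) := hψint.aemeasurable
    have h2 : (fun x => (ψ x * N x) * (N x)⁻¹) =ᵐ[(volume.restrict (Ici (0:ℝ)))] ψ := by
      filter_upwards [hNpos] with x hx
      field_simp
    exact (h1.mul (hNmeas.aemeasurable.inv)).congr h2
  -- the kernel Θ
  set Θ : ℝ → ℝ → ℝ := fun x σ => ∫ τ in Ici (0:ℝ), A τ x σ with hΘdef
  have hΘnn : ∀ x σ, 0 ≤ Θ x σ := fun x σ => integral_nonneg fun τ => hAnn τ x σ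
  have hΘmeas : ∀ x, Measurable fun σ => Θ x σ := by
    intro x
    have hF : StronglyMeasurable (fun p : ℝ × ℝ => A p.2 x p.1) := by
      apply Measurable.stronglyMeasurable
      exact hAmeas.comp (measurable_snd.prodMk (measurable_const.prodMk measurable_fst))
    exact (hF.integral_prod_right').measurable
  have hAτmeas : ∀ x σ, Measurable fun τ => A τ x σ := by
    intro x σ
    exact hAmeas.comp ((measurable_id.prodMk measurable_const : Measurable fun τ : ℝ => (τ, (x, σ))))
  set L : ℝ := ∫ τ in Ici (0:ℝ), b τ with hLdef
  have hLnn : 0 ≤ L := setIntegral_nonneg measurableSet_Ici fun τ _ => hbnn τ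
  have hAint : ∀ x ∈ Ici (0:ℝ), ∀ σ ∈ Ici (0:ℝ), Integrable (fun τ => A τ x σ) (volume.restrict (Ici (0:ℝ))) := by
    intro x hx σ hσ
    apply Integrable.mono' (g := fun τ => (α * (a x * c σ)) * b τ)
    · exact hbint.const_mul _
    · exact (hAτmeas x σ).aestronglyMeasurable
    · filter_upwards [hae_mem] with τ hτ
      rw [Real.norm_eq_abs, abs_of_nonneg (hAnn τ x σ)]
      calc A τ x σ ≤ α * (a x * b τ * c σ) := (hAbound τ hτ x hx σ hσ).2
        _ = (α * (a x * c σ)) * b τ := by ring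
  have hΘub : ∀ x ∈ Ici (0:ℝ), ∀ σ ∈ Ici (0:ℝ), Θ x σ ≤ α * L * (a x * c σ) := by
    intro x hx σ hσ
    have h1 : Θ x σ ≤ ∫ τ in Ici (0:ℝ), (α * (a x * c σ)) * b τ := by
      apply integral_mono_ae (hAint x hx σ hσ) (hbint.const_mul _)
      filter_upwards [hae_mem] with τ hτ
      calc A τ x σ ≤ α * (a x * b τ * c σ) := (hAbound τ hτ x hx σ hσ).2
        _ = (α * (a x * c σ)) * b τ := by ring
    calc Θ x σ ≤ ∫ τ in Ici (0:ℝ), (α * (a x * c σ)) * b τ := h1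
      _ = (α * (a x * c σ)) * L := by rw [integral_const_mul]
      _ = α * L * (a x * c σ) := by ring
  have hΘlb : ∀ x ∈ Ici (0:ℝ), ∀ σ ∈ Ici (0:ℝ), L * (a x * c σ) ≤ Θ x σ := by
    intro x hx σ hσ
    have h1 : (∫ τ in Ici (0:ℝ), (a x * c σ) * b τ) ≤ Θ x σ := by
      apply integral_mono_ae (hbint.const_mul _) (hAint x hx σ hσ)
      filter_upwards [hae_mem] with τ hτ
      calc (a x * c σ) * b τ = a x * b τ * c σ := by ring
        _ ≤ A τ x σ := (hAbound τ hτ x hx σ hσ).1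
    calc L * (a x * c σ) = (a x * c σ) * L := by ring
      _ = ∫ τ in Ici (0:ℝ), (a x * c σ) * b τ := by rw [integral_const_mul]
      _ ≤ Θ x σ := h1
  -- the function u = N (1 - e^{-ψ})
  set u : ℝ → ℝ := fun σ => N σ * (1 - Real.exp (-ψ σ)) with hudef
  have hu_meas : AEMeasurable u (volume.restrict (Ici (0:ℝ))) := by
    apply (hNmeas.aemeasurable.mul _)
    exact aemeasurable_const.sub (Real.measurable_exp.comp_aemeasurable hψmeas.neg)
  have hu_nn : 0 ≤ᵐ[(volume.restrict (Ici (0:ℝ)))] u := by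
    filter_upwards [hψnn] with x hx
    apply mul_nonneg (hNnn x)
    have : Real.exp (-ψ x) ≤ 1 := Real.exp_le_one_iff.mpr (by linarith)
    linarith
  have hu_leN : ∀ᵐ x ∂(volume.restrict (Ici (0:ℝ))), u x ≤ N x := by
    filter_upwards [hψnn] with x hx
    have h2 : 1 - Real.exp (-ψ x) ≤ 1 := by
      have := Real.exp_pos (-ψ x); linarith
    calc u x = N x * (1 - Real.exp (-ψ x)) := rfl
      _ ≤ N x * 1 := by
          apply mul_le_mul_of_nonneg_left h2 (hNnn x)
      _ = N x := mul_one _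
  have hu_int : Integrable u (volume.restrict (Ici (0:ℝ))) := by
    apply Integrable.mono' hNint hu_meas.aestronglyMeasurable
    filter_upwards [hu_nn, hu_leN] with x h1 h2
    rw [Real.norm_eq_abs, abs_of_nonneg h1]; exact h2
  have hu_ne : ¬ u =ᵐ[(volume.restrict (Ici (0:ℝ)))] 0 := by
    intro h
    apply hψne
    filter_upwards [h, hNpos, hψnn] with x h1 h2 h3
    have h4 : N x * (1 - Real.exp (-ψ x)) = 0 := h1
    have h5 : 1 - Real.exp (-ψ x) = 0 := by
      rcases mul_eq_zero.mp h4 with h | h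
      · exact absurd h (ne_of_gt h2)
      · exact h
    have h6 : Real.exp (-ψ x) = 1 := by linarith
    have h7 : -ψ x = 0 := by simpa using h6
    show ψ x = 0
    linarith
  -- the fixed point identity in terms of u
  have hψfix' : ∀ᵐ x ∂(volume.restrict (Ici (0:ℝ))), ψ x = ∫ σ in Ici (0:ℝ), Θ x σ * u σ := by
    filter_upwards [hψfix] with x hx
    rw [hx]
    apply integral_congr_ae
    apply Eventually.of_forall
    intro σ
    show (∫ τ in Ici (0:ℝ), A τ x σ) * N σ * (1 - Real.exp (-ψ σ)) = Θ x σ * u σ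
    rw [hΘdef, hudef]; ring
  -- β = ∫ c u > 0
  set β : ℝ := ∫ σ in Ici (0:ℝ), c σ * u σ with hβdef
  have hβpos : 0 < β := hcpos u hu_int hu_nn hu_ne
  obtain ⟨Mc, hMc⟩ := hcbdd
  have hMc0 : 0 ≤ Mc := le_trans (hcnn 0) (hMc 0)
  have hcu_int : Integrable (fun σ => c σ * u σ) (volume.restrict (Ici (0:ℝ))) := by
    apply Integrable.mono' (hNint.const_mul Mc)
      ((hcmeas.aemeasurable.mul hu_meas).aestronglyMeasurable)
    filter_upwards [hu_nn, hu_leN] with x h1 h2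
    rw [Real.norm_eq_abs, Pi.mul_apply, abs_of_nonneg (mul_nonneg (hcnn x) h1)]
    exact mul_le_mul (hMc x) h2 h1 hMc0
  -- rule out L = 0
  have hLpos : 0 < L := by
    rcases eq_or_lt_of_le hLnn with h | h
    · exfalso
      apply hψne
      filter_upwards [hψfix', hae_mem] with x hx hmem
      show ψ x = (0 : ℝ → ℝ) x
      rw [Pi.zero_apply, hx]
      apply integral_eq_zero_of_ae
      filter_upwards [hae_mem] with σ hσ
      have hub := hΘub x hmem σ hσ
      rw [← h] at hub
      have h2 : Θ x σ = 0 := le_antisymm (by simpa using hub) (hΘnn x σ)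
      show Θ x σ * u σ = (0 : ℝ → ℝ) σ
      rw [h2, zero_mul, Pi.zero_apply]
    · exact h
  -- integrability of σ ↦ Θ x σ * u σ etc.
  have hΘf_int : ∀ (f : ℝ → ℝ), AEMeasurable f (volume.restrict (Ici (0:ℝ))) → (0 ≤ᵐ[(volume.restrict (Ici (0:ℝ)))] f) →
      Integrable (fun σ => c σ * f σ) (volume.restrict (Ici (0:ℝ))) → (∀ᵐ σ ∂(volume.restrict (Ici (0:ℝ))), f σ ≤ N σ * (ψ σ + 1)) →
      ∀ x ∈ Ici (0:ℝ), Integrable (fun σ => Θ x σ * f σ) (volume.restrict (Ici (0:ℝ))) := by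
    intro f hfmeas hfnn hcf_int hfle x hx
    apply Integrable.mono' (hcf_int.const_mul (α * L * a x))
      (((hΘmeas x).aemeasurable.mul hfmeas).aestronglyMeasurable)
    filter_upwards [hae_mem, hfnn] with σ hσ h1
    rw [Real.norm_eq_abs, Pi.mul_apply, abs_of_nonneg (mul_nonneg (hΘnn x σ) h1)]
    calc Θ x σ * f σ ≤ (α * L * (a x * c σ)) * f σ :=
          mul_le_mul_of_nonneg_right (hΘub x hx σ hσ) h1
      _ = (α * L * a x) * (c σ * f σ) := by ring
  have hΘu_int : ∀ x ∈ Ici (0:ℝ), Integrable (fun σ => Θ x σ * u σ) (volume.restrict (Ici (0:ℝ))) := by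
    apply hΘf_int u hu_meas hu_nn hcu_int
    filter_upwards [hu_leN, hψnn] with σ h1 h2
    calc u σ ≤ N σ := h1
      _ ≤ N σ * (ψ σ + 1) := by nlinarith [hNnn σ, mul_nonneg (hNnn σ) h2]
  -- upper bound for ψ
  have hub : ∀ᵐ x ∂(volume.restrict (Ici (0:ℝ))), ψ x ≤ (α * L * β) * a x := by
    filter_upwards [hψfix', hae_mem] with x hfix hx
    rw [hfix]
    have h1 : (∫ σ in Ici (0:ℝ), Θ x σ * u σ)
        ≤ ∫ σ in Ici (0:ℝ), (α * L * a x) * (c σ * u σ) := by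
      apply integral_mono_ae (hΘu_int x hx) (hcu_int.const_mul _)
      filter_upwards [hae_mem, hu_nn] with σ hσ h2
      calc Θ x σ * u σ ≤ (α * L * (a x * c σ)) * u σ :=
            mul_le_mul_of_nonneg_right (hΘub x hx σ hσ) h2
        _ = (α * L * a x) * (c σ * u σ) := by ring
    calc (∫ σ in Ici (0:ℝ), Θ x σ * u σ)
        ≤ ∫ σ in Ici (0:ℝ), (α * L * a x) * (c σ * u σ) := h1
      _ = (α * L * a x) * β := by rw [integral_const_mul]
      _ = (α * L * β) * a x := by ring
  -- the function d = Nψ - u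
  set d : ℝ → ℝ := fun x => N x * ψ x - u x with hddef
  have hd_int : Integrable d (volume.restrict (Ici (0:ℝ))) := by
    apply Integrable.sub _ hu_int
    apply (Integrable.congr hψint)
    apply Eventually.of_forall
    intro x
    show ψ x * N x = N x * ψ x
    ring
  have hd_meas : AEMeasurable d (volume.restrict (Ici (0:ℝ))) := hd_int.aemeasurable
  have hd_nn : 0 ≤ᵐ[(volume.restrict (Ici (0:ℝ)))] d := by
    filter_upwards [hψnn] with x hx
    have h1 := Real.add_one_le_exp (-ψ x)
    show 0 ≤ N x * ψ x - N x * (1 - Real.exp (-ψ x))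
    nlinarith [hNnn x]
  have hd_ne : ¬ d =ᵐ[(volume.restrict (Ici (0:ℝ)))] 0 := by
    intro h
    apply hψne
    filter_upwards [h, hNpos, hψnn] with x h1 h2 h3
    have h4 : N x * ψ x - N x * (1 - Real.exp (-ψ x)) = 0 := h1
    by_contra h5
    have h6 : ψ x ≠ 0 := h5
    have h7 := Real.add_one_lt_exp (x := -ψ x) (by simpa using h6)
    nlinarith
  set δ : ℝ := ∫ x in Ici (0:ℝ), c x * d x with hδdef
  have hδpos : 0 < δ := hcpos d hd_int hd_nn hd_ne
  have hcd_int : Integrable (fun σ => c σ * d σ) (volume.restrict (Ici (0:ℝ))) := by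
    apply Integrable.mono' (hd_int.const_mul Mc) ((hcmeas.aemeasurable.mul hd_meas).aestronglyMeasurable)
    filter_upwards [hd_nn] with x h1
    rw [Real.norm_eq_abs, Pi.mul_apply, abs_of_nonneg (mul_nonneg (hcnn x) h1)]
    exact mul_le_mul_of_nonneg_right (hMc x) h1
  have hΘd_int : ∀ x ∈ Ici (0:ℝ), Integrable (fun σ => Θ x σ * d σ) (volume.restrict (Ici (0:ℝ))) := by
    apply hΘf_int d hd_meas hd_nn hcd_int
    filter_upwards [hu_nn, hψnn] with σ h1 h2
    show N σ * ψ σ - u σ ≤ N σ * (ψ σ + 1)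
    have h3 : N σ * (ψ σ + 1) = N σ * ψ σ + N σ := by ring
    rw [h3]
    have h1' : (0:ℝ) ≤ u σ := h1
    linarith [hNnn σ, h1']
  -- lower bound for ∫ Θ d
  have hTd_ae : ∀ᵐ x ∂(volume.restrict (Ici (0:ℝ))), L * a x * δ ≤ ∫ σ in Ici (0:ℝ), Θ x σ * d σ := by
    filter_upwards [hae_mem] with x hx
    have h1 : (∫ σ in Ici (0:ℝ), (L * a x) * (c σ * d σ))
        ≤ ∫ σ in Ici (0:ℝ), Θ x σ * d σ := by
      apply integral_mono_ae (hcd_int.const_mul _) (hΘd_int x hx)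
      filter_upwards [hae_mem, hd_nn] with σ hσ h2
      calc (L * a x) * (c σ * d σ) = (L * (a x * c σ)) * d σ := by ring
        _ ≤ Θ x σ * d σ := mul_le_mul_of_nonneg_right (hΘlb x hx σ hσ) h2
    calc L * a x * δ = (L * a x) * δ := by ring
      _ = ∫ σ in Ici (0:ℝ), (L * a x) * (c σ * d σ) := by rw [integral_const_mul]
      _ ≤ ∫ σ in Ici (0:ℝ), Θ x σ * d σ := h1
  -- move to Lp
  set uL : Lp ℝ 1 (volume.restrict (Ici (0:ℝ))) := hu_int.toL1 u with huLdef
  have huL : ⇑uL =ᵐ[(volume.restrict (Ici (0:ℝ)))] u := hu_int.coeFn_toL1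
  set dL : Lp ℝ 1 (volume.restrict (Ici (0:ℝ))) := hd_int.toL1 d with hdLdef
  have hdL : ⇑dL =ᵐ[(volume.restrict (Ici (0:ℝ)))] d := hd_int.coeFn_toL1
  set wL : Lp ℝ 1 (volume.restrict (Ici (0:ℝ))) := T uL with hwLdef
  have hintcongr : ∀ (g : Lp ℝ 1 (volume.restrict (Ici (0:ℝ)))) (gf : ℝ → ℝ), (⇑g =ᵐ[(volume.restrict (Ici (0:ℝ)))] gf) → ∀ x,
      (∫ σ in Ici (0:ℝ), (∫ τ in Ici (0:ℝ), A τ x σ) * g σ)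
        = ∫ σ in Ici (0:ℝ), Θ x σ * gf σ := by
    intro g gf hg x
    apply integral_congr_ae
    filter_upwards [hg] with σ hσ
    rw [hσ, hΘdef]
  have hw_coe : ⇑wL =ᵐ[(volume.restrict (Ici (0:ℝ)))] fun x => N x * ψ x := by
    filter_upwards [hT uL, hψfix'] with x h1 h2
    rw [h1, hintcongr uL u huL x, ← h2]
  have hTd_coe : ⇑(T dL) =ᵐ[(volume.restrict (Ici (0:ℝ)))] fun x => N x * ∫ σ in Ici (0:ℝ), Θ x σ * d σ := by
    filter_upwards [hT dL] with x h1
    rw [h1, hintcongr dL d hdL x]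
  -- the cone
  set P : Lp ℝ 1 (volume.restrict (Ici (0:ℝ))) → Prop := fun f => (0: Lp ℝ 1 (volume.restrict (Ici (0:ℝ)))) ≤ f with hPdef
  have hPiff : ∀ f : Lp ℝ 1 (volume.restrict (Ici (0:ℝ))), P f ↔ 0 ≤ᵐ[(volume.restrict (Ici (0:ℝ)))] ⇑f := by
    intro f
    rw [hPdef]
    exact (Lp.coeFn_nonneg f).symm
  have hP0 : P (0: Lp ℝ 1 (volume.restrict (Ici (0:ℝ)))) := le_rfl
  have hPadd : ∀ f g : Lp ℝ 1 (volume.restrict (Ici (0:ℝ))), P f → P g → P (f + g) := by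
    intro f g hf hg
    rw [hPdef]
    exact add_nonneg hf hg
  have hPsmul : ∀ (r : ℝ) (f : Lp ℝ 1 (volume.restrict (Ici (0:ℝ)))), 0 ≤ r → P f → P (r • f) := by
    intro r f hr hf
    rw [hPiff] at hf ⊢
    filter_upwards [Lp.coeFn_smul r f, hf] with x h1 h2
    rw [h1]
    exact mul_nonneg hr h2
  have hPclosed : IsClosed {f : Lp ℝ 1 (volume.restrict (Ici (0:ℝ))) | P f} := by
    have : {f : Lp ℝ 1 (volume.restrict (Ici (0:ℝ))) | P f} = {f : Lp ℝ 1 (volume.restrict (Ici (0:ℝ))) | 0 ≤ f} := rfl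
    rw [this]
    exact isClosed_nonneg
  have hPnorm : ∀ f g : Lp ℝ 1 (volume.restrict (Ici (0:ℝ))), P f → P (g - f) → ‖f‖ ≤ ‖g‖ := by
    intro f g hf hfg
    rw [hPdef] at hf hfg
    have h1 : f ≤ g := sub_nonneg.mp hfg
    have h2 : (0: Lp ℝ 1 (volume.restrict (Ici (0:ℝ)))) ≤ g := le_trans hf h1
    apply HasSolidNorm.solid
    rw [abs_of_nonneg hf, abs_of_nonneg h2]
    exact h1
  -- positivity of T
  have hTpos : ∀ f : Lp ℝ 1 (volume.restrict (Ici (0:ℝ))), P f → P (T f) := by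
    intro f hf
    rw [hPiff] at hf ⊢
    filter_upwards [hT f] with x h1
    rw [h1]
    apply mul_nonneg (hNnn x)
    apply integral_nonneg_of_ae
    filter_upwards [hf] with σ h2
    exact mul_nonneg (hΘnn x σ) h2
  -- facts about wL
  have hwP : P wL := by
    rw [hPiff]
    filter_upwards [hw_coe, hψnn] with x h1 h2
    rw [h1]
    exact mul_nonneg (hNnn x) h2
  have hw_ne : wL ≠ 0 := by
    intro h
    apply hψne
    have h1 : ⇑wL =ᵐ[(volume.restrict (Ici (0:ℝ)))] 0 := by
      rw [h]
      exact Lp.coeFn_zero ℝ 1 (volume.restrict (Ici (0:ℝ)))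
    filter_upwards [hw_coe, h1, hNpos] with x h2 h3 h4
    have h5 : N x * ψ x = 0 := by rw [← h2]; exact h3
    rcases mul_eq_zero.mp h5 with h | h
    · exact absurd h (ne_of_gt h4)
    · exact h
  -- superpositivity: T wL ≥ (1+ε) wL
  set ε : ℝ := δ / (α * β) with hεdef
  have hεpos : 0 < ε := div_pos hδpos (mul_pos hα0 hβpos)
  have hwsum : uL + dL = wL := by
    apply Lp.ext
    filter_upwards [Lp.coeFn_add uL dL, huL, hdL, hw_coe] with x h1 h2 h3 h4
    rw [h1, h4]
    show uL x + dL x = N x * ψ x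
    rw [h2, h3, hddef]
    ring
  have hTw_eq : T wL = wL + T dL := by
    conv_lhs => rw [← hwsum]
    rw [map_add, ← hwLdef]
  have hTd_lb : ∀ᵐ x ∂(volume.restrict (Ici (0:ℝ))), ε * (N x * ψ x) ≤ (T dL) x := by
    filter_upwards [hTd_coe, hTd_ae, hae_mem, hub, hψnn] with x h1 h2 hx h3 h4
    rw [h1]
    have h5 : ε * (N x * ψ x) ≤ ε * (N x * ((α * L * β) * a x)) := by
      have h6 : 0 ≤ ε * N x := mul_nonneg hεpos.le (hNnn x)
      calc ε * (N x * ψ x) = (ε * N x) * ψ x := by ring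
        _ ≤ (ε * N x) * ((α * L * β) * a x) := mul_le_mul_of_nonneg_left h3 h6
        _ = ε * (N x * ((α * L * β) * a x)) := by ring
    have h7 : ε * (N x * ((α * L * β) * a x)) = N x * (L * a x * δ) := by
      rw [hεdef]
      field_simp
    calc ε * (N x * ψ x) ≤ N x * (L * a x * δ) := by rw [← h7]; exact h5
      _ ≤ N x * ∫ σ in Ici (0:ℝ), Θ x σ * d σ :=
          mul_le_mul_of_nonneg_left h2 (hNnn x)
  have hTw : P (T wL - (1 + ε) • wL) := by
    rw [hPiff]
    have hc1 : ⇑(T wL) =ᵐ[(volume.restrict (Ici (0:ℝ)))] ⇑wL + ⇑(T dL) := by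
      rw [hTw_eq]
      exact Lp.coeFn_add wL (T dL)
    filter_upwards [Lp.coeFn_sub (T wL) ((1 + ε) • wL), Lp.coeFn_smul ((1 + ε) : ℝ) wL,
      hc1, hw_coe, hTd_lb] with x h1 h2 h3 h4 h5
    rw [h1]
    show 0 ≤ (T wL) x - ((1 + ε) • wL) x
    rw [h2, h3]
    show 0 ≤ (wL x + (T dL) x) - (1 + ε) * wL x
    have h6 : wL x = N x * ψ x := h4
    rw [h6]
    linarith
  -- invertibility from the spectral radius bound
  have hinv : ∀ s : ℝ, 1 < s → IsUnit (algebraMap ℝ (Lp ℝ 1 (volume.restrict (Ici (0:ℝ))) →L[ℝ] Lp ℝ 1 (volume.restrict (Ici (0:ℝ)))) s - T) := by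
    intro s hs
    have h2 : (1:ℝ) < ‖s‖ := by
      rw [Real.norm_eq_abs, abs_of_pos (by linarith)]
      exact hs
    have h3 : spectralRadius ℝ T < ‖s‖₊ := by
      apply lt_of_le_of_lt hR0
      exact_mod_cast h2
    exact spectrum.mem_resolventSet_of_spectralRadius_lt h3
  exact abstract_no_super_fixed P hP0 hPadd hPsmul hPclosed hPnorm T hTpos wL hwP hw_ne
    ε hεpos hTw hinv
end
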